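/- arXiv:1612.00921 — 9 statements merged into one kernel-verified Lean document; each statement's English description precedes it below -/
import Mathlib

section
/- Let η ∈ 𝒟(ℝ) with a ≤ η'(x) ≤ b for all x (0 < a < b), and let ξ = η⁻¹ be its inverse (a bijection of ℝ). Then ∫_ℝ |ξ(x) − x|² dx ≤ b ∫_ℝ |η(y) − y|² dy; in particular the left-hand integral is finite. -/
open Filter MeasureTheory

/-- `η` belongs to the diffeomorphism group `𝒟(ℝ)` with derivative bounds `a ≤ η' ≤ b`. -/
def InD (η : ℝ → ℝ) (a b : ℝ) : Prop :=
  ContDiff ℝ 1 η ∧ (∀ x : ℝ, a ≤ deriv η x ∧ deriv η x ≤ b) ∧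
  Integrable (fun x : ℝ => (η x - x) ^ 2) ∧
  Integrable (fun x : ℝ => (deriv η x - 1) ^ 2) ∧
  Tendsto (deriv η) (cocompact ℝ) (nhds 1)

/-- For `η ∈ 𝒟(ℝ)` with inverse `ξ`, `∫ |ξ(x) − x|² dx ≤ b ∫ |η(y) − y|² dy`;
in particular the left-hand integral is finite. -/
theorem inverse_L2_bound (η ξ : ℝ → ℝ) (a b : ℝ) (ha : 0 < a) (hab : a < b)
    (hη : InD η a b)
    (hl : Function.LeftInverse ξ η) (hr : Function.RightInverse ξ η) :
    Integrable (fun x : ℝ => (ξ x - x) ^ 2) ∧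
    ∫ x : ℝ, (ξ x - x) ^ 2 ≤ b * ∫ y : ℝ, (η y - y) ^ 2 := by
  obtain ⟨hC, hbd, hI, _, _⟩ := hη
  have hd : Differentiable ℝ η := hC.differentiable one_ne_zero
  have hderiv : ∀ x ∈ Set.univ, HasDerivWithinAt η (deriv η x) Set.univ x :=
    fun x _ => (hd x).hasDerivAt.hasDerivWithinAt
  have hinj : Set.InjOn η Set.univ := fun x _ y _ h => hl.injective h
  have himg : η '' Set.univ = Set.univ := by
    rw [Set.image_univ, Set.range_eq_univ.mpr hr.surjective]
  have hpos : ∀ y, 0 < deriv η y := fun y => lt_of_lt_of_le ha (hbd y).1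
  -- pointwise identity for the transformed integrand
  have hkey : ∀ y : ℝ, |deriv η y| • ((ξ (η y) - η y) ^ 2) = deriv η y * (η y - y) ^ 2 := by
    intro y
    rw [hl y, abs_of_pos (hpos y), smul_eq_mul]
    ring
  -- continuity of the transformed integrand
  have hcont : Continuous fun y : ℝ => deriv η y * (η y - y) ^ 2 := by
    exact (hC.continuous_deriv le_rfl).mul (((hC.continuous.sub continuous_id).pow 2))
  -- bound by the integrable function b * (η y - y)^2
  have hbound : ∀ y : ℝ, deriv η y * (η y - y) ^ 2 ≤ b * (η y - y) ^ 2 := fun y =>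
    mul_le_mul_of_nonneg_right (hbd y).2 (sq_nonneg _)
  have hIb : Integrable (fun y : ℝ => b * (η y - y) ^ 2) := hI.const_mul b
  have hInt2 : Integrable (fun y : ℝ => deriv η y * (η y - y) ^ 2) := by
    refine hIb.mono hcont.aestronglyMeasurable (Filter.Eventually.of_forall fun y => ?_)
    rw [Real.norm_eq_abs, Real.norm_eq_abs,
      abs_of_nonneg (mul_nonneg (hpos y).le (sq_nonneg _)),
      abs_of_nonneg (mul_nonneg (le_trans ha.le (le_of_lt hab)) (sq_nonneg _))]
    exact hbound y
  have hInt2' : Integrable (fun y : ℝ => |deriv η y| • ((ξ (η y) - η y) ^ 2)) := by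
    simpa only [hkey] using hInt2
  have hIntLHS : Integrable (fun x : ℝ => (ξ x - x) ^ 2) := by
    have := (integrableOn_image_iff_integrableOn_abs_deriv_smul MeasurableSet.univ hderiv hinj
      (fun x => (ξ x - x) ^ 2)).mpr
    rw [himg] at this
    simpa [integrableOn_univ] using this (by simpa [integrableOn_univ] using hInt2')
  refine ⟨hIntLHS, ?_⟩
  have hchg : ∫ x : ℝ, (ξ x - x) ^ 2 = ∫ y : ℝ, deriv η y * (η y - y) ^ 2 := by
    have := integral_image_eq_integral_abs_deriv_smul MeasurableSet.univ hderiv hinj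
      (fun x => (ξ x - x) ^ 2)
    rw [himg] at this
    simp only [Measure.restrict_univ] at this
    rw [this]
    exact integral_congr_ae (Filter.Eventually.of_forall hkey)
  rw [hchg, ← integral_const_mul]
  exact integral_mono hInt2 hIb hbound
end

section
/- Let η ∈ 𝒟(ℝ) with a ≤ η'(x) ≤ b for all x (0 < a < b), and let ξ = η⁻¹ be its inverse. Then ∫_ℝ |ξ'(x) − 1|² dx ≤ (1/a) ∫_ℝ |η'(y) − 1|² dy; in particular the left-hand integral is finite. -/
open Filter MeasureTheory

/-- For `η ∈ 𝒟(ℝ)` with inverse `ξ`, `∫ |ξ'(x) − 1|² dx ≤ (1/a) ∫ |η'(y) − 1|² dy`;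
in particular the left-hand integral is finite. -/
theorem inverse_deriv_L2_bound (η ξ : ℝ → ℝ) (a b : ℝ) (ha : 0 < a) (hab : a < b)
    (hη : InD η a b)
    (hl : Function.LeftInverse ξ η) (hr : Function.RightInverse ξ η) :
    Integrable (fun x : ℝ => (deriv ξ x - 1) ^ 2) ∧
    ∫ x : ℝ, (deriv ξ x - 1) ^ 2 ≤ (1 / a) * ∫ y : ℝ, (deriv η y - 1) ^ 2 := by
  obtain ⟨hsm, hbound, -, hint, -⟩ := hη
  have hd : Differentiable ℝ η := hsm.differentiable one_ne_zero
  have hpos : ∀ y, 0 < deriv η y := fun y => lt_of_lt_of_le ha (hbound y).1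
  have hinj : Function.Injective η := hl.injective
  have hsurj : Function.Surjective η := hr.surjective
  have hmono : StrictMono η := strictMono_of_deriv_pos hpos
  -- ξ is continuous
  have hcontξ : Continuous ξ := by
    set hiso := StrictMono.orderIsoOfSurjective η hmono hsurj with hisodef
    have hxieq : ξ = hiso.symm := by
      funext x
      apply hinj
      rw [hr x]
      exact (StrictMono.orderIsoOfSurjective_self_symm_apply η hmono hsurj x).symm
    rw [hxieq]
    exact (OrderIso.toHomeomorph hiso.symm).continuous
  -- derivative of ξ
  have hderivξ : ∀ x : ℝ, HasDerivAt ξ (deriv η (ξ x))⁻¹ x := by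
    intro x
    exact HasDerivAt.of_local_left_inverse hcontξ.continuousAt
      (hd (ξ x)).hasDerivAt (ne_of_gt (hpos (ξ x)))
      (Eventually.of_forall hr)
  have hderivξ' : ∀ x : ℝ, deriv ξ x = (deriv η (ξ x))⁻¹ := fun x => (hderivξ x).deriv
  -- the change-of-variables identities
  have himg : η '' Set.univ = Set.univ := by
    rw [Set.image_univ]; exact hsurj.range_eq
  have hderivW : ∀ x ∈ (Set.univ : Set ℝ), HasDerivWithinAt η (deriv η x) Set.univ x :=
    fun x _ => (hd x).hasDerivAt.hasDerivWithinAt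
  set g : ℝ → ℝ := fun x => (deriv ξ x - 1) ^ 2 with hg
  have hcomp : ∀ y : ℝ, |deriv η y| • g (η y) = (deriv η y - 1) ^ 2 / deriv η y := by
    intro y
    have h1 : deriv ξ (η y) = (deriv η y)⁻¹ := by rw [hderivξ' (η y), hl y]
    have h2 : (0:ℝ) < deriv η y := hpos y
    rw [hg]
    simp only [h1, abs_of_pos h2, smul_eq_mul]
    field_simp
    ring
  have hle : ∀ y : ℝ, (deriv η y - 1) ^ 2 / deriv η y ≤ (1 / a) * (deriv η y - 1) ^ 2 := by
    intro y
    rw [div_le_iff₀ (hpos y), mul_comm (1/a), mul_assoc]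
    have : (1:ℝ) ≤ (1 / a) * deriv η y := by
      rw [one_div, ← div_eq_inv_mul, le_div_iff₀ ha, one_mul]
      exact (hbound y).1
    nlinarith [sq_nonneg (deriv η y - 1)]
  have hboundint : Integrable (fun y : ℝ => (1 / a) * (deriv η y - 1) ^ 2) :=
    hint.const_mul (1 / a)
  have hcontd : Continuous (deriv η) := hsm.continuous_deriv le_rfl
  have hmeas : AEStronglyMeasurable (fun y : ℝ => (deriv η y - 1) ^ 2 / deriv η y) volume := by
    apply Continuous.aestronglyMeasurable
    exact ((hcontd.sub continuous_const).pow 2).div hcontd (fun y => ne_of_gt (hpos y))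
  have hintcomp : Integrable (fun y : ℝ => (deriv η y - 1) ^ 2 / deriv η y) := by
    apply Integrable.mono' hboundint hmeas
    filter_upwards with y
    rw [Real.norm_eq_abs, abs_of_nonneg (div_nonneg (sq_nonneg _) (hpos y).le)]
    exact hle y
  have hintg : Integrable g := by
    have := (integrableOn_image_iff_integrableOn_abs_deriv_smul MeasurableSet.univ
      hderivW hinj.injOn g)
    rw [himg] at this
    rw [← integrableOn_univ, this]
    rw [integrableOn_univ]
    exact hintcomp.congr (by filter_upwards with y using (hcomp y).symm)
  constructor
  · exact hintg
  · have heq : ∫ x : ℝ, g x = ∫ y : ℝ, (deriv η y - 1) ^ 2 / deriv η y := by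
      have := integral_image_eq_integral_abs_deriv_smul MeasurableSet.univ hderivW
        hinj.injOn g
      rw [himg, MeasureTheory.setIntegral_univ, MeasureTheory.setIntegral_univ] at this
      rw [this]
      exact integral_congr_ae (Eventually.of_forall hcomp)
    rw [show (fun x : ℝ => (deriv ξ x - 1) ^ 2) = g from rfl] at *
    rw [heq, ← integral_const_mul]
    exact integral_mono hintcomp hboundint hle
end

section
/- The inversion map on 𝒟(ℝ) is continuous with respect to the distance D(η, ζ) = ‖η − ζ‖_{1,1}: for every η₁ ∈ 𝒟(ℝ) with inverse ξ₁ and every ε > 0, there exists δ > 0 such that for every η₂ ∈ 𝒟(ℝ) with inverse ξ₂, if ‖η₁ − η₂‖_{1,1} < δ then ‖ξ₁ − ξ₂‖_{1,1} < ε. -/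
open Filter MeasureTheory

section Helpers
open Set
open scoped ENNReal NNReal

private lemma sub_le_mul_of_deriv_le {η : ℝ → ℝ} {b : ℝ} (hd : Differentiable ℝ η)
    (h : ∀ x, deriv η x ≤ b) {x y : ℝ} (hxy : x ≤ y) : η y - η x ≤ b * (y - x) := by
  have hm : Monotone (fun t => b * t - η t) := by
    apply monotone_of_deriv_nonneg (by fun_prop)
    intro t
    have : HasDerivAt (fun t => b * t - η t) (b * 1 - deriv η t) t :=
      ((hasDerivAt_id t).const_mul b).sub (hd t).hasDerivAt
    rw [this.deriv]
    linarith [h t]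
  have := hm hxy
  simp only at this
  nlinarith

private lemma mul_le_sub_of_deriv_ge {η : ℝ → ℝ} {a : ℝ} (hd : Differentiable ℝ η)
    (h : ∀ x, a ≤ deriv η x) {x y : ℝ} (hxy : x ≤ y) : a * (y - x) ≤ η y - η x := by
  have hm : Monotone (fun t => η t - a * t) := by
    apply monotone_of_deriv_nonneg (by fun_prop)
    intro t
    have : HasDerivAt (fun t => η t - a * t) (deriv η t - a * 1) t :=
      (hd t).hasDerivAt.sub ((hasDerivAt_id t).const_mul a)
    rw [this.deriv]
    linarith [h t]
  have := hm hxy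
  simp only at this
  nlinarith

private lemma abs_sub_bounds {η : ℝ → ℝ} {a b : ℝ} (hd : Differentiable ℝ η)
    (hge : ∀ x, a ≤ deriv η x) (hle : ∀ x, deriv η x ≤ b) (ha : 0 ≤ a) (x y : ℝ) :
    a * |x - y| ≤ |η x - η y| ∧ |η x - η y| ≤ b * |x - y| := by
  rcases le_total x y with hxy | hxy
  · have h1 := mul_le_sub_of_deriv_ge hd hge hxy
    have h2 := sub_le_mul_of_deriv_le hd hle hxy
    have h0 : 0 ≤ η y - η x := by nlinarith [abs_nonneg (x - y)]
    rw [abs_sub_comm x y, abs_sub_comm (η x) (η y), abs_of_nonneg (by linarith : (0:ℝ) ≤ y - x),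
      abs_of_nonneg h0]
    constructor <;> linarith
  · have h1 := mul_le_sub_of_deriv_ge hd hge hxy
    have h2 := sub_le_mul_of_deriv_le hd hle hxy
    have h0 : 0 ≤ η x - η y := by nlinarith [abs_nonneg (y - x)]
    rw [abs_of_nonneg (by linarith : (0:ℝ) ≤ x - y), abs_of_nonneg h0]
    constructor <;> linarith

private lemma pointwise_small {u : ℝ → ℝ} {δ : ℝ} (hδ : 0 < δ) (hd : Differentiable ℝ u)
    (hint : Integrable (fun x => u x ^ 2))
    (hI : ∫ x, u x ^ 2 < δ ^ 2) (hd' : ∀ x, |deriv u x| ≤ δ) (y : ℝ) : |u y| ≤ 2 * δ := by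
  by_contra hcon
  push_neg at hcon
  have key : ∀ x ∈ Icc y (y + 1), δ ^ 2 ≤ u x ^ 2 := by
    intro x hx
    obtain ⟨hx1, hx2⟩ := hx
    have h1 : u x - u y ≤ δ * (x - y) :=
      sub_le_mul_of_deriv_le hd (fun t => (abs_le.1 (hd' t)).2) hx1
    have h2 : -δ * (x - y) ≤ u x - u y :=
      mul_le_sub_of_deriv_ge hd (fun t => (abs_le.1 (hd' t)).1) hx1
    have hxy : |u x - u y| ≤ δ := by
      rw [abs_le]; constructor <;> nlinarith
    have : δ ≤ |u x| := by
      have := abs_sub_abs_le_abs_sub (u y) (u x)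
      rw [abs_sub_comm] at hxy
      linarith
    calc δ ^ 2 = δ * δ := sq δ
    _ ≤ |u x| * |u x| := by apply mul_le_mul this this hδ.le (abs_nonneg _)
    _ = u x ^ 2 := by rw [← abs_mul, ← sq, abs_sq]
  have h3 : δ ^ 2 * (volume (Icc y (y + 1))).toReal ≤ ∫ x in Icc y (y+1), u x ^ 2 :=
    by have := setIntegral_ge_of_const_le_real measurableSet_Icc (by simp) key hint.integrableOn; exact this
  have h4 : ∫ x in Icc y (y+1), u x ^ 2 ≤ ∫ x, u x ^ 2 :=
    setIntegral_le_integral hint (Filter.Eventually.of_forall fun x => sq_nonneg _)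
  rw [Real.volume_Icc] at h3
  simp at h3
  linarith

private lemma sq_integral_le_of_eLpNorm_le {h : ℝ → ℝ} (hm : MemLp h 2 (volume : Measure ℝ))
    {s : ℝ} (hs : 0 ≤ s) (hle : eLpNorm h 2 volume ≤ ENNReal.ofReal s) :
    ∫ x, h x ^ 2 ≤ s ^ 2 := by
  rw [hm.eLpNorm_eq_integral_rpow_norm two_ne_zero ENNReal.ofNat_ne_top] at hle
  rw [ENNReal.ofReal_le_ofReal_iff hs] at hle
  have h2 : (2 : ℝ≥0∞).toReal = 2 := by simp
  rw [h2] at hle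
  have hXnn : 0 ≤ ∫ a, ‖h a‖ ^ (2:ℝ) := by
    apply integral_nonneg; intro x; positivity
  have heq : (∫ a, ‖h a‖ ^ (2:ℝ)) = ∫ x, h x ^ 2 := by
    congr 1; funext x
    rw [Real.rpow_two, Real.norm_eq_abs, sq_abs]
  have : (∫ a, ‖h a‖ ^ (2:ℝ)) ≤ s ^ 2 := by
    have h5 := Real.rpow_le_rpow (by positivity) hle (by norm_num : (0:ℝ) ≤ 2)
    have e1 : ((∫ a, ‖h a‖ ^ (2:ℝ)) ^ (2:ℝ)⁻¹) ^ (2:ℝ) = ∫ a, ‖h a‖ ^ (2:ℝ) := by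
      rw [← Real.rpow_mul hXnn]; norm_num
    have e2 : s ^ (2:ℝ) = s ^ (2:ℕ) := by
      rw [← Real.rpow_natCast s 2]; norm_num
    rw [e1, e2] at h5
    exact_mod_cast h5
  linarith [heq ▸ this]

private lemma exists_compact_approx (w : ℝ → ℝ) (hm : MemLp w 2 (volume : Measure ℝ)) {t : ℝ}
    (ht : 0 < t) :
    ∃ g : ℝ → ℝ, HasCompactSupport g ∧ Continuous g ∧ (∫ x, (w x - g x) ^ 2) ≤ t ∧
      Integrable (fun x => (w x - g x) ^ 2) := by
  obtain ⟨g, hgsupp, hgle, hgcont, hgmem⟩ :=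
    hm.exists_hasCompactSupport_eLpNorm_sub_le (p := 2) ENNReal.ofNat_ne_top
      (ε := ENNReal.ofReal (Real.sqrt t)) (by simp [Real.sqrt_pos.2 ht, ne_of_gt])
  refine ⟨g, hgsupp, hgcont, ?_, ?_⟩
  · have hsub : MemLp (w - g) 2 (volume : Measure ℝ) := hm.sub hgmem
    have := sq_integral_le_of_eLpNorm_le hsub (Real.sqrt_nonneg t) hgle
    calc ∫ x, (w x - g x) ^ 2 = ∫ x, (w - g) x ^ 2 := by rfl
    _ ≤ Real.sqrt t ^ 2 := this
    _ = t := Real.sq_sqrt ht.le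
  · have hsub : MemLp (w - g) 2 (volume : Measure ℝ) := hm.sub hgmem
    have := (memLp_two_iff_integrable_sq hsub.aestronglyMeasurable).1 hsub
    exact this

private lemma integral_comp_diffeo {η ξ : ℝ → ℝ} (hd : Differentiable ℝ η)
    (hl : Function.LeftInverse ξ η) (hr : Function.RightInverse ξ η) (g : ℝ → ℝ) :
    ∫ x, g x = ∫ y, |deriv η y| * g (η y) := by
  have h1 := integral_image_eq_integral_abs_deriv_smul (MeasurableSet.univ)
    (fun x _ => (hd x).hasDerivAt.hasDerivWithinAt) (hl.injective.injOn) g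
  rw [Set.image_univ, hr.surjective.range_eq] at h1
  simpa [smul_eq_mul] using h1

private lemma integrable_comp_diffeo {η ξ : ℝ → ℝ} (hd : Differentiable ℝ η)
    (hl : Function.LeftInverse ξ η) (hr : Function.RightInverse ξ η) {g : ℝ → ℝ}
    (hg : Integrable (fun y => |deriv η y| * g (η y))) : Integrable g := by
  have h1 := integrableOn_image_iff_integrableOn_abs_deriv_smul (MeasurableSet.univ)
    (fun x (_ : x ∈ Set.univ) => (hd x).hasDerivAt.hasDerivWithinAt) (hl.injective.injOn) g
  rw [Set.image_univ, hr.surjective.range_eq] at h1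
  rw [← integrableOn_univ]
  rw [h1]
  simpa [IntegrableOn, smul_eq_mul] using hg.integrableOn (s := Set.univ)

private lemma integrable_sq_diff {p q : ℝ → ℝ}
    (hp : Integrable (fun x => p x ^ 2) (volume : Measure ℝ))
    (hq : Integrable (fun x => q x ^ 2) (volume : Measure ℝ))
    (hm : AEStronglyMeasurable (fun x => (p x - q x) ^ 2) (volume : Measure ℝ)) :
    Integrable (fun x => (p x - q x) ^ 2) := by
  apply Integrable.mono' ((hp.const_mul 2).add (hq.const_mul 2)) hm
  apply Filter.Eventually.of_forall
  intro x
  rw [Real.norm_eq_abs, abs_of_nonneg (sq_nonneg _)]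
  simp only [Pi.add_apply]
  nlinarith [sq_nonneg (p x + q x)]

private lemma continuous_of_inv_bound {ξ : ℝ → ℝ} {a : ℝ} (ha : 0 < a)
    (h : ∀ x y, a * |ξ x - ξ y| ≤ |x - y|) : Continuous ξ := by
  apply (LipschitzWith.of_dist_le_mul (K := (a⁻¹).toNNReal) ?_).continuous
  intro x y
  rw [Real.dist_eq, Real.dist_eq, Real.coe_toNNReal _ (by positivity)]
  rw [inv_mul_eq_div, le_div_iff₀ ha, mul_comm]
  exact h x y

private lemma hasDerivAt_inverse {η ξ : ℝ → ℝ} (hd : Differentiable ℝ η) (hcont : Continuous ξ)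
    (hr : Function.RightInverse ξ η) {x : ℝ} (hne : deriv η (ξ x) ≠ 0) :
    HasDerivAt ξ (deriv η (ξ x))⁻¹ x :=
  HasDerivAt.of_local_left_inverse hcont.continuousAt (hd (ξ x)).hasDerivAt hne
    (Filter.Eventually.of_forall hr)

/-- Composition with the inverse diffeomorphism: integrability and integral bound. -/
private lemma comp_sq_integral_bound {η ξ v : ℝ → ℝ} {B : ℝ}
    (hd : Differentiable ℝ η) (hdc : Continuous (deriv η))
    (hl : Function.LeftInverse ξ η) (hr : Function.RightInverse ξ η)
    (hv : Continuous v) (hB : ∀ y, |deriv η y| ≤ B) (hB0 : 0 ≤ B)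
    (hint : Integrable (fun y => v y ^ 2)) :
    Integrable (fun x => v (ξ x) ^ 2) ∧ (∫ x, v (ξ x) ^ 2) ≤ B * ∫ y, v y ^ 2 := by
  have hre : (fun y => |deriv η y| * (fun x => v (ξ x) ^ 2) (η y)) =
      fun y => |deriv η y| * v y ^ 2 := by
    funext y
    simp only
    rw [hl y]
  have hdom : Integrable (fun y => |deriv η y| * v y ^ 2) := by
    apply Integrable.mono' (hint.const_mul B) ((hdc.abs.mul (hv.pow 2)).aestronglyMeasurable)
    apply Filter.Eventually.of_forall
    intro y
    rw [Real.norm_eq_abs, abs_of_nonneg (mul_nonneg (abs_nonneg _) (sq_nonneg _))]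
    exact mul_le_mul_of_nonneg_right (hB y) (sq_nonneg _)
  constructor
  · exact integrable_comp_diffeo hd hl hr (hre ▸ hdom)
  · rw [integral_comp_diffeo hd hl hr (fun x => v (ξ x) ^ 2), hre]
    calc ∫ y, |deriv η y| * v y ^ 2 ≤ ∫ y, B * v y ^ 2 :=
          integral_mono_of_nonneg (Filter.Eventually.of_forall fun y => by positivity)
            (hint.const_mul B)
            (Filter.Eventually.of_forall fun y =>
              mul_le_mul_of_nonneg_right (hB y) (sq_nonneg _))
    _ = B * ∫ y, v y ^ 2 := integral_const_mul _ _

private lemma sq_add_add_le (x y z : ℝ) : (x + y - z) ^ 2 ≤ 3 * x ^ 2 + 3 * y ^ 2 + 3 * z ^ 2 := by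
  nlinarith [sq_nonneg (x - y), sq_nonneg (y + z), sq_nonneg (x + z)]

private lemma sq_sub_le (x y : ℝ) : (x - y) ^ 2 ≤ 2 * x ^ 2 + 2 * y ^ 2 := by
  nlinarith [sq_nonneg (x + y)]

private lemma inv_sub_inv_sq_le {A B C a : ℝ} (ha : 0 < a) (hA : a ≤ A) (hB : a / 2 ≤ B) :
    (A⁻¹ - B⁻¹) ^ 2 ≤ 8 / a ^ 4 * ((B - C) ^ 2 + (C - A) ^ 2) := by
  have hApos : 0 < A := lt_of_lt_of_le ha hA
  have hBpos : 0 < B := by linarith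
  have heq : A⁻¹ - B⁻¹ = (B - A) / (A * B) := by field_simp
  rw [heq, div_pow, div_le_iff₀ (by positivity)]
  have h1 : (B - A) ^ 2 ≤ 2 * (B - C) ^ 2 + 2 * (C - A) ^ 2 := by
    nlinarith [sq_nonneg ((B - C) - (C - A))]
  have h5 : a * (a / 2) ≤ A * B := mul_le_mul hA hB (by positivity) (by positivity)
  have h6 : (a * (a / 2)) ^ 2 ≤ (A * B) ^ 2 := by
    apply pow_le_pow_left₀ (by positivity) h5
  have h2 : a ^ 4 / 4 ≤ (A * B) ^ 2 := by nlinarith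
  have h3 : 8 / a ^ 4 * ((B - C) ^ 2 + (C - A) ^ 2) * (a ^ 4 / 4) ≤
      8 / a ^ 4 * ((B - C) ^ 2 + (C - A) ^ 2) * (A * B) ^ 2 :=
    mul_le_mul_of_nonneg_left h2 (by positivity)
  have h4 : 8 / a ^ 4 * ((B - C) ^ 2 + (C - A) ^ 2) * (a ^ 4 / 4) =
      2 * ((B - C) ^ 2 + (C - A) ^ 2) := by field_simp; ring
  linarith [sq_nonneg (B - C), sq_nonneg (C - A)]

end Helpers

/-- The norm `‖u‖_{1,1} = ‖u‖_{C¹} + ‖u‖_{H¹}`. -/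
noncomputable def norm11 (u : ℝ → ℝ) : ℝ :=
  (⨆ x : ℝ, |u x|) + (⨆ x : ℝ, |deriv u x|) +
    Real.sqrt ((∫ x : ℝ, (u x) ^ 2) + ∫ x : ℝ, (deriv u x) ^ 2)

set_option maxHeartbeats 4000000 in
/-- The inversion map `η ↦ η⁻¹` on `𝒟(ℝ)` is continuous for the distance
`D(η, ζ) = ‖η − ζ‖_{1,1}`. -/
theorem inversion_continuous (η₁ ξ₁ : ℝ → ℝ) (a₁ b₁ : ℝ) (ha₁ : 0 < a₁) (hab₁ : a₁ < b₁)
    (hη₁ : InD η₁ a₁ b₁)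
    (hl₁ : Function.LeftInverse ξ₁ η₁) (hr₁ : Function.RightInverse ξ₁ η₁)
    (ε : ℝ) (hε : 0 < ε) :
    ∃ δ : ℝ, 0 < δ ∧
      ∀ (η₂ ξ₂ : ℝ → ℝ) (a₂ b₂ : ℝ), 0 < a₂ → a₂ < b₂ → InD η₂ a₂ b₂ →
        Function.LeftInverse ξ₂ η₂ → Function.RightInverse ξ₂ η₂ →
        norm11 (fun x => η₁ x - η₂ x) < δ →
        norm11 (fun x => ξ₁ x - ξ₂ x) < ε := by
  obtain ⟨hC1, hD1, hIu1, hIw1, hT1⟩ := hη₁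
  have hb₁ : 0 < b₁ := lt_trans ha₁ hab₁
  have hd1 : Differentiable ℝ η₁ := hC1.differentiable one_ne_zero
  have hd1c : Continuous (deriv η₁) := hC1.continuous_deriv le_rfl
  have hUC1 : UniformContinuous (deriv η₁) :=
    hd1c.uniformContinuous_of_tendsto_cocompact hT1
  have hmono1 : Monotone η₁ :=
    monotone_of_deriv_nonneg hd1 (fun x => le_trans ha₁.le (hD1 x).1)
  -- the L² function w = η₁' - 1 and its compactly supported approximation
  set w : ℝ → ℝ := fun x => deriv η₁ x - 1 with hw
  have hwmem : MemLp w 2 (volume : Measure ℝ) :=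
    (memLp_two_iff_integrable_sq
      ((hd1c.sub continuous_const).aestronglyMeasurable)).2 hIw1
  set τ : ℝ := ε ^ 2 * a₁ ^ 4 / 256 with hτ
  have hτpos : 0 < τ := by positivity
  obtain ⟨g, hgsupp, hgcont, hgE, hgEint⟩ :=
    exists_compact_approx w hwmem (t := τ / (24 * (b₁ + 1))) (by positivity)
  -- support of g
  obtain ⟨r, hrsupp⟩ := hgsupp.isBounded.subset_closedBall 0
  set R : ℝ := max r 0 with hR
  have hR0 : 0 ≤ R := le_max_right r 0
  have hgzero : ∀ y : ℝ, y ∉ Set.Icc (-R) R → g y = 0 := by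
    intro y hy
    apply image_eq_zero_of_notMem_tsupport
    intro hmem
    apply hy
    have h1 := hrsupp hmem
    rw [Real.closedBall_eq_Icc] at h1
    refine ⟨le_trans ?_ h1.1, le_trans h1.2 ?_⟩
    · rw [zero_sub]
      exact neg_le_neg (le_max_left r 0)
    · rw [zero_add]
      exact le_max_left r 0
  set c : ℝ := η₁ (-(R + 1)) with hc
  set d : ℝ := η₁ (R + 1) with hd
  have hcd : c ≤ d := hmono1 (by linarith)
  set ℓ : ℝ := d - c with hℓ
  have hℓ0 : 0 ≤ ℓ := by simp [hℓ]; linarith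
  set t : ℝ := Real.sqrt (τ / (12 * (ℓ + 1))) with ht
  have htpos : 0 < t := Real.sqrt_pos.2 (by positivity)
  have ht2 : t ^ 2 = τ / (12 * (ℓ + 1)) := Real.sq_sqrt (by positivity)
  -- moduli of uniform continuity
  set m : ℝ := ε * a₁ ^ 2 / 16 with hm
  have hmpos : 0 < m := by positivity
  obtain ⟨ρ₁, hρ₁pos, hρ₁⟩ := Metric.uniformContinuous_iff.1 hUC1 m hmpos
  have hUCg : UniformContinuous g :=
    hgcont.uniformContinuous_of_tendsto_cocompact hgsupp.is_zero_at_infty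
  obtain ⟨ρ₂, hρ₂pos, hρ₂⟩ := Metric.uniformContinuous_iff.1 hUCg t htpos
  -- the threshold
  refine ⟨min (min (min (a₁ / 4) 1) (min m (ρ₁ * a₁ / 8)))
    (min (min (ρ₂ * a₁ / 8) (ε * a₁ / 16)) (min (ε ^ 2 * a₁ ^ 2 / (128 * b₁)) (τ / (4 * (b₁ + 1))))),
    by positivity, ?_⟩
  set δ := min (min (min (a₁ / 4) 1) (min m (ρ₁ * a₁ / 8)))
    (min (min (ρ₂ * a₁ / 8) (ε * a₁ / 16)) (min (ε ^ 2 * a₁ ^ 2 / (128 * b₁)) (τ / (4 * (b₁ + 1)))))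
    with hδdef
  have hδpos : 0 < δ := by rw [hδdef]; positivity
  have d1 : δ ≤ a₁ / 4 := le_trans (min_le_left _ _) (le_trans (min_le_left _ _) (min_le_left _ _))
  have d2 : δ ≤ 1 := le_trans (min_le_left _ _) (le_trans (min_le_left _ _) (min_le_right _ _))
  have d3 : δ ≤ m := le_trans (min_le_left _ _) (le_trans (min_le_right _ _) (min_le_left _ _))
  have d4 : δ ≤ ρ₁ * a₁ / 8 :=
    le_trans (min_le_left _ _) (le_trans (min_le_right _ _) (min_le_right _ _))
  have d5 : δ ≤ ρ₂ * a₁ / 8 :=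
    le_trans (min_le_right _ _) (le_trans (min_le_left _ _) (min_le_left _ _))
  have d6 : δ ≤ ε * a₁ / 16 :=
    le_trans (min_le_right _ _) (le_trans (min_le_left _ _) (min_le_right _ _))
  have d7 : δ ≤ ε ^ 2 * a₁ ^ 2 / (128 * b₁) :=
    le_trans (min_le_right _ _) (le_trans (min_le_right _ _) (min_le_left _ _))
  have d8 : δ ≤ τ / (4 * (b₁ + 1)) :=
    le_trans (min_le_right _ _) (le_trans (min_le_right _ _) (min_le_right _ _))
  intro η₂ ξ₂ a₂ b₂ ha₂ hab₂ hη₂ hl₂ hr₂ hnorm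
  obtain ⟨hC2, hD2, hIu2, hIw2, _⟩ := hη₂
  have hb₂ : 0 < b₂ := lt_trans ha₂ hab₂
  have hd2 : Differentiable ℝ η₂ := hC2.differentiable one_ne_zero
  have hd2c : Continuous (deriv η₂) := hC2.continuous_deriv le_rfl
  -- the difference u = η₁ - η₂
  set u : ℝ → ℝ := fun x => η₁ x - η₂ x with hu
  have hderiv_u : ∀ x, deriv u x = deriv η₁ x - deriv η₂ x := fun x =>
    ((hd1 x).hasDerivAt.sub (hd2 x).hasDerivAt).deriv
  -- extraction from the norm hypothesis
  have hS0nn : (0:ℝ) ≤ ⨆ x : ℝ, |u x| := Real.iSup_nonneg fun x => abs_nonneg _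
  have hS1nn : (0:ℝ) ≤ ⨆ x : ℝ, |deriv u x| := Real.iSup_nonneg fun x => abs_nonneg _
  have hnorm' := hnorm
  rw [norm11] at hnorm'
  have hS1lt : (⨆ x : ℝ, |deriv u x|) < δ := by
    have := Real.sqrt_nonneg ((∫ x : ℝ, u x ^ 2) + ∫ x : ℝ, (deriv u x) ^ 2)
    calc (⨆ x : ℝ, |deriv u x|) ≤ norm11 u := by rw [norm11]; linarith
    _ < δ := hnorm
  have hsqrt_lt : Real.sqrt ((∫ x : ℝ, u x ^ 2) + ∫ x : ℝ, (deriv u x) ^ 2) < δ := by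
    calc Real.sqrt ((∫ x : ℝ, u x ^ 2) + ∫ x : ℝ, (deriv u x) ^ 2) ≤ norm11 u := by
          rw [norm11]; linarith
    _ < δ := hnorm
  have hI2lt : (∫ x : ℝ, u x ^ 2) + (∫ x : ℝ, (deriv u x) ^ 2) < δ ^ 2 :=
    (Real.sqrt_lt' hδpos).1 hsqrt_lt
  have hIu_nn : (0:ℝ) ≤ ∫ x : ℝ, u x ^ 2 := integral_nonneg fun x => sq_nonneg _
  have hIdu_nn : (0:ℝ) ≤ ∫ x : ℝ, (deriv u x) ^ 2 := integral_nonneg fun x => sq_nonneg _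
  have hIu_lt : (∫ x : ℝ, u x ^ 2) < δ ^ 2 := by linarith
  have hIdu_lt : (∫ x : ℝ, (deriv u x) ^ 2) < δ ^ 2 := by linarith
  -- pointwise bound on deriv u via the sup
  have hBdd : ∀ x, |deriv u x| ≤ b₁ + b₂ := by
    intro x
    rw [hderiv_u x]
    have h1 := (hD1 x).1; have h2 := (hD1 x).2
    have h3 := (hD2 x).1; have h4 := (hD2 x).2
    rw [abs_le]; constructor <;> linarith
  have hdu : ∀ x, |deriv u x| ≤ δ := by
    intro x
    refine le_trans (le_ciSup (f := fun x => |deriv u x|) ⟨b₁ + b₂, ?_⟩ x) hS1lt.le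
    rintro _ ⟨z, rfl⟩
    exact hBdd z
  have hvptw : ∀ x, |deriv η₁ x - deriv η₂ x| ≤ δ := fun x => (hderiv_u x) ▸ hdu x
  -- integrability of u² and (deriv u)²
  have hu2int : Integrable (fun x => u x ^ 2) := by
    have h1 : (fun x => u x ^ 2) = fun x => ((η₁ x - x) - (η₂ x - x)) ^ 2 := by
      funext x; rw [hu]; ring_nf
    rw [h1]
    exact integrable_sq_diff hIu1 hIu2
      (((((hC1.continuous.sub continuous_id).sub
        (hC2.continuous.sub continuous_id))).pow 2).aestronglyMeasurable)
  -- pointwise bound on u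
  have huptw : ∀ y, |u y| ≤ 2 * δ :=
    pointwise_small hδpos (hd1.sub hd2) hu2int hIu_lt hdu
  -- bounds on deriv η₂
  have hD2l : ∀ x, a₁ / 2 ≤ deriv η₂ x := by
    intro x
    have := abs_le.1 (hvptw x)
    have := (hD1 x).1
    linarith [d1]
  have hD2u : ∀ x, deriv η₂ x ≤ b₁ + 1 := by
    intro x
    have := abs_le.1 (hvptw x)
    have := (hD1 x).2
    linarith [d2]
  -- Lipschitz bounds for η₁, η₂ and inverse bounds
  have habs1 := abs_sub_bounds hd1 (fun x => (hD1 x).1) (fun x => (hD1 x).2) ha₁.le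
  have habs2 := abs_sub_bounds hd2 hD2l hD2u (by positivity)
  have hcont1 : Continuous ξ₁ := by
    apply continuous_of_inv_bound ha₁
    intro x y
    calc a₁ * |ξ₁ x - ξ₁ y| ≤ |η₁ (ξ₁ x) - η₁ (ξ₁ y)| := (habs1 (ξ₁ x) (ξ₁ y)).1
    _ = |x - y| := by rw [hr₁ x, hr₁ y]
  have hcont2 : Continuous ξ₂ := by
    apply continuous_of_inv_bound (show (0:ℝ) < a₁ / 2 by positivity)
    intro x y
    calc a₁ / 2 * |ξ₂ x - ξ₂ y| ≤ |η₂ (ξ₂ x) - η₂ (ξ₂ y)| := (habs2 (ξ₂ x) (ξ₂ y)).1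
    _ = |x - y| := by rw [hr₂ x, hr₂ y]
  -- key pointwise bound on ξ₁ - ξ₂
  have hkey : ∀ x, |ξ₁ x - ξ₂ x| ≤ 2 / a₁ * |u (ξ₁ x)| := by
    intro x
    have h1 : a₁ / 2 * |ξ₁ x - ξ₂ x| ≤ |η₂ (ξ₁ x) - η₂ (ξ₂ x)| := (habs2 (ξ₁ x) (ξ₂ x)).1
    have h2 : |η₂ (ξ₁ x) - η₂ (ξ₂ x)| = |u (ξ₁ x)| := by
      rw [hr₂ x, hu]
      simp only
      rw [← abs_neg]
      congr 1
      have := hr₁ x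
      linarith [hr₁ x]
    rw [h2] at h1
    rw [div_mul_eq_mul_div, le_div_iff₀ ha₁]
    linarith
  have hsup : ∀ x, |ξ₁ x - ξ₂ x| ≤ 4 * δ / a₁ := by
    intro x
    calc |ξ₁ x - ξ₂ x| ≤ 2 / a₁ * |u (ξ₁ x)| := hkey x
    _ ≤ 2 / a₁ * (2 * δ) := by
        apply mul_le_mul_of_nonneg_left (huptw _) (by positivity)
    _ = 4 * δ / a₁ := by ring
  have hkey2 : ∀ y, |y - ξ₂ (η₁ y)| ≤ 2 / a₁ * |u y| := by
    intro y
    have h1 : a₁ / 2 * |ξ₂ (η₂ y) - ξ₂ (η₁ y)| ≤ |η₂ (ξ₂ (η₂ y)) - η₂ (ξ₂ (η₁ y))| :=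
      (habs2 _ _).1
    rw [hr₂ (η₂ y), hr₂ (η₁ y), hl₂ y] at h1
    have h2 : |η₂ y - η₁ y| = |u y| := by rw [hu, ← abs_neg]; congr 1; simp
    rw [h2] at h1
    rw [div_mul_eq_mul_div, le_div_iff₀ ha₁]
    linarith
  -- derivatives of the inverses
  have hne1 : ∀ x : ℝ, deriv η₁ (ξ₁ x) ≠ 0 := fun x =>
    ne_of_gt (lt_of_lt_of_le ha₁ (hD1 (ξ₁ x)).1)
  have hne2 : ∀ x : ℝ, deriv η₂ (ξ₂ x) ≠ 0 := fun x =>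
    ne_of_gt (lt_of_lt_of_le (by positivity) (hD2l (ξ₂ x)))
  have hdξ1 : ∀ x, HasDerivAt ξ₁ (deriv η₁ (ξ₁ x))⁻¹ x := fun x =>
    hasDerivAt_inverse hd1 hcont1 hr₁ (hne1 x)
  have hdξ2 : ∀ x, HasDerivAt ξ₂ (deriv η₂ (ξ₂ x))⁻¹ x := fun x =>
    hasDerivAt_inverse hd2 hcont2 hr₂ (hne2 x)
  have hderiv_ξ : ∀ x, deriv (fun x => ξ₁ x - ξ₂ x) x =
      (deriv η₁ (ξ₁ x))⁻¹ - (deriv η₂ (ξ₂ x))⁻¹ := fun x =>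
    ((hdξ1 x).sub (hdξ2 x)).deriv
  -- ===== sup component =====
  have hS0 : (⨆ x : ℝ, |ξ₁ x - ξ₂ x|) ≤ ε / 4 := by
    apply ciSup_le
    intro x
    calc |ξ₁ x - ξ₂ x| ≤ 4 * δ / a₁ := hsup x
    _ ≤ ε / 4 := by rw [div_le_div_iff₀ ha₁ (by norm_num : (0:ℝ) < 4)]; linarith [d6]
  -- ===== sup of derivative component =====
  have hS1 : (⨆ x : ℝ, |deriv (fun x => ξ₁ x - ξ₂ x) x|) ≤ ε / 4 := by
    apply ciSup_le
    intro x
    rw [hderiv_ξ x]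
    have hAa : a₁ ≤ deriv η₁ (ξ₁ x) := (hD1 _).1
    have hBa : a₁ / 2 ≤ deriv η₂ (ξ₂ x) := hD2l _
    have hApos : 0 < deriv η₁ (ξ₁ x) := lt_of_lt_of_le ha₁ hAa
    have hBpos : 0 < deriv η₂ (ξ₂ x) := lt_of_lt_of_le (by positivity) hBa
    have hABdist : |deriv η₁ (ξ₁ x) - deriv η₁ (ξ₂ x)| ≤ m := by
      have hdd : dist (ξ₁ x) (ξ₂ x) < ρ₁ := by
        rw [Real.dist_eq]
        calc |ξ₁ x - ξ₂ x| ≤ 4 * δ / a₁ := hsup x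
        _ < ρ₁ := by
            rw [div_lt_iff₀ ha₁]
            have hpa : 0 < ρ₁ * a₁ := mul_pos hρ₁pos ha₁
            linarith [d4]
      have := hρ₁ hdd
      rw [Real.dist_eq] at this
      exact this.le
    have hBd : |deriv η₁ (ξ₂ x) - deriv η₂ (ξ₂ x)| ≤ δ := hvptw (ξ₂ x)
    have hABle : |deriv η₁ (ξ₁ x) - deriv η₂ (ξ₂ x)| ≤ m + δ := by
      calc |deriv η₁ (ξ₁ x) - deriv η₂ (ξ₂ x)|
          ≤ |deriv η₁ (ξ₁ x) - deriv η₁ (ξ₂ x)| + |deriv η₁ (ξ₂ x) - deriv η₂ (ξ₂ x)| :=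
            abs_sub_le _ _ _
      _ ≤ m + δ := add_le_add hABdist hBd
    have heq : (deriv η₁ (ξ₁ x))⁻¹ - (deriv η₂ (ξ₂ x))⁻¹ =
        (deriv η₂ (ξ₂ x) - deriv η₁ (ξ₁ x)) / (deriv η₁ (ξ₁ x) * deriv η₂ (ξ₂ x)) := by
      field_simp
    rw [heq, abs_div, abs_of_pos (by positivity : (0:ℝ) < deriv η₁ (ξ₁ x) * deriv η₂ (ξ₂ x))]
    rw [div_le_iff₀ (by positivity)]
    have h1 : |deriv η₂ (ξ₂ x) - deriv η₁ (ξ₁ x)| ≤ m + δ := by rw [abs_sub_comm]; exact hABle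
    calc |deriv η₂ (ξ₂ x) - deriv η₁ (ξ₁ x)| ≤ 2 * m := by linarith [d3]
    _ = ε / 4 * (a₁ * (a₁ / 2)) := by rw [hm]; ring
    _ ≤ ε / 4 * (deriv η₁ (ξ₁ x) * deriv η₂ (ξ₂ x)) := by
        apply mul_le_mul_of_nonneg_left _ (by positivity)
        exact mul_le_mul hAa hBa (by positivity) (by positivity)
  -- ===== L² component of ξ₁ - ξ₂ =====
  have hI0 : (∫ x : ℝ, (ξ₁ x - ξ₂ x) ^ 2) ≤ ε ^ 2 / 32 := by
    rw [integral_comp_diffeo hd1 hl₁ hr₁ (fun x => (ξ₁ x - ξ₂ x) ^ 2)]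
    have hb : ∀ y : ℝ, |deriv η₁ y| * (ξ₁ (η₁ y) - ξ₂ (η₁ y)) ^ 2 ≤
        4 * b₁ / a₁ ^ 2 * u y ^ 2 := by
      intro y
      rw [hl₁ y]
      have h1 : |y - ξ₂ (η₁ y)| ≤ 2 / a₁ * |u y| := hkey2 y
      have h2 : (y - ξ₂ (η₁ y)) ^ 2 ≤ (2 / a₁ * |u y|) ^ 2 := by
        rw [← sq_abs (y - ξ₂ (η₁ y))]
        exact pow_le_pow_left₀ (abs_nonneg _) h1 2
      have h3 : |deriv η₁ y| ≤ b₁ := by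
        rw [abs_of_pos (lt_of_lt_of_le ha₁ (hD1 y).1)]; exact (hD1 y).2
      calc |deriv η₁ y| * (y - ξ₂ (η₁ y)) ^ 2 ≤ b₁ * (2 / a₁ * |u y|) ^ 2 :=
            mul_le_mul h3 h2 (sq_nonneg _) hb₁.le
      _ = 4 * b₁ / a₁ ^ 2 * u y ^ 2 := by rw [mul_pow, sq_abs]; ring
    calc (∫ y : ℝ, |deriv η₁ y| * (fun x => (ξ₁ x - ξ₂ x) ^ 2) (η₁ y))
        ≤ ∫ y : ℝ, 4 * b₁ / a₁ ^ 2 * u y ^ 2 :=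
          integral_mono_of_nonneg
            (Filter.Eventually.of_forall fun y => by beta_reduce; positivity)
            (hu2int.const_mul _) (Filter.Eventually.of_forall hb)
    _ = 4 * b₁ / a₁ ^ 2 * ∫ y : ℝ, u y ^ 2 := integral_const_mul _ _
    _ ≤ 4 * b₁ / a₁ ^ 2 * δ ^ 2 := mul_le_mul_of_nonneg_left hIu_lt.le (by positivity)
    _ ≤ 4 * b₁ / a₁ ^ 2 * δ := by
        apply mul_le_mul_of_nonneg_left _ (by positivity)
        calc δ ^ 2 = δ * δ := sq δ
        _ ≤ 1 * δ := mul_le_mul_of_nonneg_right d2 hδpos.le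
        _ = δ := one_mul δ
    _ ≤ ε ^ 2 / 32 := by
        have h5 : 4 * b₁ / a₁ ^ 2 * δ ≤ 4 * b₁ / a₁ ^ 2 * (ε ^ 2 * a₁ ^ 2 / (128 * b₁)) :=
          mul_le_mul_of_nonneg_left d7 (by positivity)
        have h6 : 4 * b₁ / a₁ ^ 2 * (ε ^ 2 * a₁ ^ 2 / (128 * b₁)) = ε ^ 2 / 32 := by
          field_simp
          ring
        linarith
  -- ===== L² component of the derivative of ξ₁ - ξ₂ =====
  have habs2' : ∀ y, |deriv η₂ y| ≤ b₁ + 1 := fun y => by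
    rw [abs_of_pos (lt_of_lt_of_le (by positivity) (hD2l y))]; exact hD2u y
  have habs1' : ∀ y, |deriv η₁ y| ≤ b₁ := fun y => by
    rw [abs_of_pos (lt_of_lt_of_le ha₁ (hD1 y).1)]; exact (hD1 y).2
  have hGint : Integrable (fun y => (deriv η₂ y - deriv η₁ y) ^ 2) := by
    have h1 : (fun y => (deriv η₂ y - deriv η₁ y) ^ 2) =
        fun y => ((deriv η₂ y - 1) - (deriv η₁ y - 1)) ^ 2 := by funext y; ring_nf
    rw [h1]
    exact integrable_sq_diff hIw2 hIw1
      ((((hd2c.sub continuous_const).sub (hd1c.sub continuous_const)).pow 2).aestronglyMeasurable)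
  have hGlt : (∫ y : ℝ, (deriv η₂ y - deriv η₁ y) ^ 2) < δ ^ 2 := by
    have hGeq : (fun y => (deriv η₂ y - deriv η₁ y) ^ 2) = fun y => (deriv u y) ^ 2 := by
      funext y; rw [hderiv_u y]; ring
    rw [hGeq]
    exact hIdu_lt
  obtain ⟨hPint, hPle⟩ := comp_sq_integral_bound hd2 hd2c hl₂ hr₂ (hd2c.sub hd1c) habs2'
    (by positivity) hGint
  obtain ⟨hh2int, hh2le⟩ := comp_sq_integral_bound hd2 hd2c hl₂ hr₂
    ((hd1c.sub continuous_const).sub hgcont) habs2' (by positivity) hgEint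
  obtain ⟨hh1int, hh1le⟩ := comp_sq_integral_bound hd1 hd1c hl₁ hr₁
    ((hd1c.sub continuous_const).sub hgcont) habs1' hb₁.le hgEint
  obtain ⟨hwξ2int, _⟩ := comp_sq_integral_bound hd2 hd2c hl₂ hr₂ (hd1c.sub continuous_const)
    habs2' (by positivity) hIw1
  obtain ⟨hwξ1int, _⟩ := comp_sq_integral_bound hd1 hd1c hl₁ hr₁ (hd1c.sub continuous_const)
    habs1' hb₁.le hIw1
  -- the middle (compactly supported) term
  have hdist1 : ∀ x : ℝ, |ξ₂ x - ξ₁ x| ≤ 1 := by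
    intro x
    rw [abs_sub_comm]
    calc |ξ₁ x - ξ₂ x| ≤ 4 * δ / a₁ := hsup x
    _ ≤ 1 := by rw [div_le_one ha₁]; linarith [d1]
  have hmid0 : ∀ x ∉ Set.Icc c d, (g (ξ₂ x) - g (ξ₁ x)) ^ 2 = 0 := by
    intro x hx
    have hRR : -(R + 1) < -R := by linarith
    have hξout : ξ₁ x < -(R + 1) ∨ R + 1 < ξ₁ x := by
      by_contra hcc
      push_neg at hcc
      obtain ⟨hc1, hc2⟩ := hcc
      apply hx
      constructor
      · have := hmono1 hc1
        rwa [hr₁ x] at this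
      · have := hmono1 hc2
        rwa [hr₁ x] at this
    have h12 := hdist1 x
    rw [abs_le] at h12
    have hg1 : g (ξ₁ x) = 0 := by
      apply hgzero
      intro hmem
      rw [Set.mem_Icc] at hmem
      rcases hξout with hlt | hgt <;> [linarith [hmem.1]; linarith [hmem.2]]
    have hg2 : g (ξ₂ x) = 0 := by
      apply hgzero
      intro hmem
      rw [Set.mem_Icc] at hmem
      rcases hξout with hlt | hgt <;> [linarith [hmem.1]; linarith [hmem.2]]
    rw [hg1, hg2]
    ring
  have hmidcont : Continuous (fun x => (g (ξ₂ x) - g (ξ₁ x)) ^ 2) :=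
    ((hgcont.comp hcont2).sub (hgcont.comp hcont1)).pow 2
  have hmidint : Integrable (fun x => (g (ξ₂ x) - g (ξ₁ x)) ^ 2) :=
    hmidcont.integrable_of_hasCompactSupport
      (HasCompactSupport.intro isCompact_Icc hmid0)
  have hmidptw : ∀ x, (g (ξ₂ x) - g (ξ₁ x)) ^ 2 ≤
      Set.indicator (Set.Icc c d) (fun _ => t ^ 2) x := by
    intro x
    by_cases hx : x ∈ Set.Icc c d
    · rw [Set.indicator_of_mem hx]
      have hdd : dist (ξ₂ x) (ξ₁ x) < ρ₂ := by
        rw [Real.dist_eq, abs_sub_comm]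
        calc |ξ₁ x - ξ₂ x| ≤ 4 * δ / a₁ := hsup x
        _ < ρ₂ := by
            rw [div_lt_iff₀ ha₁]
            have hpa : 0 < ρ₂ * a₁ := mul_pos hρ₂pos ha₁
            linarith [d5]
      have hgg := hρ₂ hdd
      rw [Real.dist_eq] at hgg
      calc (g (ξ₂ x) - g (ξ₁ x)) ^ 2 = |g (ξ₂ x) - g (ξ₁ x)| ^ 2 := (sq_abs _).symm
      _ ≤ t ^ 2 := by apply pow_le_pow_left₀ (abs_nonneg _) hgg.le
    · rw [Set.indicator_of_notMem hx, hmid0 x hx]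
  have hmidI : (∫ x : ℝ, (g (ξ₂ x) - g (ξ₁ x)) ^ 2) ≤ t ^ 2 * ℓ := by
    have hvol : volume (Set.Icc c d) ≠ ⊤ := by
      rw [Real.volume_Icc]; exact ENNReal.ofReal_ne_top
    calc (∫ x : ℝ, (g (ξ₂ x) - g (ξ₁ x)) ^ 2)
        ≤ ∫ x : ℝ, Set.indicator (Set.Icc c d) (fun _ => t ^ 2) x :=
          integral_mono_of_nonneg (Filter.Eventually.of_forall fun x => sq_nonneg _)
            ((integrable_indicator_iff measurableSet_Icc).2
              (integrableOn_const hvol))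
            (Filter.Eventually.of_forall hmidptw)
    _ = (volume (Set.Icc c d)).toReal • t ^ 2 := integral_indicator_const _ measurableSet_Icc
    _ = t ^ 2 * ℓ := by
        rw [Real.volume_Icc, ENNReal.toReal_ofReal (by linarith [hcd]), smul_eq_mul, hℓ]
        ring
  -- integral of P bounded by τ/4
  have hE0 : (0:ℝ) ≤ ∫ x, (w x - g x) ^ 2 := integral_nonneg fun x => sq_nonneg _
  have hPI : (∫ x : ℝ, (deriv η₂ (ξ₂ x) - deriv η₁ (ξ₂ x)) ^ 2) ≤ τ / 4 := by
    calc (∫ x : ℝ, (deriv η₂ (ξ₂ x) - deriv η₁ (ξ₂ x)) ^ 2)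
        ≤ (b₁ + 1) * ∫ y : ℝ, (deriv η₂ y - deriv η₁ y) ^ 2 := hPle
    _ ≤ (b₁ + 1) * δ ^ 2 := mul_le_mul_of_nonneg_left hGlt.le (by positivity)
    _ ≤ (b₁ + 1) * δ := by
        apply mul_le_mul_of_nonneg_left _ (by positivity)
        calc δ ^ 2 = δ * δ := sq δ
        _ ≤ 1 * δ := mul_le_mul_of_nonneg_right d2 hδpos.le
        _ = δ := one_mul δ
    _ ≤ τ / 4 := by
        have h5 : (b₁ + 1) * δ ≤ (b₁ + 1) * (τ / (4 * (b₁ + 1))) :=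
          mul_le_mul_of_nonneg_left d8 (by positivity)
        have h6 : (b₁ + 1) * (τ / (4 * (b₁ + 1))) = τ / 4 := by field_simp
        linarith
  -- integral of Q bounded by τ/2
  have hQle : ∀ x, (deriv η₁ (ξ₂ x) - deriv η₁ (ξ₁ x)) ^ 2 ≤
      3 * (w (ξ₂ x) - g (ξ₂ x)) ^ 2 + 3 * (g (ξ₂ x) - g (ξ₁ x)) ^ 2 +
        3 * (w (ξ₁ x) - g (ξ₁ x)) ^ 2 := by
    intro x
    have hid : deriv η₁ (ξ₂ x) - deriv η₁ (ξ₁ x) =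
        (w (ξ₂ x) - g (ξ₂ x)) + (g (ξ₂ x) - g (ξ₁ x)) - (w (ξ₁ x) - g (ξ₁ x)) := by
      rw [hw]; ring
    rw [hid]
    exact sq_add_add_le _ _ _
  have hQint : Integrable (fun x => (deriv η₁ (ξ₂ x) - deriv η₁ (ξ₁ x)) ^ 2) := by
    apply Integrable.mono' ((hwξ2int.const_mul 2).add (hwξ1int.const_mul 2))
      ((((hd1c.comp hcont2).sub (hd1c.comp hcont1)).pow 2).aestronglyMeasurable)
    apply Filter.Eventually.of_forall
    intro x
    simp only [Pi.add_apply, Pi.sub_apply, Pi.pow_apply, Function.comp_apply]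
    rw [Real.norm_eq_abs, abs_of_nonneg (sq_nonneg _)]
    have hid : deriv η₁ (ξ₂ x) - deriv η₁ (ξ₁ x) =
        (deriv η₁ (ξ₂ x) - 1) - (deriv η₁ (ξ₁ x) - 1) := by ring
    rw [hid]
    exact sq_sub_le _ _
  have hQI : (∫ x : ℝ, (deriv η₁ (ξ₂ x) - deriv η₁ (ξ₁ x)) ^ 2) ≤ τ / 2 := by
    have hint3 : Integrable (fun x => 3 * (w (ξ₂ x) - g (ξ₂ x)) ^ 2 +
        3 * (g (ξ₂ x) - g (ξ₁ x)) ^ 2 + 3 * (w (ξ₁ x) - g (ξ₁ x)) ^ 2) :=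
      ((hh2int.const_mul 3).add (hmidint.const_mul 3)).add (hh1int.const_mul 3)
    have i3 : Integrable (fun x : ℝ => 3 * (w (ξ₂ x) - g (ξ₂ x)) ^ 2) := hh2int.const_mul 3
    have i4 : Integrable (fun x : ℝ => 3 * (g (ξ₂ x) - g (ξ₁ x)) ^ 2) := hmidint.const_mul 3
    have i5 : Integrable (fun x : ℝ => 3 * (w (ξ₁ x) - g (ξ₁ x)) ^ 2) := hh1int.const_mul 3
    have i1 : Integrable (fun x : ℝ => 3 * (w (ξ₂ x) - g (ξ₂ x)) ^ 2 +
        3 * (g (ξ₂ x) - g (ξ₁ x)) ^ 2) := by exact i3.add i4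
    have hsplit : (∫ x : ℝ, (3 * (w (ξ₂ x) - g (ξ₂ x)) ^ 2 +
        3 * (g (ξ₂ x) - g (ξ₁ x)) ^ 2 + 3 * (w (ξ₁ x) - g (ξ₁ x)) ^ 2)) =
        3 * (∫ x : ℝ, (w (ξ₂ x) - g (ξ₂ x)) ^ 2) + 3 * (∫ x : ℝ, (g (ξ₂ x) - g (ξ₁ x)) ^ 2) +
          3 * (∫ x : ℝ, (w (ξ₁ x) - g (ξ₁ x)) ^ 2) := by
      rw [integral_add i1 i5, integral_add i3 i4,
        integral_const_mul, integral_const_mul, integral_const_mul]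
    have hEb : (∫ x, (w x - g x) ^ 2) ≤ τ / (24 * (b₁ + 1)) := hgE
    have hc2 : (∫ x : ℝ, (w (ξ₂ x) - g (ξ₂ x)) ^ 2) ≤ τ / 24 := by
      calc (∫ x : ℝ, (w (ξ₂ x) - g (ξ₂ x)) ^ 2)
          ≤ (b₁ + 1) * ∫ x, (w x - g x) ^ 2 := hh2le
      _ ≤ (b₁ + 1) * (τ / (24 * (b₁ + 1))) := mul_le_mul_of_nonneg_left hEb (by positivity)
      _ = τ / 24 := by field_simp
    have hc1 : (∫ x : ℝ, (w (ξ₁ x) - g (ξ₁ x)) ^ 2) ≤ τ / 24 := by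
      calc (∫ x : ℝ, (w (ξ₁ x) - g (ξ₁ x)) ^ 2)
          ≤ b₁ * ∫ x, (w x - g x) ^ 2 := hh1le
      _ ≤ (b₁ + 1) * ∫ x, (w x - g x) ^ 2 := by
          apply mul_le_mul_of_nonneg_right _ hE0; linarith
      _ ≤ (b₁ + 1) * (τ / (24 * (b₁ + 1))) := mul_le_mul_of_nonneg_left hEb (by positivity)
      _ = τ / 24 := by field_simp
    have hmt : 3 * (t ^ 2 * ℓ) ≤ τ / 4 := by
      rw [ht2]
      have e : 3 * (τ / (12 * (ℓ + 1)) * ℓ) = τ * ℓ / (ℓ + 1) / 4 := by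
        field_simp
        ring
      rw [e]
      have e2 : τ * ℓ / (ℓ + 1) ≤ τ := by
        rw [div_le_iff₀ (by positivity)]
        have e3 : τ * ℓ + τ = τ * (ℓ + 1) := by ring
        linarith [hτpos.le]
      linarith
    calc (∫ x : ℝ, (deriv η₁ (ξ₂ x) - deriv η₁ (ξ₁ x)) ^ 2)
        ≤ ∫ x : ℝ, (3 * (w (ξ₂ x) - g (ξ₂ x)) ^ 2 + 3 * (g (ξ₂ x) - g (ξ₁ x)) ^ 2 +
            3 * (w (ξ₁ x) - g (ξ₁ x)) ^ 2) :=
          integral_mono_of_nonneg (Filter.Eventually.of_forall fun x => sq_nonneg _) hint3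
            (Filter.Eventually.of_forall hQle)
    _ = 3 * (∫ x : ℝ, (w (ξ₂ x) - g (ξ₂ x)) ^ 2) + 3 * (∫ x : ℝ, (g (ξ₂ x) - g (ξ₁ x)) ^ 2) +
          3 * (∫ x : ℝ, (w (ξ₁ x) - g (ξ₁ x)) ^ 2) := hsplit
    _ ≤ 3 * (τ / 24) + 3 * (t ^ 2 * ℓ) + 3 * (τ / 24) := by
        have h1 := mul_le_mul_of_nonneg_left hc2 (by norm_num : (0:ℝ) ≤ 3)
        have h2 := mul_le_mul_of_nonneg_left hc1 (by norm_num : (0:ℝ) ≤ 3)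
        have h3 := mul_le_mul_of_nonneg_left hmidI (by norm_num : (0:ℝ) ≤ 3)
        exact add_le_add (add_le_add h1 h3) h2
    _ ≤ τ / 2 := by linarith [hmt]
  have hI1 : (∫ x : ℝ, (deriv (fun x => ξ₁ x - ξ₂ x) x) ^ 2) ≤ ε ^ 2 / 32 := by
    have hre : (fun x : ℝ => (deriv (fun x => ξ₁ x - ξ₂ x) x) ^ 2) =
        fun x => ((deriv η₁ (ξ₁ x))⁻¹ - (deriv η₂ (ξ₂ x))⁻¹) ^ 2 := by
      funext x; rw [hderiv_ξ x]
    rw [hre]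
    have hptb : ∀ x : ℝ, ((deriv η₁ (ξ₁ x))⁻¹ - (deriv η₂ (ξ₂ x))⁻¹) ^ 2 ≤
        8 / a₁ ^ 4 * ((deriv η₂ (ξ₂ x) - deriv η₁ (ξ₂ x)) ^ 2 +
          (deriv η₁ (ξ₂ x) - deriv η₁ (ξ₁ x)) ^ 2) :=
      fun x => inv_sub_inv_sq_le ha₁ (hD1 _).1 (hD2l _)
    calc (∫ x : ℝ, ((deriv η₁ (ξ₁ x))⁻¹ - (deriv η₂ (ξ₂ x))⁻¹) ^ 2)
        ≤ ∫ x : ℝ, 8 / a₁ ^ 4 * ((deriv η₂ (ξ₂ x) - deriv η₁ (ξ₂ x)) ^ 2 +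
            (deriv η₁ (ξ₂ x) - deriv η₁ (ξ₁ x)) ^ 2) :=
          integral_mono_of_nonneg (Filter.Eventually.of_forall fun x => sq_nonneg _)
            ((hPint.add hQint).const_mul _) (Filter.Eventually.of_forall hptb)
    _ = 8 / a₁ ^ 4 * ∫ x : ℝ, ((deriv η₂ (ξ₂ x) - deriv η₁ (ξ₂ x)) ^ 2 +
            (deriv η₁ (ξ₂ x) - deriv η₁ (ξ₁ x)) ^ 2) := integral_const_mul _ _
    _ = 8 / a₁ ^ 4 * ((∫ x : ℝ, (deriv η₂ (ξ₂ x) - deriv η₁ (ξ₂ x)) ^ 2) +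
            ∫ x : ℝ, (deriv η₁ (ξ₂ x) - deriv η₁ (ξ₁ x)) ^ 2) := by
        exact congrArg _ (integral_add hPint hQint)
    _ ≤ 8 / a₁ ^ 4 * (τ / 4 + τ / 2) := by
        apply mul_le_mul_of_nonneg_left _ (by positivity)
        linarith
    _ ≤ ε ^ 2 / 32 := by
        have h6 : 8 / a₁ ^ 4 * τ = ε ^ 2 / 32 := by rw [hτ]; field_simp; ring
        have h7 : 8 / a₁ ^ 4 * (τ / 4 + τ / 2) ≤ 8 / a₁ ^ 4 * τ := by
          apply mul_le_mul_of_nonneg_left _ (by positivity)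
          linarith
        linarith
  -- ===== assembly =====
  have hsq : Real.sqrt ((∫ x : ℝ, (ξ₁ x - ξ₂ x) ^ 2) +
      ∫ x : ℝ, (deriv (fun x => ξ₁ x - ξ₂ x) x) ^ 2) ≤ ε / 4 := by
    have hsum : (∫ x : ℝ, (ξ₁ x - ξ₂ x) ^ 2) +
        (∫ x : ℝ, (deriv (fun x => ξ₁ x - ξ₂ x) x) ^ 2) ≤ ε ^ 2 / 16 := by linarith
    calc Real.sqrt ((∫ x : ℝ, (ξ₁ x - ξ₂ x) ^ 2) +
        ∫ x : ℝ, (deriv (fun x => ξ₁ x - ξ₂ x) x) ^ 2) ≤ Real.sqrt (ε ^ 2 / 16) :=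
          Real.sqrt_le_sqrt hsum
    _ = ε / 4 := by
        rw [show ε ^ 2 / 16 = (ε / 4) ^ 2 by ring]
        exact Real.sqrt_sq (by positivity)
  have hfin : norm11 (fun x => ξ₁ x - ξ₂ x) = (⨆ x : ℝ, |ξ₁ x - ξ₂ x|) +
      (⨆ x : ℝ, |deriv (fun x => ξ₁ x - ξ₂ x) x|) +
      Real.sqrt ((∫ x : ℝ, (ξ₁ x - ξ₂ x) ^ 2) +
        ∫ x : ℝ, (deriv (fun x => ξ₁ x - ξ₂ x) x) ^ 2) := rfl
  rw [hfin]
  linarith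
end

section
/- Let η₁, η₂ ∈ 𝒟(ℝ) with a₁ ≤ η₁'(x) for all x (a₁ > 0) and η₂'(x) ≤ b₂ for all x, and let ξ₁ = η₁⁻¹, ξ₂ = η₂⁻¹ be their inverses. Then ∫_ℝ |ξ₁(x) − ξ₂(x)|² dx ≤ (b₂/a₁²) ∫_ℝ |η₁(y) − η₂(y)|² dy. -/
open Filter MeasureTheory

/-- For `η₁, η₂ ∈ 𝒟(ℝ)` with `a₁ ≤ η₁'`, `η₂' ≤ b₂` and inverses `ξ₁, ξ₂`:
`∫ |ξ₁(x) − ξ₂(x)|² dx ≤ (b₂/a₁²) ∫ |η₁(y) − η₂(y)|² dy`. -/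
theorem inverse_L2_diff_bound (η₁ η₂ ξ₁ ξ₂ : ℝ → ℝ) (a₁ b₁ a₂ b₂ : ℝ)
    (ha₁ : 0 < a₁) (hab₁ : a₁ < b₁) (ha₂ : 0 < a₂) (hab₂ : a₂ < b₂)
    (hη₁ : InD η₁ a₁ b₁) (hη₂ : InD η₂ a₂ b₂)
    (hl₁ : Function.LeftInverse ξ₁ η₁) (hr₁ : Function.RightInverse ξ₁ η₁)
    (hl₂ : Function.LeftInverse ξ₂ η₂) (hr₂ : Function.RightInverse ξ₂ η₂) :
    ∫ x : ℝ, (ξ₁ x - ξ₂ x) ^ 2 ≤ (b₂ / a₁ ^ 2) * ∫ y : ℝ, (η₁ y - η₂ y) ^ 2 := by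
  obtain ⟨hc₁, hd₁, hi₁, -, -⟩ := hη₁
  obtain ⟨hc₂, hd₂, hi₂, -, -⟩ := hη₂
  have hdiff₁ : Differentiable ℝ η₁ := hc₁.differentiable one_ne_zero
  have hdiff₂ : Differentiable ℝ η₂ := hc₂.differentiable one_ne_zero
  -- η₁ expands distances by at least a₁
  have key : ∀ p q : ℝ, p ≤ q → a₁ * (q - p) ≤ η₁ q - η₁ p := by
    intro p q hpq
    have hmono : Monotone (fun x => η₁ x - a₁ * x) := by
      apply monotone_of_deriv_nonneg
      · exact hdiff₁.sub (differentiable_id.const_mul a₁)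
      · intro x
        have hde : HasDerivAt (fun x => η₁ x - a₁ * x) (deriv η₁ x - a₁ * 1) x :=
          (hdiff₁ x).hasDerivAt.sub ((hasDerivAt_id x).const_mul a₁)
        rw [hde.deriv]; linarith [(hd₁ x).1]
    have := hmono hpq
    simp only at this
    linarith
  have hexp : ∀ p q : ℝ, a₁ * |p - q| ≤ |η₁ p - η₁ q| := by
    intro p q
    rcases le_total p q with h | h
    · have h1 := key p q h
      have h2 : |p - q| = q - p := by rw [abs_sub_comm]; exact abs_of_nonneg (by linarith)
      have h3 : η₁ q - η₁ p ≤ |η₁ p - η₁ q| := by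
        rw [abs_sub_comm]; exact le_abs_self _
      rw [h2]; linarith
    · have h1 := key q p h
      have h2 : |p - q| = p - q := abs_of_nonneg (by linarith)
      have h3 : η₁ p - η₁ q ≤ |η₁ p - η₁ q| := le_abs_self _
      rw [h2]; linarith
  -- ξ₁ is Lipschitz with constant 1/a₁
  have hxi : ∀ u v : ℝ, |ξ₁ u - ξ₁ v| ≤ |u - v| / a₁ := by
    intro u v
    have h := hexp (ξ₁ u) (ξ₁ v)
    rw [hr₁ u, hr₁ v] at h
    rw [le_div_iff₀ ha₁]
    linarith
  -- change of variables x = η₂ y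
  have hcov : ∫ x : ℝ, (ξ₁ x - ξ₂ x) ^ 2
      = ∫ y : ℝ, |deriv η₂ y| • ((ξ₁ (η₂ y) - ξ₂ (η₂ y)) ^ 2) := by
    have himg : η₂ '' Set.univ = Set.univ := by
      rw [Set.image_univ]
      exact hr₂.surjective.range_eq
    have h := MeasureTheory.integral_image_eq_integral_abs_deriv_smul
      (MeasurableSet.univ) (f' := deriv η₂)
      (fun x _ => (hdiff₂ x).hasDerivAt.hasDerivWithinAt)
      (hl₂.injective.injOn) (fun x => (ξ₁ x - ξ₂ x) ^ 2)
    rw [himg] at h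
    simpa using h
  rw [hcov, ← integral_const_mul]
  -- integrability of the RHS
  have hIntSq : Integrable (fun y : ℝ => (η₁ y - η₂ y) ^ 2) := by
    have haux : Integrable (fun y : ℝ => 2 * (η₁ y - y) ^ 2 + 2 * (η₂ y - y) ^ 2) :=
      (hi₁.const_mul 2).add (hi₂.const_mul 2)
    apply haux.mono' ((hc₁.continuous.sub hc₂.continuous).pow 2).aestronglyMeasurable
    filter_upwards with y
    rw [Real.norm_eq_abs, abs_of_nonneg (sq_nonneg _)]
    simp only [Pi.pow_apply, Pi.sub_apply]
    nlinarith [sq_nonneg ((η₁ y - y) + (η₂ y - y)), sq_nonneg ((η₁ y - y) - (η₂ y - y))]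
  have hInt : Integrable (fun y : ℝ => (b₂ / a₁ ^ 2) * (η₁ y - η₂ y) ^ 2) :=
    hIntSq.const_mul _
  apply integral_mono_of_nonneg
  · filter_upwards with y
    have : (0:ℝ) ≤ |deriv η₂ y| • ((ξ₁ (η₂ y) - ξ₂ (η₂ y)) ^ 2) := by
      rw [smul_eq_mul]; positivity
    exact this
  · exact hInt
  · filter_upwards with y
    simp only [smul_eq_mul]
    have hb : |deriv η₂ y| ≤ b₂ := by
      rw [abs_of_nonneg (le_trans ha₂.le (hd₂ y).1)]
      exact (hd₂ y).2
    have h2 : |ξ₁ (η₂ y) - ξ₂ (η₂ y)| ≤ |η₂ y - η₁ y| / a₁ := by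
      rw [hl₂ y]
      have h := hxi (η₂ y) (η₁ y)
      rw [hl₁ y] at h
      exact h
    have hs := sq_abs (ξ₁ (η₂ y) - ξ₂ (η₂ y))
    have hΔ := sq_abs (η₂ y - η₁ y)
    have habs1 := abs_nonneg (ξ₁ (η₂ y) - ξ₂ (η₂ y))
    have habs2 := abs_nonneg (η₂ y - η₁ y)
    have hsq : (ξ₁ (η₂ y) - ξ₂ (η₂ y)) ^ 2 ≤ (η₂ y - η₁ y) ^ 2 / a₁ ^ 2 := by
      rw [← hs, ← hΔ, ← div_pow]
      exact pow_le_pow_left₀ habs1 h2 2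
    have hΔ2 : (η₂ y - η₁ y) ^ 2 = (η₁ y - η₂ y) ^ 2 := by ring
    have hsqnn : (0:ℝ) ≤ (ξ₁ (η₂ y) - ξ₂ (η₂ y)) ^ 2 := sq_nonneg _
    have ha₁2 : (0:ℝ) < a₁ ^ 2 := by positivity
    have h4 : (ξ₁ (η₂ y) - ξ₂ (η₂ y)) ^ 2 * a₁ ^ 2 ≤ (η₂ y - η₁ y) ^ 2 :=
      (le_div_iff₀ ha₁2).mp hsq
    have hbnn : (0:ℝ) ≤ b₂ := le_trans (abs_nonneg _) hb
    rw [div_mul_eq_mul_div, le_div_iff₀ ha₁2]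
    nlinarith [mul_nonneg (sub_nonneg.mpr hb) (mul_nonneg hsqnn ha₁2.le),
      mul_nonneg hbnn (sub_nonneg.mpr h4)]
end

section
/- Let η₁, η₂ ∈ 𝒟(ℝ) with a₁ ≤ η₁'(x) and a₂ ≤ η₂'(x) for all x (a₁, a₂ > 0), let ξ₁ = η₁⁻¹, ξ₂ = η₂⁻¹ be their inverses, and let ω₁ : [0,∞) → [0,∞) be a nondecreasing function such that |η₁'(x) − η₁'(y)| ≤ ω₁(|x − y|) for all x, y ∈ ℝ. Then for every x ∈ ℝ, |ξ₁'(x) − ξ₂'(x)| ≤ (1/(a₁ a₂)) ( ω₁(|ξ₁(x) − ξ₂(x)|) + sup_{z∈ℝ} |η₁'(z) − η₂'(z)| ). -/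
open Filter MeasureTheory

lemma deriv_inverse_eq (η ξ : ℝ → ℝ) (a b : ℝ) (ha : 0 < a) (hη : InD η a b)
    (hr : Function.RightInverse ξ η) (hlsurj : Function.Surjective ξ) (x : ℝ) :
    deriv ξ x = (deriv η (ξ x))⁻¹ := by
  have hd : Differentiable ℝ η := hη.1.differentiable one_ne_zero
  have hmono : StrictMono η := strictMono_of_deriv_pos fun y => lt_of_lt_of_le ha (hη.2.1 y).1
  have hsξ : StrictMono ξ := fun u v h =>
    hmono.lt_iff_lt.mp (by rw [hr u, hr v]; exact h)
  have hcont : Continuous ξ := (hsξ.orderIsoOfSurjective ξ hlsurj).continuous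
  have hne : deriv η (ξ x) ≠ 0 := ne_of_gt (lt_of_lt_of_le ha (hη.2.1 (ξ x)).1)
  have hda : HasDerivAt ξ ((deriv η (ξ x))⁻¹) x :=
    HasDerivAt.of_local_left_inverse hcont.continuousAt ((hd (ξ x)).hasDerivAt) hne
      (Filter.Eventually.of_forall fun y => hr y)
  exact hda.deriv

/-- For `η₁, η₂ ∈ 𝒟(ℝ)` with inverses `ξ₁, ξ₂` and a modulus of continuity `ω₁` for `η₁'`:
`|ξ₁'(x) − ξ₂'(x)| ≤ (1/(a₁ a₂)) (ω₁(|ξ₁(x) − ξ₂(x)|) + sup_z |η₁'(z) − η₂'(z)|)`. -/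
theorem inverse_deriv_sup_bound (η₁ η₂ ξ₁ ξ₂ : ℝ → ℝ) (a₁ b₁ a₂ b₂ : ℝ)
    (ha₁ : 0 < a₁) (hab₁ : a₁ < b₁) (ha₂ : 0 < a₂) (hab₂ : a₂ < b₂)
    (hη₁ : InD η₁ a₁ b₁) (hη₂ : InD η₂ a₂ b₂)
    (hl₁ : Function.LeftInverse ξ₁ η₁) (hr₁ : Function.RightInverse ξ₁ η₁)
    (hl₂ : Function.LeftInverse ξ₂ η₂) (hr₂ : Function.RightInverse ξ₂ η₂)
    (ω₁ : ℝ → ℝ) (hω₁nonneg : ∀ s : ℝ, 0 ≤ s → 0 ≤ ω₁ s)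
    (hω₁mono : ∀ s t : ℝ, 0 ≤ s → s ≤ t → ω₁ s ≤ ω₁ t)
    (hω₁ : ∀ x y : ℝ, |deriv η₁ x - deriv η₁ y| ≤ ω₁ |x - y|) :
    ∀ x : ℝ, |deriv ξ₁ x - deriv ξ₂ x| ≤
      (1 / (a₁ * a₂)) * (ω₁ |ξ₁ x - ξ₂ x| + ⨆ z : ℝ, |deriv η₁ z - deriv η₂ z|) := by
  intro x
  have hd1 : deriv ξ₁ x = (deriv η₁ (ξ₁ x))⁻¹ :=
    deriv_inverse_eq η₁ ξ₁ a₁ b₁ ha₁ hη₁ hr₁ hl₁.surjective x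
  have hd2 : deriv ξ₂ x = (deriv η₂ (ξ₂ x))⁻¹ :=
    deriv_inverse_eq η₂ ξ₂ a₂ b₂ ha₂ hη₂ hr₂ hl₂.surjective x
  set A := deriv η₁ (ξ₁ x) with hA
  set B := deriv η₂ (ξ₂ x) with hB
  have hAa : a₁ ≤ A := (hη₁.2.1 (ξ₁ x)).1
  have hBa : a₂ ≤ B := (hη₂.2.1 (ξ₂ x)).1
  have hApos : 0 < A := lt_of_lt_of_le ha₁ hAa
  have hBpos : 0 < B := lt_of_lt_of_le ha₂ hBa
  -- sup bound
  have hbdd : BddAbove (Set.range fun z => |deriv η₁ z - deriv η₂ z|) := by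
    refine ⟨b₁ + b₂, ?_⟩
    rintro _ ⟨z, rfl⟩
    have h1 := hη₁.2.1 z
    have h2 := hη₂.2.1 z
    have : |deriv η₁ z - deriv η₂ z| ≤ |deriv η₁ z| + |deriv η₂ z| := abs_sub _ _
    have e1 : |deriv η₁ z| ≤ b₁ := by
      rw [abs_of_pos (lt_of_lt_of_le ha₁ h1.1)]; exact h1.2
    have e2 : |deriv η₂ z| ≤ b₂ := by
      rw [abs_of_pos (lt_of_lt_of_le ha₂ h2.1)]; exact h2.2
    linarith
  have hS : |deriv η₁ (ξ₂ x) - deriv η₂ (ξ₂ x)| ≤ ⨆ z : ℝ, |deriv η₁ z - deriv η₂ z| :=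
    le_ciSup hbdd (ξ₂ x)
  have hnum : |B - A| ≤ ω₁ |ξ₁ x - ξ₂ x| + ⨆ z : ℝ, |deriv η₁ z - deriv η₂ z| := by
    have tineq : |B - A| ≤ |deriv η₁ (ξ₂ x) - A| + |deriv η₁ (ξ₂ x) - B| := by
      have := abs_sub_abs_le_abs_sub (B - A) 0
      calc |B - A| = |(deriv η₁ (ξ₂ x) - A) - (deriv η₁ (ξ₂ x) - B)| := by ring_nf
        _ ≤ _ := abs_sub _ _
    have h1 : |deriv η₁ (ξ₂ x) - A| ≤ ω₁ |ξ₁ x - ξ₂ x| := by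
      have := hω₁ (ξ₂ x) (ξ₁ x)
      calc |deriv η₁ (ξ₂ x) - A| ≤ ω₁ |ξ₂ x - ξ₁ x| := this
        _ = ω₁ |ξ₁ x - ξ₂ x| := by rw [abs_sub_comm]
    have h2 : |deriv η₁ (ξ₂ x) - B| ≤ ⨆ z : ℝ, |deriv η₁ z - deriv η₂ z| := hS
    linarith
  have hNnonneg : 0 ≤ ω₁ |ξ₁ x - ξ₂ x| + ⨆ z : ℝ, |deriv η₁ z - deriv η₂ z| := by
    have := hω₁nonneg |ξ₁ x - ξ₂ x| (abs_nonneg _)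
    have := (abs_nonneg (deriv η₁ (ξ₂ x) - deriv η₂ (ξ₂ x))).trans hS
    linarith
  rw [hd1, hd2]
  have key : |A⁻¹ - B⁻¹| = |B - A| / (A * B) := by
    rw [show A⁻¹ - B⁻¹ = (B - A) / (A * B) by field_simp, abs_div,
      abs_of_pos (mul_pos hApos hBpos)]
  rw [key]
  rw [div_le_iff₀ (by positivity)]
  calc |B - A| ≤ ω₁ |ξ₁ x - ξ₂ x| + ⨆ z : ℝ, |deriv η₁ z - deriv η₂ z| := hnum
    _ = (1 / (a₁ * a₂)) * (ω₁ |ξ₁ x - ξ₂ x| + ⨆ z : ℝ, |deriv η₁ z - deriv η₂ z|) * (a₁ * a₂) := by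
      field_simp
    _ ≤ (1 / (a₁ * a₂)) * (ω₁ |ξ₁ x - ξ₂ x| + ⨆ z : ℝ, |deriv η₁ z - deriv η₂ z|) * (A * B) := by
      apply mul_le_mul_of_nonneg_left
      · exact mul_le_mul hAa hBa (le_of_lt ha₂) (le_of_lt hApos)
      · positivity
end

section
/- The composition map Comp¹ : 𝒱₁(ℝ) × 𝒟(ℝ) → 𝒱₁(ℝ), (φ, η) ↦ φ ∘ η, is continuous: for every φ₁ ∈ 𝒱₁(ℝ), η₁ ∈ 𝒟(ℝ), and ε > 0, there exists δ > 0 such that for all φ₂ ∈ 𝒱₁(ℝ) and η₂ ∈ 𝒟(ℝ) with ‖φ₁ − φ₂‖_{1,1} < δ and ‖η₁ − η₂‖_{1,1} < δ, one has ‖φ₁ ∘ η₁ − φ₂ ∘ η₂‖_{1,1} < ε. -/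
open Filter MeasureTheory

/-- `u` belongs to `𝒱₁(ℝ)` with derivative bound `M`. -/
def InV1 (u : ℝ → ℝ) (M : ℝ) : Prop :=
  ContDiff ℝ 1 u ∧ (∀ x : ℝ, |deriv u x| ≤ M) ∧
  Integrable (fun x : ℝ => (u x) ^ 2) ∧
  Integrable (fun x : ℝ => (deriv u x) ^ 2) ∧
  Tendsto (deriv u) (cocompact ℝ) (nhds 0)

open Set

lemma my_int_mono {F G : ℝ → ℝ} (hF : Continuous F) (hFn : ∀ x, 0 ≤ F x)
    (hFG : ∀ x, F x ≤ G x) (hG : Integrable G) :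
    Integrable F ∧ ∫ x, F x ≤ ∫ x, G x := by
  have hFi : Integrable F := by
    refine hG.mono' hF.aestronglyMeasurable (ae_of_all _ fun x => ?_)
    rw [Real.norm_eq_abs, abs_of_nonneg (hFn x)]; exact hFG x
  exact ⟨hFi, integral_mono hFi hG hFG⟩

lemma my_sq2 {p q : ℝ → ℝ} (hp : Continuous p) (hq : Continuous q)
    (hpi : Integrable (fun x => p x ^ 2)) (hqi : Integrable (fun x => q x ^ 2)) :
    Integrable (fun x => (p x + q x) ^ 2) ∧
      ∫ x, (p x + q x) ^ 2 ≤ (2 * ∫ x, p x ^ 2) + 2 * ∫ x, q x ^ 2 := by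
  have h := my_int_mono (F := fun x => (p x + q x) ^ 2)
    (G := fun x => 2 * p x ^ 2 + 2 * q x ^ 2)
    (by fun_prop) (fun x => sq_nonneg _)
    (fun x => by show (p x + q x) ^ 2 ≤ 2 * p x ^ 2 + 2 * q x ^ 2; nlinarith [sq_nonneg (p x - q x)])
    (((hpi.const_mul 2).add (hqi.const_mul 2)))
  have h2 : ∫ x, (p x + q x) ^ 2 ≤ ∫ x, (2 * p x ^ 2 + 2 * q x ^ 2) := h.2
  rw [integral_add (hpi.const_mul 2) (hqi.const_mul 2), integral_const_mul, integral_const_mul] at h2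
  exact ⟨h.1, h2⟩

lemma my_sq3 {p q r : ℝ → ℝ} (hp : Continuous p) (hq : Continuous q) (hr : Continuous r)
    (hpi : Integrable (fun x => p x ^ 2)) (hqi : Integrable (fun x => q x ^ 2))
    (hri : Integrable (fun x => r x ^ 2)) :
    Integrable (fun x => (p x + q x + r x) ^ 2) ∧
      ∫ x, (p x + q x + r x) ^ 2 ≤
        (3 * ∫ x, p x ^ 2) + ((3 * ∫ x, q x ^ 2) + 3 * ∫ x, r x ^ 2) := by
  have h := my_int_mono (F := fun x => (p x + q x + r x) ^ 2)
    (G := fun x => 3 * p x ^ 2 + (3 * q x ^ 2 + 3 * r x ^ 2))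
    (by fun_prop) (fun x => sq_nonneg _)
    (fun x => by
      show (p x + q x + r x) ^ 2 ≤ 3 * p x ^ 2 + (3 * q x ^ 2 + 3 * r x ^ 2)
      nlinarith [sq_nonneg (p x - q x), sq_nonneg (p x - r x), sq_nonneg (q x - r x)])
    ((hpi.const_mul 3).add ((hqi.const_mul 3).add (hri.const_mul 3)))
  have h2 : ∫ x, (p x + q x + r x) ^ 2 ≤
      ∫ x, (3 * p x ^ 2 + (3 * q x ^ 2 + 3 * r x ^ 2)) := h.2
  have hqr : Integrable (fun x : ℝ => 3 * q x ^ 2 + 3 * r x ^ 2) :=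
    (hqi.const_mul 3).add (hri.const_mul 3)
  rw [integral_add (hpi.const_mul 3) hqr,
    integral_add (hqi.const_mul 3) (hri.const_mul 3), integral_const_mul, integral_const_mul,
    integral_const_mul] at h2
  exact ⟨h.1, h2⟩

lemma my_surj {η : ℝ → ℝ} {a : ℝ} (ha : 0 < a) (hc : ContDiff ℝ 1 η)
    (hd : ∀ x, a ≤ deriv η x) : Function.Surjective η := by
  have hdiff : Differentiable ℝ η := hc.differentiable one_ne_zero
  have hmono : Monotone (fun x => η x - a * x) := by
    apply monotone_of_deriv_nonneg (by fun_prop)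
    intro x
    have Hd : HasDerivAt (fun y => η y - a * y) (deriv η x - a) x :=
      (hdiff x).hasDerivAt.sub (by simpa using (hasDerivAt_id x).const_mul a)
    rw [Hd.deriv]; linarith [hd x]
  have h1 : ∀ x ≥ (0:ℝ), η 0 + a * x ≤ η x := by
    intro x hx
    have := hmono hx; simp only [mul_zero, sub_zero] at this; linarith
  have h2 : ∀ x ≤ (0:ℝ), η x ≤ η 0 + a * x := by
    intro x hx
    have := hmono hx; simp only [mul_zero, sub_zero] at this; linarith
  have htop : Tendsto η atTop atTop := by
    apply tendsto_atTop_mono' atTop (eventually_atTop.2 ⟨0, h1⟩)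
    exact tendsto_atTop_add_const_left _ _ (tendsto_id.const_mul_atTop ha)
  have hbot : Tendsto η atBot atBot := by
    apply tendsto_atBot_mono' atBot (eventually_atBot.2 ⟨0, h2⟩)
    exact tendsto_atBot_add_const_left _ _ (tendsto_id.const_mul_atBot ha)
  exact hc.continuous.surjective htop hbot

lemma my_cov {η : ℝ → ℝ} {a b : ℝ} (ha : 0 < a) (hc : ContDiff ℝ 1 η)
    (hd : ∀ x, a ≤ deriv η x ∧ deriv η x ≤ b) {f : ℝ → ℝ} (hf : Continuous f)
    (hfi : Integrable (fun x => f x ^ 2)) :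
    Integrable (fun x => f (η x) ^ 2) ∧ ∫ x, f (η x) ^ 2 ≤ (1 / a) * ∫ x, f x ^ 2 := by
  have hdiff : Differentiable ℝ η := hc.differentiable one_ne_zero
  have hder : ∀ x ∈ (univ : Set ℝ), HasDerivWithinAt η (deriv η x) univ x :=
    fun x _ => (hdiff x).hasDerivAt.hasDerivWithinAt
  have hinj : InjOn η univ :=
    ((strictMono_of_deriv_pos fun x => lt_of_lt_of_le ha (hd x).1).injective).injOn
  have himg : η '' univ = univ := by
    rw [image_univ, (my_surj ha hc (fun x => (hd x).1)).range_eq]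
  have hG : Integrable (fun x => |deriv η x| * f (η x) ^ 2) := by
    have := (integrableOn_image_iff_integrableOn_abs_deriv_smul MeasurableSet.univ hder hinj
      (fun x => f x ^ 2)).1 (by rw [himg]; exact hfi.integrableOn)
    simp only [smul_eq_mul] at this
    rwa [integrableOn_univ] at this
  have key : ∀ x, a * f (η x) ^ 2 ≤ |deriv η x| * f (η x) ^ 2 := by
    intro x
    have : a ≤ |deriv η x| := le_trans (hd x).1 (le_abs_self _)
    exact mul_le_mul_of_nonneg_right this (sq_nonneg _)
  have hcomp : Integrable (fun x => f (η x) ^ 2) := by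
    refine (hG.const_mul (1 / a)).mono'
      (((hf.comp hc.continuous).pow 2).aestronglyMeasurable) (ae_of_all _ fun x => ?_)
    rw [Real.norm_eq_abs, abs_of_nonneg (sq_nonneg _)]
    rw [div_mul_eq_mul_div, one_mul, le_div_iff₀ ha, mul_comm]
    exact key x
  refine ⟨hcomp, ?_⟩
  have heq : ∫ x, f x ^ 2 = ∫ x, |deriv η x| * f (η x) ^ 2 := by
    have := integral_image_eq_integral_abs_deriv_smul MeasurableSet.univ hder hinj
      (fun x => f x ^ 2)
    rw [himg] at this
    simpa [smul_eq_mul] using this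
  have hmono : a * ∫ x, f (η x) ^ 2 ≤ ∫ x, f x ^ 2 := by
    rw [heq, ← integral_const_mul]
    exact integral_mono (hcomp.const_mul a) hG key
  rw [div_mul_eq_mul_div, one_mul, le_div_iff₀ ha, mul_comm]
  exact hmono


lemma my_expand {η : ℝ → ℝ} {a : ℝ} (hdiff : Differentiable ℝ η)
    (hd : ∀ x, a ≤ deriv η x) : ∀ x y : ℝ, a * |x - y| ≤ |η x - η y| := by
  have hmono : Monotone (fun x => η x - a * x) := by
    apply monotone_of_deriv_nonneg (by fun_prop)
    intro x
    have Hd : HasDerivAt (fun y => η y - a * y) (deriv η x - a) x :=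
      (hdiff x).hasDerivAt.sub (by simpa using (hasDerivAt_id x).const_mul a)
    rw [Hd.deriv]; linarith [hd x]
  have key : ∀ x y : ℝ, y ≤ x → a * (x - y) ≤ η x - η y := by
    intro x y hxy
    have := hmono hxy
    simp only at this; nlinarith
  intro x y
  rcases le_total y x with h | h
  · rw [abs_of_nonneg (by linarith : (0:ℝ) ≤ x - y)]
    exact le_trans (key x y h) (le_abs_self _)
  · rw [abs_of_nonpos (by linarith : x - y ≤ 0)]
    have := key y x h
    rw [abs_sub_comm]
    refine le_trans (by linarith) (le_abs_self (η y - η x))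

lemma my_int_vanish {F : ℝ → ℝ} {s : Set ℝ} {c V : ℝ} (hF : Continuous F) (hFn : ∀ x, 0 ≤ F x)
    (hc : 0 ≤ c) (hV0 : 0 ≤ V) (hs : MeasurableSet s) (hV : volume s ≤ ENNReal.ofReal V)
    (hFc : ∀ x, F x ≤ c) (h0 : ∀ x ∉ s, F x = 0) :
    Integrable F ∧ ∫ x, F x ≤ c * V := by
  have hind : Integrable (s.indicator fun _ => c) := by
    rw [integrable_indicator_iff hs]
    exact integrableOn_const (lt_of_le_of_lt hV ENNReal.ofReal_lt_top).ne
  have hle : ∀ x, F x ≤ s.indicator (fun _ => c) x := by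
    intro x
    by_cases hx : x ∈ s
    · simp [indicator_of_mem hx]; exact hFc x
    · simp [indicator_of_notMem hx, h0 x hx]
  have h := my_int_mono hF hFn hle hind
  refine ⟨h.1, h.2.trans ?_⟩
  rw [integral_indicator hs, setIntegral_const, smul_eq_mul, mul_comm]
  exact mul_le_mul_of_nonneg_left (ENNReal.toReal_le_of_le_ofReal hV0 hV) hc

lemma my_tail {f : ℝ → ℝ} (hfi : Integrable (fun x => f x ^ 2)) {ε₁ : ℝ} (hε : 0 < ε₁) :
    ∃ R : ℝ, 1 ≤ R ∧ (∫ x, f x ^ 2) - ∫ x in Ioc (-R) R, f x ^ 2 ≤ ε₁ := by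
  have ht : Tendsto (fun R : ℝ => ∫ x in (-R)..R, f x ^ 2) atTop
      (nhds (∫ x, f x ^ 2)) :=
    intervalIntegral_tendsto_integral hfi tendsto_neg_atTop_atBot tendsto_id
  have h2 : ∀ᶠ R : ℝ in atTop, (∫ x, f x ^ 2) - ε₁ < ∫ x in (-R)..R, f x ^ 2 :=
    ht.eventually_const_lt (by linarith)
  obtain ⟨R, hR1, hR2⟩ := (h2.and (eventually_ge_atTop 1)).exists
  refine ⟨R, hR2, ?_⟩
  rw [intervalIntegral.integral_of_le (by linarith : -R ≤ R)] at hR1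
  linarith

lemma my_bounded {u : ℝ → ℝ} {M : ℝ} (hM : 0 < M) (hdiff : Differentiable ℝ u)
    (hb : ∀ x, |deriv u x| ≤ M) (hint : Integrable (fun x => u x ^ 2)) :
    ∀ x, |u x| ≤ max 1 (4 * M * ∫ t, u t ^ 2) := by
  intro x₀
  by_contra hcon
  push_neg at hcon
  set c := |u x₀| with hc
  set K := ∫ t, u t ^ 2 with hK
  have hc1 : 1 < c := lt_of_le_of_lt (le_max_left _ _) hcon
  have hcK : 4 * M * K < c := lt_of_le_of_lt (le_max_right _ _) hcon
  set r := c / (2 * M) with hr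
  have hrpos : 0 < r := div_pos (by linarith) (by linarith)
  have hlow : ∀ x ∈ Icc (x₀ - r) (x₀ + r), (c / 2) ^ 2 ≤ u x ^ 2 := by
    intro x hx
    have hdist : |x - x₀| ≤ r := abs_le.2 ⟨by linarith [hx.1], by linarith [hx.2]⟩
    have hlip : |u x - u x₀| ≤ M * |x - x₀| := by
      have := Convex.norm_image_sub_le_of_norm_deriv_le (fun y _ => hdiff y)
        (fun y _ => hb y) convex_univ (mem_univ x₀) (mem_univ x)
      simpa [Real.norm_eq_abs] using this
    have h1 : |u x - u x₀| ≤ c / 2 := by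
      refine hlip.trans ?_
      have : M * |x - x₀| ≤ M * r := mul_le_mul_of_nonneg_left hdist (by linarith)
      have hMr : M * r = c / 2 := by
        rw [hr, mul_div_assoc', div_eq_div_iff (ne_of_gt (by linarith)) two_ne_zero]; ring
      linarith
    have h2 : c / 2 ≤ |u x| := by
      have := abs_sub_abs_le_abs_sub (u x₀) (u x)
      rw [abs_sub_comm] at h1
      linarith [le_abs_self (u x₀)]
    calc (c / 2) ^ 2 ≤ |u x| ^ 2 := by nlinarith
    _ = u x ^ 2 := sq_abs _
  have hvol : (volume (Icc (x₀ - r) (x₀ + r))).toReal = 2 * r := by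
    rw [Real.volume_Icc, ENNReal.toReal_ofReal (by linarith)]; ring
  have hIcc : (c / 2) ^ 2 * (2 * r) ≤ ∫ x in Icc (x₀ - r) (x₀ + r), u x ^ 2 := by
    have := setIntegral_ge_of_const_le measurableSet_Icc
      (by rw [Real.volume_Icc]; exact ENNReal.ofReal_ne_top) hlow hint.integrableOn
    rw [measureReal_def, hvol, smul_eq_mul, mul_comm] at this; exact this
  have hKK : ∫ x in Icc (x₀ - r) (x₀ + r), u x ^ 2 ≤ K :=
    setIntegral_le_integral hint (ae_of_all _ fun x => sq_nonneg _)
  have hrc : (c / 2) ^ 2 * (2 * r) = c ^ 3 / (4 * M) := by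
    rw [hr]; field_simp; ring
  rw [hrc] at hIcc
  rw [div_le_iff₀ (by linarith : (0:ℝ) < 4 * M)] at hIcc
  have h4 : c ^ 3 ≤ 4 * M * K := by nlinarith
  nlinarith

lemma my_extract {u : ℝ → ℝ} {δ : ℝ} (hB : BddAbove (range fun x => |u x|))
    (hB' : BddAbove (range fun x => |deriv u x|)) (h : norm11 u < δ) :
    (∀ x, |u x| < δ) ∧ (∀ x, |deriv u x| < δ) ∧
      (∫ x, u x ^ 2) < δ ^ 2 ∧ (∫ x, deriv u x ^ 2) < δ ^ 2 := by
  have hS1 : (0:ℝ) ≤ ⨆ x, |u x| := Real.iSup_nonneg fun x => abs_nonneg _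
  have hS2 : (0:ℝ) ≤ ⨆ x, |deriv u x| := Real.iSup_nonneg fun x => abs_nonneg _
  unfold norm11 at h
  have hI1 : 0 ≤ ∫ x, u x ^ 2 := integral_nonneg fun x => sq_nonneg _
  have hI2 : 0 ≤ ∫ x, deriv u x ^ 2 := integral_nonneg fun x => sq_nonneg _
  have hsq : (0:ℝ) ≤ Real.sqrt ((∫ x : ℝ, (u x) ^ 2) + ∫ x : ℝ, (deriv u x) ^ 2) :=
    Real.sqrt_nonneg _
  have hsqlt : Real.sqrt ((∫ x : ℝ, (u x) ^ 2) + ∫ x : ℝ, (deriv u x) ^ 2) < δ := by linarith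
  have hsum : (∫ x : ℝ, (u x) ^ 2) + (∫ x : ℝ, (deriv u x) ^ 2) < δ ^ 2 := by
    have hs := Real.sq_sqrt (add_nonneg hI1 hI2)
    nlinarith
  have hd1 : (⨆ x, |u x|) < δ := by linarith
  have hd2 : (⨆ x, |deriv u x|) < δ := by linarith
  exact ⟨fun x => lt_of_le_of_lt (le_ciSup hB x) hd1,
    fun x => lt_of_le_of_lt (le_ciSup hB' x) hd2, by linarith, by linarith⟩

lemma my_norm11_le {u : ℝ → ℝ} {t : ℝ} (ht : 0 ≤ t) (h1 : ∀ x, |u x| ≤ t)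
    (h2 : ∀ x, |deriv u x| ≤ t)
    (h3 : (∫ x, u x ^ 2) + (∫ x, deriv u x ^ 2) ≤ t ^ 2) : norm11 u ≤ 3 * t := by
  unfold norm11
  have s1 := Real.iSup_le h1 ht
  have s2 := Real.iSup_le h2 ht
  have s3 : Real.sqrt ((∫ x : ℝ, (u x) ^ 2) + ∫ x : ℝ, (deriv u x) ^ 2) ≤ t := by
    exact (Real.sqrt_le_sqrt h3).trans (le_of_eq (Real.sqrt_sq ht))
  linarith

lemma my_sq_sub {p q : ℝ → ℝ} (hp : Continuous p) (hq : Continuous q)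
    (hpi : Integrable (fun x => p x ^ 2)) (hqi : Integrable (fun x => q x ^ 2)) :
    Integrable (fun x => (p x - q x) ^ 2) := by
  have h := my_sq2 (q := fun x => -q x) hp hq.neg hpi (by simpa using hqi)
  have he : (fun x => (p x - q x) ^ 2) = fun x => (p x + -q x) ^ 2 := funext fun x => by ring
  rw [he]; exact h.1


lemma my_mulsq {X d b : ℝ} (hb : |d| ≤ b) : (X * d) ^ 2 ≤ b ^ 2 * X ^ 2 := by
  have h1 : d ^ 2 ≤ b ^ 2 := by nlinarith [sq_abs d, abs_nonneg d]
  nlinarith [mul_le_mul_of_nonneg_left h1 (sq_nonneg X)]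

lemma my_abs_sq {u v : ℝ} (h : |u| ≤ v) : u ^ 2 ≤ v ^ 2 := by
  have h2 := pow_le_pow_left₀ (abs_nonneg u) h 2
  rwa [sq_abs] at h2

set_option maxHeartbeats 1000000 in
lemma my_numeric {a₁ b₁ M₁ τ ε₁ ε₂ δ V : ℝ}
    (ha₁ : 0 < a₁) (hb₁ : 0 < b₁) (hM₁ : 0 < M₁) (hτ : 0 < τ) (hδ0 : 0 < δ)
    (hε₂0 : 0 < ε₂) (hε₁0 : 0 < ε₁) (hV : 0 ≤ V)
    (hδε₂ : δ ≤ ε₂) (hε₂1 : ε₂ ≤ 1)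
    (hd : ε₂ ≤ τ^2/(4*(2*M₁^2+4/a₁+1)))
    (he : ε₂ ≤ τ^2/(36*(b₁^2+1)*(M₁+1)^2*(V+1)))
    (hf : ε₂ ≤ τ^2/(4*(6*b₁^2/a₁+3*(M₁+1)^2+1)))
    (hε₁ : ε₁ ≤ a₁*τ^2/(144*(b₁^2+1))) :
    2*(M₁^2*δ^2) + 2*((1/(a₁/2))*δ^2)
      + (3*(b₁^2*(3*((M₁*δ+ε₂)^2*V) + (3*((1/a₁)*ε₁) + 3*((1/(a₁/2))*ε₁))))
        + (3*(b₁^2*((1/(a₁/2))*δ^2)) + 3*((M₁+1)^2*δ^2))) ≤ τ^2 := by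
  set A := 1/a₁ with hA
  have hA0 : 0 < A := by positivity
  have hAa : a₁ * A = 1 := by rw [hA, mul_one_div, div_self ha₁.ne']
  have h2A : 1/(a₁/2) = 2*A := by rw [hA]; field_simp
  have hδsq : δ^2 ≤ ε₂ := by nlinarith
  have hε₂sq : ε₂^2 ≤ ε₂ := by nlinarith
  rw [show (4:ℝ)/a₁ = 4*A from by rw [hA]; ring] at hd
  rw [show 6*b₁^2/a₁ = 6*b₁^2*A from by rw [hA]; ring] at hf
  have hd' : ε₂ * (4*(2*M₁^2+4*A+1)) ≤ τ^2 := (le_div_iff₀ (by positivity)).1 hd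
  have he' : ε₂ * (36*(b₁^2+1)*(M₁+1)^2*(V+1)) ≤ τ^2 := (le_div_iff₀ (by positivity)).1 he
  have hf' : ε₂ * (4*(6*b₁^2*A+3*(M₁+1)^2+1)) ≤ τ^2 := (le_div_iff₀ (by positivity)).1 hf
  have hε₁' : 144*(b₁^2+1)*A*ε₁ ≤ τ^2 := by
    rw [le_div_iff₀ (by positivity)] at hε₁
    have := mul_le_mul_of_nonneg_left hε₁ hA0.le
    nlinarith [this]
  have c1 : 2*M₁^2*δ^2 + 4*A*δ^2 ≤ τ^2/4 := by
    nlinarith [mul_nonneg (by positivity : (0:ℝ) ≤ 2*M₁^2) (sub_nonneg.2 hδsq),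
      mul_nonneg (by positivity : (0:ℝ) ≤ 4*A) (sub_nonneg.2 hδsq), hd', hε₂0.le]
  have c2 : 9*b₁^2*(M₁*δ+ε₂)^2*V ≤ τ^2/4 := by
    have e2 : M₁*δ+ε₂ ≤ (M₁+1)*ε₂ := by nlinarith [mul_nonneg hM₁.le (sub_nonneg.2 hδε₂)]
    have s1 : (M₁*δ+ε₂)^2 ≤ ((M₁+1)*ε₂)^2 :=
      pow_le_pow_left₀ (by positivity) e2 2
    have s3 : 9*b₁^2*(M₁*δ+ε₂)^2*V ≤ 9*b₁^2*((M₁+1)*ε₂)^2*V := by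
      have := mul_le_mul_of_nonneg_left s1 (by positivity : (0:ℝ) ≤ 9*b₁^2)
      exact mul_le_mul_of_nonneg_right this hV
    have s4 : 9*b₁^2*((M₁+1)*ε₂)^2*V ≤ 9*(b₁^2+1)*(M₁+1)^2*(V+1)*ε₂ := by
      nlinarith [mul_nonneg (mul_nonneg (by positivity : (0:ℝ) ≤ 9*(M₁+1)^2)
          (by positivity : (0:ℝ) ≤ b₁^2*V)) (sub_nonneg.2 hε₂sq),
        mul_nonneg (by positivity : (0:ℝ) ≤ 9*(M₁+1)^2*(b₁^2+V+1)) hε₂0.le]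
    nlinarith [s3, s4, he']
  have c3 : 27*b₁^2*A*ε₁ ≤ τ^2/4 := by
    nlinarith [hε₁', mul_nonneg hA0.le hε₁0.le]
  have c4 : 6*b₁^2*A*δ^2 + 3*(M₁+1)^2*δ^2 ≤ τ^2/4 := by
    nlinarith [mul_nonneg (by positivity : (0:ℝ) ≤ 6*b₁^2*A) (sub_nonneg.2 hδsq),
      mul_nonneg (by positivity : (0:ℝ) ≤ 3*(M₁+1)^2) (sub_nonneg.2 hδsq), hf', hε₂0.le]
  rw [h2A]
  nlinarith [c1, c2, c3, c4]

set_option maxHeartbeats 2000000 in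
/-- The composition map `Comp¹ : 𝒱₁(ℝ) × 𝒟(ℝ) → 𝒱₁(ℝ)`, `(φ, η) ↦ φ ∘ η`, is continuous. -/
theorem composition_continuous (φ₁ : ℝ → ℝ) (M₁ : ℝ) (hM₁ : 0 < M₁) (hφ₁ : InV1 φ₁ M₁)
    (η₁ : ℝ → ℝ) (a₁ b₁ : ℝ) (ha₁ : 0 < a₁) (hab₁ : a₁ < b₁) (hη₁ : InD η₁ a₁ b₁)
    (ε : ℝ) (hε : 0 < ε) :
    ∃ δ : ℝ, 0 < δ ∧
      ∀ (φ₂ : ℝ → ℝ) (M₂ : ℝ), 0 < M₂ → InV1 φ₂ M₂ →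
      ∀ (η₂ : ℝ → ℝ) (a₂ b₂ : ℝ), 0 < a₂ → a₂ < b₂ → InD η₂ a₂ b₂ →
        norm11 (fun x => φ₁ x - φ₂ x) < δ → norm11 (fun x => η₁ x - η₂ x) < δ →
        norm11 (fun x => φ₁ (η₁ x) - φ₂ (η₂ x)) < ε := by
  obtain ⟨hφ₁c, hφ₁b, hφ₁i, hφ₁di, hφ₁t⟩ := hφ₁
  obtain ⟨hη₁c, hη₁b, hη₁i, hη₁di, hη₁t⟩ := hη₁
  have hb₁ : 0 < b₁ := ha₁.trans hab₁
  have hφ₁diff : Differentiable ℝ φ₁ := hφ₁c.differentiable one_ne_zero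
  have hη₁diff : Differentiable ℝ η₁ := hη₁c.differentiable one_ne_zero
  have hfc : Continuous (deriv φ₁) := hφ₁c.continuous_deriv le_rfl
  have hd₁c : Continuous (deriv η₁) := hη₁c.continuous_deriv le_rfl
  have hfUC : UniformContinuous (deriv φ₁) :=
    hfc.uniformContinuous_of_tendsto_cocompact hφ₁t
  have hφ₁lip : ∀ x y : ℝ, |φ₁ x - φ₁ y| ≤ M₁ * |x - y| := by
    intro x y
    have := Convex.norm_image_sub_le_of_norm_deriv_le (fun z _ => hφ₁diff z)
      (fun z _ => by simpa [Real.norm_eq_abs] using hφ₁b z) convex_univ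
      (Set.mem_univ y) (Set.mem_univ x)
    simpa [Real.norm_eq_abs] using this
  set τ := ε / 4 with hτdef
  have hτ : 0 < τ := by positivity
  set ε₁ := min 1 (a₁ * τ ^ 2 / (144 * (b₁ ^ 2 + 1))) with hε₁def
  have hε₁0 : 0 < ε₁ := lt_min one_pos (by positivity)
  have hε₁le : ε₁ ≤ a₁ * τ ^ 2 / (144 * (b₁ ^ 2 + 1)) := min_le_right _ _
  obtain ⟨R, hR1, hRtail⟩ := my_tail hφ₁di hε₁0
  set V := (4 * R + 8) / a₁ with hVdef
  have hV0 : 0 ≤ V := div_nonneg (by linarith) ha₁.le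
  set ε₂ := min (min 1 (τ / (M₁ + 1))) (min (τ / (2 * (b₁ + M₁ + 1)))
    (min (τ ^ 2 / (4 * (2 * M₁ ^ 2 + 4 / a₁ + 1)))
      (min (τ ^ 2 / (36 * (b₁ ^ 2 + 1) * (M₁ + 1) ^ 2 * (V + 1)))
        (τ ^ 2 / (4 * (6 * b₁ ^ 2 / a₁ + 3 * (M₁ + 1) ^ 2 + 1)))))) with hε₂def
  have hden : (0:ℝ) < 36 * (b₁ ^ 2 + 1) * (M₁ + 1) ^ 2 * (V + 1) := by
    have : (0:ℝ) < V + 1 := by linarith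
    positivity
  have hε₂0 : 0 < ε₂ :=
    lt_min (lt_min one_pos (by positivity)) (lt_min (by positivity)
      (lt_min (by positivity) (lt_min (div_pos (by positivity) hden) (by positivity))))
  have hε₂1 : ε₂ ≤ 1 := (min_le_left _ _).trans (min_le_left _ _)
  have hε₂b : ε₂ ≤ τ / (M₁ + 1) := (min_le_left _ _).trans (min_le_right _ _)
  have hε₂c : ε₂ ≤ τ / (2 * (b₁ + M₁ + 1)) := (min_le_right _ _).trans (min_le_left _ _)
  have hε₂d : ε₂ ≤ τ ^ 2 / (4 * (2 * M₁ ^ 2 + 4 / a₁ + 1)) :=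
    (min_le_right _ _).trans ((min_le_right _ _).trans (min_le_left _ _))
  have hε₂e : ε₂ ≤ τ ^ 2 / (36 * (b₁ ^ 2 + 1) * (M₁ + 1) ^ 2 * (V + 1)) :=
    (min_le_right _ _).trans ((min_le_right _ _).trans ((min_le_right _ _).trans
      (min_le_left _ _)))
  have hε₂f : ε₂ ≤ τ ^ 2 / (4 * (6 * b₁ ^ 2 / a₁ + 3 * (M₁ + 1) ^ 2 + 1)) :=
    (min_le_right _ _).trans ((min_le_right _ _).trans ((min_le_right _ _).trans
      (min_le_right _ _)))
  obtain ⟨du, hdu0, hduP⟩ := Metric.uniformContinuous_iff.1 hfUC ε₂ hε₂0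
  set δ := min du (min 1 (min (a₁ / 2) ε₂)) with hδdef
  have hδ0 : 0 < δ :=
    lt_min hdu0 (lt_min one_pos (lt_min (by positivity) hε₂0))
  have hδdu : δ ≤ du := min_le_left _ _
  have hδ1 : δ ≤ 1 := (min_le_right _ _).trans (min_le_left _ _)
  have hδa : δ ≤ a₁ / 2 := (min_le_right _ _).trans ((min_le_right _ _).trans (min_le_left _ _))
  have hδε₂ : δ ≤ ε₂ := (min_le_right _ _).trans ((min_le_right _ _).trans (min_le_right _ _))
  refine ⟨δ, hδ0, ?_⟩
  intro φ₂ M₂ hM₂0 hφ₂ η₂ a₂ b₂ ha₂ hab₂ hη₂ hψn hvn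
  obtain ⟨hφ₂c, hφ₂b, hφ₂i, hφ₂di, hφ₂t⟩ := hφ₂
  obtain ⟨hη₂c, hη₂b, hη₂i, hη₂di, hη₂t⟩ := hη₂
  have hφ₂diff : Differentiable ℝ φ₂ := hφ₂c.differentiable one_ne_zero
  have hη₂diff : Differentiable ℝ η₂ := hη₂c.differentiable one_ne_zero
  have hf₂c : Continuous (deriv φ₂) := hφ₂c.continuous_deriv le_rfl
  have hd₂c : Continuous (deriv η₂) := hη₂c.continuous_deriv le_rfl
  -- derivative rewrites
  have hψd : ∀ x, deriv (fun t => φ₁ t - φ₂ t) x = deriv φ₁ x - deriv φ₂ x :=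
    fun x => deriv_sub (hφ₁diff x) (hφ₂diff x)
  have hvd : ∀ x, deriv (fun t => η₁ t - η₂ t) x = deriv η₁ x - deriv η₂ x :=
    fun x => deriv_sub (hη₁diff x) (hη₂diff x)
  -- bounds for deriv differences
  have hψdb : ∀ x, |deriv (fun t => φ₁ t - φ₂ t) x| ≤ M₁ + M₂ := by
    intro x
    rw [hψd x, sub_eq_add_neg]
    have h := abs_add_le (deriv φ₁ x) (-(deriv φ₂ x))
    rw [abs_neg] at h
    exact h.trans (add_le_add (hφ₁b x) (hφ₂b x))
  have hd₁abs : ∀ x, |deriv η₁ x| ≤ b₁ :=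
    fun x => abs_le.mpr ⟨by linarith [(hη₁b x).1], (hη₁b x).2⟩
  have hd₂abs : ∀ x, |deriv η₂ x| ≤ b₂ :=
    fun x => abs_le.mpr ⟨by linarith [(hη₂b x).1], (hη₂b x).2⟩
  have hvdb : ∀ x, |deriv (fun t => η₁ t - η₂ t) x| ≤ b₁ + b₂ := by
    intro x
    rw [hvd x, sub_eq_add_neg]
    have h := abs_add_le (deriv η₁ x) (-(deriv η₂ x))
    rw [abs_neg] at h
    exact h.trans (add_le_add (hd₁abs x) (hd₂abs x))
  -- integrability of differences
  have hψi : Integrable (fun x => (φ₁ x - φ₂ x) ^ 2) :=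
    my_sq_sub hφ₁c.continuous hφ₂c.continuous hφ₁i hφ₂i
  have hψdi2 : Integrable (fun x => (deriv φ₁ x - deriv φ₂ x) ^ 2) :=
    my_sq_sub hfc hf₂c hφ₁di hφ₂di
  have hvi : Integrable (fun x => (η₁ x - η₂ x) ^ 2) := by
    have h := my_sq_sub (p := fun x => η₁ x - x) (q := fun x => η₂ x - x)
      (hη₁c.continuous.sub continuous_id) (hη₂c.continuous.sub continuous_id) hη₁i hη₂i
    have he : (fun x => (η₁ x - η₂ x) ^ 2) = fun x => ((η₁ x - x) - (η₂ x - x)) ^ 2 :=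
      funext fun x => by ring
    rw [he]; exact h
  have hvdi2 : Integrable (fun x => (deriv η₁ x - deriv η₂ x) ^ 2) := by
    have h := my_sq_sub (p := fun x => deriv η₁ x - 1) (q := fun x => deriv η₂ x - 1)
      (hd₁c.sub continuous_const) (hd₂c.sub continuous_const) hη₁di hη₂di
    have he : (fun x => (deriv η₁ x - deriv η₂ x) ^ 2)
        = fun x => ((deriv η₁ x - 1) - (deriv η₂ x - 1)) ^ 2 := funext fun x => by ring
    rw [he]; exact h
  -- bddAbove and extraction
  have hψB : BddAbove (Set.range fun x => |(fun t => φ₁ t - φ₂ t) x|) := by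
    refine ⟨max 1 (4 * (M₁ + M₂) * ∫ t, (φ₁ t - φ₂ t) ^ 2), ?_⟩
    rintro y ⟨x, rfl⟩
    exact my_bounded (by linarith) (hφ₁diff.sub hφ₂diff) hψdb hψi x
  have hψB' : BddAbove (Set.range fun x => |deriv (fun t => φ₁ t - φ₂ t) x|) :=
    ⟨M₁ + M₂, by rintro y ⟨x, rfl⟩; exact hψdb x⟩
  have hvB : BddAbove (Set.range fun x => |(fun t => η₁ t - η₂ t) x|) := by
    refine ⟨max 1 (4 * (b₁ + b₂) * ∫ t, (η₁ t - η₂ t) ^ 2), ?_⟩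
    rintro y ⟨x, rfl⟩
    exact my_bounded (by linarith [ha₂.trans hab₂]) (hη₁diff.sub hη₂diff) hvdb hvi x
  have hvB' : BddAbove (Set.range fun x => |deriv (fun t => η₁ t - η₂ t) x|) :=
    ⟨b₁ + b₂, by rintro y ⟨x, rfl⟩; exact hvdb x⟩
  obtain ⟨eψ0, eψ1, eψ2, eψ3⟩ := my_extract hψB hψB' hψn
  obtain ⟨ev0, ev1, ev2, ev3⟩ := my_extract hvB hvB' hvn
  have eψ0' : ∀ x, |φ₁ x - φ₂ x| < δ := eψ0
  have eψ1' : ∀ x, |deriv φ₁ x - deriv φ₂ x| < δ := fun x => by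
    have h := eψ1 x; rwa [hψd x] at h
  have eψ2' : ∫ x, (φ₁ x - φ₂ x) ^ 2 < δ ^ 2 := eψ2
  have eψ3' : ∫ x, (deriv φ₁ x - deriv φ₂ x) ^ 2 < δ ^ 2 := by
    have heq : (fun x => deriv (fun t => φ₁ t - φ₂ t) x ^ 2)
        = fun x => (deriv φ₁ x - deriv φ₂ x) ^ 2 := funext fun x => by rw [hψd x]
    have h := eψ3; rwa [heq] at h
  have ev0' : ∀ x, |η₁ x - η₂ x| < δ := ev0
  have ev1' : ∀ x, |deriv η₁ x - deriv η₂ x| < δ := fun x => by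
    have h := ev1 x; rwa [hvd x] at h
  have ev2' : ∫ x, (η₁ x - η₂ x) ^ 2 < δ ^ 2 := ev2
  have ev3' : ∫ x, (deriv η₁ x - deriv η₂ x) ^ 2 < δ ^ 2 := by
    have heq : (fun x => deriv (fun t => η₁ t - η₂ t) x ^ 2)
        = fun x => (deriv η₁ x - deriv η₂ x) ^ 2 := funext fun x => by rw [hvd x]
    have h := ev3; rwa [heq] at h
  -- derived pointwise bounds
  have hd₂pair : ∀ x, a₁ / 2 ≤ deriv η₂ x ∧ deriv η₂ x ≤ b₁ + 1 := by
    intro x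
    have h := abs_lt.1 (ev1' x)
    constructor
    · linarith [(hη₁b x).1]
    · linarith [(hη₁b x).2]
  have hf₂b1 : ∀ x, |deriv φ₂ x| ≤ M₁ + 1 := by
    intro x
    have h1 := abs_sub_abs_le_abs_sub (deriv φ₂ x) (deriv φ₁ x)
    rw [abs_sub_comm] at h1
    have h2 := eψ1' x
    linarith [hφ₁b x]
  have hUC : ∀ x y : ℝ, |x - y| < δ → |deriv φ₁ x - deriv φ₁ y| < ε₂ := by
    intro x y h
    have hd : dist x y < du := lt_of_lt_of_le (by rwa [Real.dist_eq]) hδdu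
    have := hduP hd
    rwa [Real.dist_eq] at this
  -- change of variables instances
  have ha₁2 : (0:ℝ) < a₁ / 2 := by positivity
  have covψ := my_cov ha₁2 hη₂c hd₂pair (hφ₁c.continuous.sub hφ₂c.continuous) hψi
  have covψi : Integrable (fun x => (φ₁ (η₂ x) - φ₂ (η₂ x)) ^ 2) := covψ.1
  have covψle : ∫ x, (φ₁ (η₂ x) - φ₂ (η₂ x)) ^ 2
      ≤ (1 / (a₁ / 2)) * ∫ x, (φ₁ x - φ₂ x) ^ 2 := covψ.2
  have covdψ := my_cov ha₁2 hη₂c hd₂pair (hfc.sub hf₂c) hψdi2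
  have covdψi : Integrable (fun x => (deriv φ₁ (η₂ x) - deriv φ₂ (η₂ x)) ^ 2) := covdψ.1
  have covdψle : ∫ x, (deriv φ₁ (η₂ x) - deriv φ₂ (η₂ x)) ^ 2
      ≤ (1 / (a₁ / 2)) * ∫ x, (deriv φ₁ x - deriv φ₂ x) ^ 2 := covdψ.2
  -- cutoff function
  set χ : ℝ → ℝ := fun x => max 0 (min 1 (R + 1 - |x|)) with hχdef
  have hχc : Continuous χ :=
    continuous_const.max (continuous_const.min (continuous_const.sub continuous_abs))
  have hχ0le : ∀ x, 0 ≤ χ x := fun x => le_max_left 0 _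
  have hχle1 : ∀ x, χ x ≤ 1 := fun x => max_le zero_le_one (min_le_left _ _)
  have hχ1 : ∀ x, |x| ≤ R → χ x = 1 := by
    intro x hx
    have h1 : (1:ℝ) ≤ R + 1 - |x| := by linarith
    simp only [hχdef]
    rw [min_eq_left h1, max_eq_right zero_le_one]
  have hχzero : ∀ x, R + 1 ≤ |x| → χ x = 0 := by
    intro x hx
    simp only [hχdef]
    rw [max_eq_left ((min_le_right _ _).trans (by linarith))]
  have hχlip : ∀ x y, |χ x - χ y| ≤ |x - y| := by
    intro x y
    simp only [hχdef]
    calc |max 0 (min 1 (R + 1 - |x|)) - max 0 (min 1 (R + 1 - |y|))|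
        = |max (min 1 (R + 1 - |x|)) 0 - max (min 1 (R + 1 - |y|)) 0| := by
          rw [max_comm (0:ℝ), max_comm (0:ℝ)]
      _ ≤ |min 1 (R + 1 - |x|) - min 1 (R + 1 - |y|)| := abs_max_sub_max_le_abs _ _ _
      _ ≤ max |1 - 1| |(R + 1 - |x|) - (R + 1 - |y|)| := abs_min_sub_min_le_max _ _ _ _
      _ ≤ |x - y| := by
          rw [sub_self, abs_zero]
          apply max_le (abs_nonneg _)
          rw [show (R + 1 - |x|) - (R + 1 - |y|) = |y| - |x| from by ring]
          rw [abs_sub_comm x y]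
          exact abs_abs_sub_abs_le_abs_sub y x
  -- g and h
  set g : ℝ → ℝ := fun x => deriv φ₁ x * χ x with hgdef
  set h : ℝ → ℝ := fun x => deriv φ₁ x * (1 - χ x) with hhdef
  have hgc : Continuous g := hfc.mul hχc
  have hhc : Continuous h := hfc.mul (continuous_const.sub hχc)
  have hfgh : ∀ x, deriv φ₁ x = g x + h x := fun x => by
    simp only [hgdef, hhdef]; ring
  have hg0 : ∀ x, R + 1 ≤ |x| → g x = 0 := fun x hx => by
    simp only [hgdef]; rw [hχzero x hx, mul_zero]
  have hgmod : ∀ x y : ℝ, |x - y| < δ → |g x - g y| ≤ M₁ * |x - y| + ε₂ := by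
    intro x y hxy
    have hfd := hUC x y hxy
    rw [show g x - g y = deriv φ₁ x * (χ x - χ y) + χ y * (deriv φ₁ x - deriv φ₁ y) from by
      simp only [hgdef]; ring]
    refine (abs_add_le _ _).trans ?_
    have t1 : |deriv φ₁ x * (χ x - χ y)| ≤ M₁ * |x - y| := by
      rw [abs_mul]
      exact mul_le_mul (hφ₁b x) (hχlip x y) (abs_nonneg _) hM₁.le
    have t2 : |χ y * (deriv φ₁ x - deriv φ₁ y)| ≤ 1 * ε₂ := by
      rw [abs_mul]
      refine mul_le_mul ?_ hfd.le (abs_nonneg _) zero_le_one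
      rw [abs_of_nonneg (hχ0le y)]; exact hχle1 y
    linarith
  -- tail bound for h
  have hind : Integrable ((Ioc (-R) R).indicator (fun t => deriv φ₁ t ^ 2)) :=
    (integrable_indicator_iff measurableSet_Ioc).2 hφ₁di.integrableOn
  have hGi : Integrable (fun x => deriv φ₁ x ^ 2
      - (Ioc (-R) R).indicator (fun t => deriv φ₁ t ^ 2) x) := hφ₁di.sub hind
  have hh2 : ∀ x, h x ^ 2 ≤ deriv φ₁ x ^ 2
      - (Ioc (-R) R).indicator (fun t => deriv φ₁ t ^ 2) x := by
    intro x
    by_cases hx : x ∈ Ioc (-R) R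
    · have hxR : |x| ≤ R := abs_le.2 ⟨by linarith [hx.1], hx.2⟩
      rw [indicator_of_mem hx]
      simp only [hhdef]
      rw [hχ1 x hxR]
      simp
    · rw [indicator_of_notMem hx, sub_zero]
      simp only [hhdef]
      have h1 := hχ0le x; have h2 := hχle1 x
      calc (deriv φ₁ x * (1 - χ x)) ^ 2 = deriv φ₁ x ^ 2 * (1 - χ x) ^ 2 := by ring
        _ ≤ deriv φ₁ x ^ 2 * 1 ^ 2 :=
            mul_le_mul_of_nonneg_left
              (my_abs_sq (abs_le.2 ⟨by linarith, by linarith⟩)) (sq_nonneg _)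
        _ = deriv φ₁ x ^ 2 := by ring
  have hhI := my_int_mono (hhc.pow 2) (fun x => sq_nonneg _) hh2 hGi
  have hh2le' : ∫ x, h x ^ 2 ≤ ε₁ := by
    refine hhI.2.trans ?_
    rw [integral_sub hφ₁di hind, integral_indicator measurableSet_Ioc]
    linarith [hRtail]
  have covh1 := my_cov ha₁ hη₁c hη₁b hhc hhI.1
  have covh2 := my_cov ha₁2 hη₂c hd₂pair hhc hhI.1
  have covh1le : ∫ x, h (η₁ x) ^ 2 ≤ (1 / a₁) * ε₁ :=
    covh1.2.trans (mul_le_mul_of_nonneg_left hh2le' (by positivity))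
  have covh2le : ∫ x, h (η₂ x) ^ 2 ≤ (1 / (a₁ / 2)) * ε₁ :=
    covh2.2.trans (mul_le_mul_of_nonneg_left hh2le' (by positivity))
  -- g² integrable
  have hg2 : ∀ x, g x ^ 2 ≤ deriv φ₁ x ^ 2 := by
    intro x
    simp only [hgdef]
    calc (deriv φ₁ x * χ x) ^ 2 = deriv φ₁ x ^ 2 * χ x ^ 2 := by ring
      _ ≤ deriv φ₁ x ^ 2 * 1 ^ 2 :=
          mul_le_mul_of_nonneg_left
            (my_abs_sq (abs_le.2 ⟨by linarith [hχ0le x], hχle1 x⟩)) (sq_nonneg _)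
      _ = deriv φ₁ x ^ 2 := by ring
  have hg2I := my_int_mono (hgc.pow 2) (fun x => sq_nonneg _) hg2 hφ₁di
  -- vanishing set bound for g∘η₁ - g∘η₂
  set s : Set ℝ := η₁ ⁻¹' (Icc (-(R + 2)) (R + 2)) with hsdef
  have hsm : MeasurableSet s := (isClosed_Icc.preimage hη₁c.continuous).measurableSet
  have hexp := my_expand hη₁diff (fun x => (hη₁b x).1)
  have hvol : volume s ≤ ENNReal.ofReal V := by
    rcases Set.eq_empty_or_nonempty s with hse | ⟨z, hz⟩
    · rw [hse]; simp
    · have hsub : s ⊆ Icc (z - (2 * R + 4) / a₁) (z + (2 * R + 4) / a₁) := by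
        intro x hx
        simp only [hsdef, mem_preimage, mem_Icc] at hx
        have hz' : η₁ z ∈ Icc (-(R + 2)) (R + 2) := hz
        rw [mem_Icc] at hz'
        have h1 : |η₁ x - η₁ z| ≤ 2 * R + 4 :=
          abs_le.2 ⟨by linarith [hx.1, hz'.2], by linarith [hx.2, hz'.1]⟩
        have h2 := hexp x z
        have h3 : |x - z| ≤ (2 * R + 4) / a₁ := by
          rw [le_div_iff₀ ha₁]
          linarith [h1, h2]
        rw [abs_le] at h3
        exact mem_Icc.2 ⟨by linarith [h3.1], by linarith [h3.2]⟩
      calc volume s ≤ volume (Icc (z - (2 * R + 4) / a₁) (z + (2 * R + 4) / a₁)) :=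
            measure_mono hsub
        _ = ENNReal.ofReal ((z + (2 * R + 4) / a₁) - (z - (2 * R + 4) / a₁)) := Real.volume_Icc
        _ ≤ ENNReal.ofReal V := by
            apply ENNReal.ofReal_le_ofReal
            apply le_of_eq
            rw [hVdef]
            field_simp
            ring
  have hw0 : ∀ x ∉ s, (g (η₁ x) - g (η₂ x)) ^ 2 = 0 := by
    intro x hx
    simp only [hsdef, mem_preimage, mem_Icc, not_and_or, not_le] at hx
    have h1 : R + 2 < |η₁ x| := by
      rcases hx with hx | hx
      · rw [lt_abs]; right; linarith
      · rw [lt_abs]; left; exact hx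
    have h3 := abs_sub_abs_le_abs_sub (η₁ x) (η₂ x)
    have h4 := ev0' x
    have h2 : R + 1 ≤ |η₂ x| := by linarith [hδ1]
    rw [hg0 _ (by linarith), hg0 _ h2]
    ring
  have hwb : ∀ x, (g (η₁ x) - g (η₂ x)) ^ 2 ≤ (M₁ * δ + ε₂) ^ 2 := by
    intro x
    have h1 := hgmod (η₁ x) (η₂ x) (ev0' x)
    have h2 : |g (η₁ x) - g (η₂ x)| ≤ M₁ * δ + ε₂ := by
      have := mul_le_mul_of_nonneg_left (ev0' x).le hM₁.le
      linarith
    exact my_abs_sq h2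
  have hwI := my_int_vanish
    (((hgc.comp hη₁c.continuous).sub (hgc.comp hη₂c.continuous)).pow 2)
    (fun x => sq_nonneg _) (by positivity) hV0 hsm hvol hwb hw0
  -- H bound
  have hr2 : Integrable (fun x => (-(h (η₂ x))) ^ 2) := by
    have e : (fun x => (-(h (η₂ x))) ^ 2) = fun x => h (η₂ x) ^ 2 :=
      funext fun x => neg_sq _
    rw [e]; exact covh2.1
  have hsq3 := my_sq3 ((hgc.comp hη₁c.continuous).sub (hgc.comp hη₂c.continuous))
    (hhc.comp hη₁c.continuous) ((hhc.comp hη₂c.continuous).neg) hwI.1 covh1.1 hr2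
  have HI : Integrable (fun x => (deriv φ₁ (η₁ x) - deriv φ₁ (η₂ x)) ^ 2) := by
    have e : (fun x => (deriv φ₁ (η₁ x) - deriv φ₁ (η₂ x)) ^ 2)
        = fun x => ((g (η₁ x) - g (η₂ x)) + h (η₁ x) + -(h (η₂ x))) ^ 2 :=
      funext fun x => by rw [hfgh (η₁ x), hfgh (η₂ x)]; ring
    rw [e]; exact hsq3.1
  have Hle : ∫ x, (deriv φ₁ (η₁ x) - deriv φ₁ (η₂ x)) ^ 2
      ≤ 3 * ((M₁ * δ + ε₂) ^ 2 * V) + (3 * ((1 / a₁) * ε₁) + 3 * ((1 / (a₁ / 2)) * ε₁)) := by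
    have e : (fun x => (deriv φ₁ (η₁ x) - deriv φ₁ (η₂ x)) ^ 2)
        = fun x => ((g (η₁ x) - g (η₂ x)) + h (η₁ x) + -(h (η₂ x))) ^ 2 :=
      funext fun x => by rw [hfgh (η₁ x), hfgh (η₂ x)]; ring
    have hs32 : ∫ x, ((g (η₁ x) - g (η₂ x)) + h (η₁ x) + -(h (η₂ x))) ^ 2
        ≤ (3 * ∫ x, (g (η₁ x) - g (η₂ x)) ^ 2)
          + ((3 * ∫ x, h (η₁ x) ^ 2) + 3 * ∫ x, (-(h (η₂ x))) ^ 2) := hsq3.2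
    have eneg : ∫ x, (-(h (η₂ x))) ^ 2 = ∫ x, h (η₂ x) ^ 2 := by
      congr 1; exact funext fun x => neg_sq _
    rw [eneg] at hs32
    have t1 : ∫ x, (g (η₁ x) - g (η₂ x)) ^ 2 ≤ (M₁ * δ + ε₂) ^ 2 * V := hwI.2
    rw [e]
    refine hs32.trans ?_
    linarith [covh1le, covh2le]
  -- A, B, C
  have hAc : Continuous (fun x => (deriv φ₁ (η₁ x) - deriv φ₁ (η₂ x)) * deriv η₁ x) :=
    ((hfc.comp hη₁c.continuous).sub (hfc.comp hη₂c.continuous)).mul hd₁c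
  have hBc : Continuous (fun x => (deriv φ₁ (η₂ x) - deriv φ₂ (η₂ x)) * deriv η₁ x) :=
    ((hfc.comp hη₂c.continuous).sub (hf₂c.comp hη₂c.continuous)).mul hd₁c
  have hCc : Continuous (fun x => deriv φ₂ (η₂ x) * (deriv η₁ x - deriv η₂ x)) :=
    (hf₂c.comp hη₂c.continuous).mul (hd₁c.sub hd₂c)
  have hA2 := my_int_mono (hAc.pow 2) (fun x => sq_nonneg _)
    (fun x => my_mulsq (hd₁abs x)) (HI.const_mul _)
  have bA : ∫ x, ((deriv φ₁ (η₁ x) - deriv φ₁ (η₂ x)) * deriv η₁ x) ^ 2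
      ≤ b₁ ^ 2 * (3 * ((M₁ * δ + ε₂) ^ 2 * V)
        + (3 * ((1 / a₁) * ε₁) + 3 * ((1 / (a₁ / 2)) * ε₁))) := by
    refine hA2.2.trans ?_
    rw [integral_const_mul]
    exact mul_le_mul_of_nonneg_left Hle (sq_nonneg _)
  have hB2 := my_int_mono (hBc.pow 2) (fun x => sq_nonneg _)
    (fun x => my_mulsq (hd₁abs x)) (covdψi.const_mul (b₁ ^ 2))
  have bB : ∫ x, ((deriv φ₁ (η₂ x) - deriv φ₂ (η₂ x)) * deriv η₁ x) ^ 2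
      ≤ b₁ ^ 2 * ((1 / (a₁ / 2)) * δ ^ 2) := by
    refine hB2.2.trans ?_
    rw [integral_const_mul]
    refine mul_le_mul_of_nonneg_left ?_ (sq_nonneg _)
    exact covdψle.trans (mul_le_mul_of_nonneg_left eψ3'.le (by positivity))
  have hC2 := my_int_mono (hCc.pow 2) (fun x => sq_nonneg _)
    (fun x => by
      show (deriv φ₂ (η₂ x) * (deriv η₁ x - deriv η₂ x)) ^ 2 ≤ _
      rw [show deriv φ₂ (η₂ x) * (deriv η₁ x - deriv η₂ x)
        = (deriv η₁ x - deriv η₂ x) * deriv φ₂ (η₂ x) from by ring]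
      exact my_mulsq (hf₂b1 (η₂ x)))
    (hvdi2.const_mul ((M₁ + 1) ^ 2))
  have bC : ∫ x, (deriv φ₂ (η₂ x) * (deriv η₁ x - deriv η₂ x)) ^ 2
      ≤ (M₁ + 1) ^ 2 * δ ^ 2 := by
    refine hC2.2.trans ?_
    rw [integral_const_mul]
    exact mul_le_mul_of_nonneg_left ev3'.le (by positivity)
  -- derivative of the composition difference
  have hder : ∀ x, deriv (fun t => φ₁ (η₁ t) - φ₂ (η₂ t)) x
      = deriv φ₁ (η₁ x) * deriv η₁ x - deriv φ₂ (η₂ x) * deriv η₂ x := by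
    intro x
    have h1 : HasDerivAt (fun t => φ₁ (η₁ t)) (deriv φ₁ (η₁ x) * deriv η₁ x) x :=
      (hφ₁diff (η₁ x)).hasDerivAt.comp x (hη₁diff x).hasDerivAt
    have h2 : HasDerivAt (fun t => φ₂ (η₂ t)) (deriv φ₂ (η₂ x) * deriv η₂ x) x :=
      (hφ₂diff (η₂ x)).hasDerivAt.comp x (hη₂diff x).hasDerivAt
    exact (h1.sub h2).deriv
  -- I₁ bound
  have hsqABC := my_sq3 hAc hBc hCc hA2.1 hB2.1 hC2.1
  have hI₁ : ∫ x, deriv (fun t => φ₁ (η₁ t) - φ₂ (η₂ t)) x ^ 2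
      ≤ 3 * (b₁ ^ 2 * (3 * ((M₁ * δ + ε₂) ^ 2 * V)
          + (3 * ((1 / a₁) * ε₁) + 3 * ((1 / (a₁ / 2)) * ε₁))))
        + (3 * (b₁ ^ 2 * ((1 / (a₁ / 2)) * δ ^ 2)) + 3 * ((M₁ + 1) ^ 2 * δ ^ 2)) := by
    have e : (fun x => deriv (fun t => φ₁ (η₁ t) - φ₂ (η₂ t)) x ^ 2)
        = fun x => ((deriv φ₁ (η₁ x) - deriv φ₁ (η₂ x)) * deriv η₁ x
          + (deriv φ₁ (η₂ x) - deriv φ₂ (η₂ x)) * deriv η₁ x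
          + deriv φ₂ (η₂ x) * (deriv η₁ x - deriv η₂ x)) ^ 2 :=
      funext fun x => by rw [hder x]; ring_nf
    have hsABC : ∫ x, ((deriv φ₁ (η₁ x) - deriv φ₁ (η₂ x)) * deriv η₁ x
          + (deriv φ₁ (η₂ x) - deriv φ₂ (η₂ x)) * deriv η₁ x
          + deriv φ₂ (η₂ x) * (deriv η₁ x - deriv η₂ x)) ^ 2
        ≤ (3 * ∫ x, ((deriv φ₁ (η₁ x) - deriv φ₁ (η₂ x)) * deriv η₁ x) ^ 2)
          + ((3 * ∫ x, ((deriv φ₁ (η₂ x) - deriv φ₂ (η₂ x)) * deriv η₁ x) ^ 2)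
            + 3 * ∫ x, (deriv φ₂ (η₂ x) * (deriv η₁ x - deriv η₂ x)) ^ 2) := hsqABC.2
    rw [e]
    refine hsABC.trans ?_
    linarith [bA, bB, bC]
  -- I₀ bound
  have hp2 := my_int_mono (F := fun x => (φ₁ (η₁ x) - φ₁ (η₂ x)) ^ 2)
    (G := fun x => M₁ ^ 2 * (η₁ x - η₂ x) ^ 2)
    (((hφ₁c.continuous.comp hη₁c.continuous).sub
      (hφ₁c.continuous.comp hη₂c.continuous)).pow 2)
    (fun x => sq_nonneg _)
    (fun x => by
      have h1 := my_abs_sq (hφ₁lip (η₁ x) (η₂ x))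
      rwa [mul_pow, sq_abs] at h1)
    (hvi.const_mul _)
  have bp : ∫ x, (φ₁ (η₁ x) - φ₁ (η₂ x)) ^ 2 ≤ M₁ ^ 2 * δ ^ 2 := by
    refine hp2.2.trans ?_
    rw [integral_const_mul]
    exact mul_le_mul_of_nonneg_left ev2'.le (by positivity)
  have hsqpq := my_sq2
    ((hφ₁c.continuous.comp hη₁c.continuous).sub (hφ₁c.continuous.comp hη₂c.continuous))
    ((hφ₁c.continuous.comp hη₂c.continuous).sub (hφ₂c.continuous.comp hη₂c.continuous))
    hp2.1 covψi
  have hI₀ : ∫ x, (φ₁ (η₁ x) - φ₂ (η₂ x)) ^ 2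
      ≤ 2 * (M₁ ^ 2 * δ ^ 2) + 2 * ((1 / (a₁ / 2)) * δ ^ 2) := by
    have e : (fun x => (φ₁ (η₁ x) - φ₂ (η₂ x)) ^ 2)
        = fun x => ((φ₁ (η₁ x) - φ₁ (η₂ x)) + (φ₁ (η₂ x) - φ₂ (η₂ x))) ^ 2 :=
      funext fun x => by ring
    have hspq : ∫ x, ((φ₁ (η₁ x) - φ₁ (η₂ x)) + (φ₁ (η₂ x) - φ₂ (η₂ x))) ^ 2
        ≤ (2 * ∫ x, (φ₁ (η₁ x) - φ₁ (η₂ x)) ^ 2)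
          + 2 * ∫ x, (φ₁ (η₂ x) - φ₂ (η₂ x)) ^ 2 := hsqpq.2
    rw [e]
    refine hspq.trans ?_
    have hq : ∫ x, (φ₁ (η₂ x) - φ₂ (η₂ x)) ^ 2 ≤ (1 / (a₁ / 2)) * δ ^ 2 :=
      covψle.trans (mul_le_mul_of_nonneg_left eψ2'.le (by positivity))
    linarith [bp]
  -- sup bounds
  have hτb : ε₂ * (M₁ + 1) ≤ τ := (le_div_iff₀ (by linarith)).1 hε₂b
  have hsup0 : ∀ x, |φ₁ (η₁ x) - φ₂ (η₂ x)| ≤ τ := by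
    intro x
    have h1 : |φ₁ (η₁ x) - φ₁ (η₂ x)| ≤ M₁ * |η₁ x - η₂ x| := hφ₁lip _ _
    have h2 := eψ0' (η₂ x)
    have h3 := mul_le_mul_of_nonneg_left (ev0' x).le hM₁.le
    have habs : |φ₁ (η₁ x) - φ₂ (η₂ x)|
        ≤ |φ₁ (η₁ x) - φ₁ (η₂ x)| + |φ₁ (η₂ x) - φ₂ (η₂ x)| := by
      rw [show φ₁ (η₁ x) - φ₂ (η₂ x)
        = (φ₁ (η₁ x) - φ₁ (η₂ x)) + (φ₁ (η₂ x) - φ₂ (η₂ x)) from by ring]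
      exact abs_add_le _ _
    have h4 := mul_le_mul_of_nonneg_left hδε₂ hM₁.le
    linarith [habs, h1, h2, h3, h4, hτb, hδε₂]
  have hτc : ε₂ * (2 * (b₁ + M₁ + 1)) ≤ τ := (le_div_iff₀ (by linarith)).1 hε₂c
  have hsup1 : ∀ x, |deriv (fun t => φ₁ (η₁ t) - φ₂ (η₂ t)) x| ≤ τ := by
    intro x
    rw [hder x, show deriv φ₁ (η₁ x) * deriv η₁ x - deriv φ₂ (η₂ x) * deriv η₂ x
      = (deriv φ₁ (η₁ x) - deriv φ₁ (η₂ x)) * deriv η₁ x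
        + ((deriv φ₁ (η₂ x) - deriv φ₂ (η₂ x)) * deriv η₁ x
          + deriv φ₂ (η₂ x) * (deriv η₁ x - deriv η₂ x)) from by ring]
    have t1 : |(deriv φ₁ (η₁ x) - deriv φ₁ (η₂ x)) * deriv η₁ x| ≤ ε₂ * b₁ := by
      rw [abs_mul]
      exact mul_le_mul (hUC _ _ (ev0' x)).le (hd₁abs x) (abs_nonneg _) hε₂0.le
    have t2 : |(deriv φ₁ (η₂ x) - deriv φ₂ (η₂ x)) * deriv η₁ x| ≤ δ * b₁ := by
      rw [abs_mul]
      exact mul_le_mul (eψ1' (η₂ x)).le (hd₁abs x) (abs_nonneg _) hδ0.le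
    have t3 : |deriv φ₂ (η₂ x) * (deriv η₁ x - deriv η₂ x)| ≤ (M₁ + 1) * δ := by
      rw [abs_mul]
      exact mul_le_mul (hf₂b1 _) (ev1' x).le (abs_nonneg _) (by linarith)
    have habs2 := (abs_add_le ((deriv φ₁ (η₁ x) - deriv φ₁ (η₂ x)) * deriv η₁ x)
      ((deriv φ₁ (η₂ x) - deriv φ₂ (η₂ x)) * deriv η₁ x
        + deriv φ₂ (η₂ x) * (deriv η₁ x - deriv η₂ x))).trans
      (add_le_add le_rfl (abs_add_le _ _))
    have h4 := mul_le_mul_of_nonneg_left hδε₂ hb₁.le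
    have h5 := mul_le_mul_of_nonneg_left hδε₂ (by linarith : (0:ℝ) ≤ M₁ + 1)
    linarith [habs2, t1, t2, t3, h4, h5, hτc,
      mul_nonneg hε₂0.le hM₁.le, hε₂0.le]
  -- final assembly
  have hIsum : (∫ x, (φ₁ (η₁ x) - φ₂ (η₂ x)) ^ 2)
      + (∫ x, deriv (fun t => φ₁ (η₁ t) - φ₂ (η₂ t)) x ^ 2) ≤ τ ^ 2 := by
    have hnum := my_numeric ha₁ hb₁ hM₁ hτ hδ0 hε₂0 hε₁0 hV0 hδε₂ hε₂1 hε₂d hε₂e hε₂f hε₁le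
    linarith [hI₀, hI₁]
  have hfin := my_norm11_le hτ.le hsup0 hsup1 hIsum
  calc norm11 (fun x => φ₁ (η₁ x) - φ₂ (η₂ x)) ≤ 3 * τ := hfin
    _ < ε := by rw [hτdef]; linarith
end

section
/- Let φ₁, φ₂ ∈ 𝒱₁(ℝ) with |φ₂'(x)| ≤ C₂ for all x, and let η₁, η₂ ∈ 𝒟(ℝ) with a₁ ≤ η₁'(x) for all x (a₁ > 0). Then √(∫_ℝ |φ₁(η₁(x)) − φ₂(η₂(x))|² dx) ≤ (1/√a₁) √(∫_ℝ |φ₁(y) − φ₂(y)|² dy) + C₂ √(∫_ℝ |η₁(x) − η₂(x)|² dx). -/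
open Filter MeasureTheory

/-- eLpNorm 2 as sqrt of integral of square, for real functions. -/
lemma eLpNorm_two_eq_sqrt {f : ℝ → ℝ} (hf : MemLp f 2 (volume : Measure ℝ)) :
    eLpNorm f 2 volume = ENNReal.ofReal (Real.sqrt (∫ x, f x ^ 2)) := by
  rw [hf.eLpNorm_eq_integral_rpow_norm two_ne_zero ENNReal.ofNat_ne_top]
  congr 1
  have h2 : (2 : ENNReal).toReal = (2 : ℝ) := by norm_num
  rw [h2]
  have : (∫ x, ‖f x‖ ^ (2:ℝ)) = ∫ x, f x ^ 2 := by
    congr 1; funext x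
    rw [show (2:ℝ) = ((2:ℕ):ℝ) from by norm_num, Real.rpow_natCast, Real.norm_eq_abs, sq_abs]
  rw [this, Real.sqrt_eq_rpow, one_div]

/-- Minkowski inequality for real square integrals. -/
lemma sqrt_integral_sq_add_le {f g : ℝ → ℝ} (hf : MemLp f 2 (volume : Measure ℝ))
    (hg : MemLp g 2 (volume : Measure ℝ)) :
    Real.sqrt (∫ x, (f x + g x) ^ 2) ≤
      Real.sqrt (∫ x, f x ^ 2) + Real.sqrt (∫ x, g x ^ 2) := by
  have h := eLpNorm_add_le hf.aestronglyMeasurable hg.aestronglyMeasurable one_le_two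
  rw [eLpNorm_two_eq_sqrt (hf.add hg), eLpNorm_two_eq_sqrt hf, eLpNorm_two_eq_sqrt hg,
    ← ENNReal.ofReal_add (Real.sqrt_nonneg _) (Real.sqrt_nonneg _)] at h
  exact (ENNReal.ofReal_le_ofReal_iff (by positivity)).1 h

/-- Change of variables on ℝ for a monotone C¹ surjection, lintegral version. -/
lemma lintegral_comp_eq {η : ℝ → ℝ} {a : ℝ} (ha : 0 < a) (hc : ContDiff ℝ 1 η)
    (hd : ∀ x, a ≤ deriv η x) (g : ℝ → ENNReal) :
    ∫⁻ y, g y = ∫⁻ x, ENNReal.ofReal |deriv η x| * g (η x) := by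
  have hdiff : Differentiable ℝ η := hc.differentiable one_ne_zero
  have hpos : ∀ x, 0 < deriv η x := fun x => lt_of_lt_of_le ha (hd x)
  have hmono : StrictMono η := strictMono_of_deriv_pos hpos
  have htop : Tendsto η atTop atTop := by
    apply tendsto_atTop_mono' _ _ (tendsto_atTop_add_const_left atTop (η 0)
      (tendsto_id.const_mul_atTop ha))
    filter_upwards [eventually_ge_atTop (0:ℝ)] with x hx
    have := mul_sub_le_image_sub_of_le_deriv hdiff hd hx
    simp only [id]
    linarith
  have hbot : Tendsto η atBot atBot := by
    apply tendsto_atBot_mono' _ _ (tendsto_atBot_add_const_left atBot (η 0)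
      (tendsto_id.const_mul_atBot ha))
    filter_upwards [eventually_le_atBot (0:ℝ)] with x hx
    have := mul_sub_le_image_sub_of_le_deriv hdiff hd hx
    simp only [id]
    linarith
  have hsurj : Function.Surjective η := hdiff.continuous.surjective htop hbot
  have himg : η '' Set.univ = Set.univ := by
    rw [Set.image_univ, Set.range_eq_univ.2 hsurj]
  have hder : ∀ x ∈ (Set.univ : Set ℝ),
      HasFDerivWithinAt η ((1 : ℝ →L[ℝ] ℝ).smulRight (deriv η x)) Set.univ x :=
    fun x _ => ((hdiff x).hasDerivAt.hasDerivWithinAt).hasFDerivWithinAt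
  have := lintegral_image_eq_lintegral_abs_det_fderiv_mul volume MeasurableSet.univ hder
    (hmono.injective.injOn) g
  rw [himg] at this
  simpa [ContinuousLinearMap.det_toSpanSingleton, Measure.restrict_univ] using this

lemma integrable_sub_sq {f g : ℝ → ℝ} (hfc : Continuous f) (hgc : Continuous g)
    (hf : Integrable (fun x : ℝ => f x ^ 2)) (hg : Integrable (fun x : ℝ => g x ^ 2)) :
    Integrable (fun x : ℝ => (f x - g x) ^ 2) := by
  apply Integrable.mono' ((hf.const_mul 2).add (hg.const_mul 2))
    (((hfc.sub hgc).pow 2).aestronglyMeasurable)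
  filter_upwards with x
  simp only [Pi.add_apply, Pi.pow_apply, Pi.sub_apply]
  rw [Real.norm_eq_abs, abs_of_nonneg (sq_nonneg _)]
  nlinarith [sq_nonneg (f x + g x)]

lemma integrable_of_nonneg_lintegral {f : ℝ → ℝ} (hf : Continuous f) (hnn : ∀ x, 0 ≤ f x)
    (h : ∫⁻ x, ENNReal.ofReal (f x) < ⊤) : Integrable f (volume : Measure ℝ) := by
  refine ⟨hf.aestronglyMeasurable, ?_⟩
  simpa [HasFiniteIntegral, ← ofReal_norm_eq_enorm, Real.norm_eq_abs,
    abs_of_nonneg (hnn _)] using h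




/-- For `φ₁, φ₂ ∈ 𝒱₁(ℝ)` with `|φ₂'| ≤ C₂` and `η₁, η₂ ∈ 𝒟(ℝ)` with `a₁ ≤ η₁'`:
`‖φ₁ ∘ η₁ − φ₂ ∘ η₂‖_{L²} ≤ (1/√a₁) ‖φ₁ − φ₂‖_{L²} + C₂ ‖η₁ − η₂‖_{L²}`. -/
theorem composition_L2_diff_bound (φ₁ φ₂ η₁ η₂ : ℝ → ℝ) (C₂ : ℝ) (M₁ M₂ a₁ b₁ a₂ b₂ : ℝ)
    (hM₁ : 0 < M₁) (hM₂ : 0 < M₂)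
    (hφ₁ : InV1 φ₁ M₁) (hφ₂ : InV1 φ₂ M₂)
    (hC₂ : ∀ x : ℝ, |deriv φ₂ x| ≤ C₂)
    (ha₁ : 0 < a₁) (hab₁ : a₁ < b₁) (ha₂ : 0 < a₂) (hab₂ : a₂ < b₂)
    (hη₁ : InD η₁ a₁ b₁) (hη₂ : InD η₂ a₂ b₂) :
    Real.sqrt (∫ x : ℝ, (φ₁ (η₁ x) - φ₂ (η₂ x)) ^ 2) ≤
      (1 / Real.sqrt a₁) * Real.sqrt (∫ y : ℝ, (φ₁ y - φ₂ y) ^ 2) +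
      C₂ * Real.sqrt (∫ x : ℝ, (η₁ x - η₂ x) ^ 2) := by
  obtain ⟨hφ₁s, hφ₁d, hφ₁i, -, -⟩ := hφ₁
  obtain ⟨hφ₂s, hφ₂d, hφ₂i, -, -⟩ := hφ₂
  obtain ⟨hη₁s, hη₁d, hη₁i, -, -⟩ := hη₁
  obtain ⟨hη₂s, hη₂d, hη₂i, -, -⟩ := hη₂
  have hφ₁c : Continuous φ₁ := hφ₁s.continuous
  have hφ₂c : Continuous φ₂ := hφ₂s.continuous
  have hη₁c : Continuous η₁ := hη₁s.continuous
  have hη₂c : Continuous η₂ := hη₂s.continuous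
  have hC₂0 : 0 ≤ C₂ := le_trans (abs_nonneg _) (hC₂ 0)
  set F : ℝ → ℝ := fun x => φ₁ (η₁ x) - φ₂ (η₁ x) with hF
  set G : ℝ → ℝ := fun x => φ₂ (η₁ x) - φ₂ (η₂ x) with hG
  have hFc : Continuous F := (hφ₁c.comp hη₁c).sub (hφ₂c.comp hη₁c)
  have hGc : Continuous G := (hφ₂c.comp hη₁c).sub (hφ₂c.comp hη₂c)
  -- Integrability of (φ₁ - φ₂)²
  have hI12 : Integrable (fun y : ℝ => (φ₁ y - φ₂ y) ^ 2) :=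
    integrable_sub_sq hφ₁c hφ₂c hφ₁i hφ₂i
  -- Integrability of (η₁ - η₂)²
  have hIη : Integrable (fun x : ℝ => (η₁ x - η₂ x) ^ 2) := by
    have := integrable_sub_sq (f := fun x => η₁ x - x) (g := fun x => η₂ x - x)
      (hη₁c.sub continuous_id) (hη₂c.sub continuous_id) hη₁i hη₂i
    exact this.congr (Filter.Eventually.of_forall fun x => by ring)
  -- Change of variables bound for F
  set G0 : ℝ → ENNReal := fun y => ENNReal.ofReal ((φ₁ y - φ₂ y) ^ 2) with hG0
  have key := lintegral_comp_eq ha₁ hη₁s (fun x => (hη₁d x).1) G0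
  have hmeasG0 : Measurable fun x => G0 (η₁ x) :=
    ENNReal.measurable_ofReal.comp ((((hφ₁c.sub hφ₂c).pow 2).comp hη₁c).measurable)
  have hmain : ENNReal.ofReal a₁ * ∫⁻ x, G0 (η₁ x) ≤ ∫⁻ y, G0 y := by
    rw [← lintegral_const_mul _ hmeasG0, key]
    refine lintegral_mono fun x => ?_
    gcongr
    exact le_trans (hη₁d x).1 (le_abs_self _)
  have hfinG0 : ∫⁻ y, G0 y < ⊤ := hI12.lintegral_lt_top
  have hle : ∫⁻ x, G0 (η₁ x) ≤ (ENNReal.ofReal a₁)⁻¹ * ∫⁻ y, G0 y := by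
    rw [← ENNReal.div_eq_inv_mul]
    rw [ENNReal.le_div_iff_mul_le (Or.inl (ENNReal.ofReal_pos.2 ha₁).ne') (Or.inl ENNReal.ofReal_ne_top)]
    rw [mul_comm]; exact hmain
  have hfinF : ∫⁻ x, G0 (η₁ x) < ⊤ :=
    lt_of_le_of_lt hle (ENNReal.mul_lt_top (ENNReal.inv_lt_top.2 (ENNReal.ofReal_pos.2 ha₁)) hfinG0)
  -- Integrable F²
  have hFsq_eq : (fun x : ℝ => F x ^ 2) = fun x => (φ₁ (η₁ x) - φ₂ (η₁ x)) ^ 2 := rfl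
  have hIF : Integrable (fun x : ℝ => F x ^ 2) := by
    apply integrable_of_nonneg_lintegral ((hFc.pow 2)) (fun x => sq_nonneg _)
    simpa [hG0] using hfinF
  -- ∫ F² ≤ a₁⁻¹ * ∫ (φ₁ - φ₂)²
  have hintF : (∫ x, F x ^ 2) ≤ a₁⁻¹ * ∫ y, (φ₁ y - φ₂ y) ^ 2 := by
    have e1 : (∫ x, F x ^ 2) = (∫⁻ x, G0 (η₁ x)).toReal := by
      rw [integral_eq_lintegral_of_nonneg_ae (Filter.Eventually.of_forall fun x => sq_nonneg _)
        ((hFc.pow 2)).aestronglyMeasurable]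
    have e2 : (∫ y, (φ₁ y - φ₂ y) ^ 2) = (∫⁻ y, G0 y).toReal := by
      rw [integral_eq_lintegral_of_nonneg_ae (f := fun y => (φ₁ y - φ₂ y) ^ 2)
        (Filter.Eventually.of_forall fun x => sq_nonneg _)
        (((hφ₁c.sub hφ₂c).pow 2).aestronglyMeasurable :
          AEStronglyMeasurable (fun y => (φ₁ y - φ₂ y) ^ 2) volume)]
    rw [e1, e2]
    have := ENNReal.toReal_mono (ENNReal.mul_ne_top (ENNReal.inv_lt_top.2 (ENNReal.ofReal_pos.2 ha₁)).ne hfinG0.ne) hle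
    rwa [ENNReal.toReal_mul, ENNReal.toReal_inv, ENNReal.toReal_ofReal ha₁.le] at this
  -- Lipschitz bound for G
  have hlip : ∀ u v : ℝ, |φ₂ u - φ₂ v| ≤ C₂ * |u - v| := by
    intro u v
    have := convex_univ.norm_image_sub_le_of_norm_deriv_le
      (fun x _ => (hφ₂s.differentiable one_ne_zero).differentiableAt)
      (fun x _ => by simpa [Real.norm_eq_abs] using hC₂ x)
      (Set.mem_univ v) (Set.mem_univ u)
    simpa [Real.norm_eq_abs] using this
  have hGsq : ∀ x, G x ^ 2 ≤ C₂ ^ 2 * (η₁ x - η₂ x) ^ 2 := by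
    intro x
    have h := hlip (η₁ x) (η₂ x)
    simp only [hG]
    nlinarith [abs_nonneg (φ₂ (η₁ x) - φ₂ (η₂ x)), abs_nonneg (η₁ x - η₂ x),
      sq_abs (φ₂ (η₁ x) - φ₂ (η₂ x)), sq_abs (η₁ x - η₂ x)]
  have hIG : Integrable (fun x : ℝ => G x ^ 2) := by
    apply Integrable.mono' (hIη.const_mul (C₂ ^ 2)) ((hGc.pow 2).aestronglyMeasurable)
    filter_upwards with x
    rw [Real.norm_eq_abs, abs_of_nonneg (sq_nonneg _)]
    exact hGsq x
  have hintG : (∫ x, G x ^ 2) ≤ C₂ ^ 2 * ∫ x, (η₁ x - η₂ x) ^ 2 := by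
    rw [← integral_const_mul]
    exact integral_mono hIG (hIη.const_mul _) hGsq
  -- Memℒp facts
  have hMF : MemLp F 2 (volume : Measure ℝ) :=
    (memLp_two_iff_integrable_sq hFc.aestronglyMeasurable).2 hIF
  have hMG : MemLp G 2 (volume : Measure ℝ) :=
    (memLp_two_iff_integrable_sq hGc.aestronglyMeasurable).2 hIG
  -- Put it together
  have hsplit : (∫ x : ℝ, (φ₁ (η₁ x) - φ₂ (η₂ x)) ^ 2) = ∫ x, (F x + G x) ^ 2 := by
    congr 1; funext x; simp only [hF, hG]; ring
  rw [hsplit]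
  have tri := sqrt_integral_sq_add_le hMF hMG
  have b1 : Real.sqrt (∫ x, F x ^ 2) ≤ (1 / Real.sqrt a₁) * Real.sqrt (∫ y, (φ₁ y - φ₂ y) ^ 2) := by
    calc Real.sqrt (∫ x, F x ^ 2) ≤ Real.sqrt (a₁⁻¹ * ∫ y, (φ₁ y - φ₂ y) ^ 2) :=
          Real.sqrt_le_sqrt hintF
      _ = (1 / Real.sqrt a₁) * Real.sqrt (∫ y, (φ₁ y - φ₂ y) ^ 2) := by
          rw [Real.sqrt_mul (by positivity), Real.sqrt_inv, one_div]
  have b2 : Real.sqrt (∫ x, G x ^ 2) ≤ C₂ * Real.sqrt (∫ x, (η₁ x - η₂ x) ^ 2) := by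
    calc Real.sqrt (∫ x, G x ^ 2) ≤ Real.sqrt (C₂ ^ 2 * ∫ x, (η₁ x - η₂ x) ^ 2) :=
          Real.sqrt_le_sqrt hintG
      _ = C₂ * Real.sqrt (∫ x, (η₁ x - η₂ x) ^ 2) := by
          rw [Real.sqrt_mul (sq_nonneg _), Real.sqrt_sq hC₂0]
  linarith
end

section
/- Let g : ℝ → ℝ be continuous and bounded, and let f : ℝ → ℝ be twice continuously differentiable with f(x) − f''(x) = g(x) for all x ∈ ℝ and f(x) → 0 as |x| → ∞. Then f(x) = (1/2) ∫_ℝ e^{−|x−y|} g(y) dy for every x ∈ ℝ. -/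
open Filter MeasureTheory Set Real Topology

/-- If `g` is continuous and bounded, `f` is `C²` with `f − f'' = g` and `f(x) → 0` as
`|x| → ∞`, then `f(x) = (1/2) ∫ e^{−|x−y|} g(y) dy`. -/
theorem green_function_formula (f g : ℝ → ℝ) (hg : Continuous g)
    (C : ℝ) (hgb : ∀ x : ℝ, |g x| ≤ C)
    (hf : ContDiff ℝ 2 f)
    (heq : ∀ x : ℝ, f x - deriv (deriv f) x = g x)
    (hlim : Tendsto f (cocompact ℝ) (nhds 0)) :
    ∀ x : ℝ, f x = (1 / 2) * ∫ y : ℝ, Real.exp (-|x - y|) * g y := by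
  have hC : 0 ≤ C := le_trans (abs_nonneg _) (hgb 0)
  have hf' : ContDiff ℝ (1 + 1) f := by
    convert hf using 2
    norm_num
  have hfdiff : Differentiable ℝ f := hf.differentiable (by norm_num)
  have hfd1 : ContDiff ℝ 1 (deriv f) := (contDiff_succ_iff_deriv.1 hf').2.2
  have hf2 : Differentiable ℝ (deriv f) := hfd1.differentiable one_ne_zero
  have hfc : Continuous f := hf.continuous
  -- `f` is bounded
  obtain ⟨Mf, hMf⟩ : ∃ M : ℝ, ∀ y : ℝ, |f y| ≤ M := by
    have h1 : ∀ᶠ y in cocompact ℝ, |f y| < 1 := by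
      have := (Metric.tendsto_nhds.1 hlim) 1 one_pos
      simpa [Real.dist_eq] using this
    obtain ⟨K, hK, hKs⟩ := mem_cocompact.1 h1
    obtain ⟨B, hB⟩ := hK.exists_bound_of_continuousOn hfc.continuousOn
    refine ⟨max B 1, fun y => ?_⟩
    by_cases hy : y ∈ K
    · exact le_trans (hB y hy) (le_max_left _ _)
    · exact le_trans (le_of_lt (hKs hy)) (le_max_right _ _)
  -- `f''` is bounded by `Mf + C`
  have hD : ∀ y : ℝ, |deriv (deriv f) y| ≤ Mf + C := by
    intro y
    have : deriv (deriv f) y = f y - g y := by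
      have := heq y; linarith
    rw [this]
    calc |f y - g y| ≤ |f y| + |g y| := abs_sub _ _
      _ ≤ Mf + C := add_le_add (hMf y) (hgb y)
  set A := |deriv f 0| with hA
  set D := Mf + C with hDdef
  -- `f'` grows at most linearly
  have hlin : ∀ y : ℝ, |deriv f y| ≤ A + D * |y| := by
    intro y
    have h := Convex.norm_image_sub_le_of_norm_deriv_le (f := deriv f) (s := univ)
      (fun z _ => hf2 z) (fun z _ => hD z) convex_univ (mem_univ 0) (mem_univ y)
    simp only [Real.norm_eq_abs, sub_zero] at h
    calc |deriv f y| = |deriv f y - deriv f 0 + deriv f 0| := by ring_nf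
      _ ≤ |deriv f y - deriv f 0| + |deriv f 0| := abs_add_le _ _
      _ ≤ D * |y| + A := add_le_add h le_rfl
      _ = A + D * |y| := by ring
  intro x
  -- Integrability on the two half-lines
  have meas1 : AEStronglyMeasurable (fun y => Real.exp (y - x) * g y)
      (volume.restrict (Iic x)) :=
    ((Real.continuous_exp.comp (continuous_id.sub continuous_const)).mul hg).aestronglyMeasurable
  have I1 : IntegrableOn (fun y => Real.exp (y - x) * g y) (Iic x) := by
    have hbase : IntegrableOn (fun y => C * Real.exp (-x) * Real.exp y) (Iic x) :=
      (integrableOn_exp_Iic x).const_mul _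
    refine Integrable.mono' hbase meas1 ?_
    filter_upwards with y
    rw [Real.norm_eq_abs, abs_mul, abs_of_pos (Real.exp_pos _)]
    calc Real.exp (y - x) * |g y| ≤ Real.exp (y - x) * C := by
          exact mul_le_mul_of_nonneg_left (hgb y) (Real.exp_pos _).le
      _ = C * Real.exp (-x) * Real.exp y := by rw [Real.exp_sub, Real.exp_neg]; ring
  have meas2 : AEStronglyMeasurable (fun y => Real.exp (x - y) * g y)
      (volume.restrict (Ioi x)) :=
    ((Real.continuous_exp.comp (continuous_const.sub continuous_id)).mul hg).aestronglyMeasurable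
  have I2 : IntegrableOn (fun y => Real.exp (x - y) * g y) (Ioi x) := by
    have hbase : IntegrableOn (fun y => C * Real.exp x * Real.exp (-y)) (Ioi x) := by
      have := (exp_neg_integrableOn_Ioi x one_pos).const_mul (C * Real.exp x)
      simp only [neg_mul, one_mul] at this
      exact this
    refine Integrable.mono' hbase meas2 ?_
    filter_upwards with y
    rw [Real.norm_eq_abs, abs_mul, abs_of_pos (Real.exp_pos _)]
    calc Real.exp (x - y) * |g y| ≤ Real.exp (x - y) * C := by
          exact mul_le_mul_of_nonneg_left (hgb y) (Real.exp_pos _).le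
      _ = C * Real.exp x * Real.exp (-y) := by
          rw [Real.exp_sub, Real.exp_neg, div_eq_mul_inv]; ring
  -- Derivative computations
  have hφ₁ : ∀ y : ℝ, HasDerivAt (fun y => Real.exp (y - x) * (f y - deriv f y))
      (Real.exp (y - x) * g y) y := by
    intro y
    have h1 : HasDerivAt (fun y => Real.exp (y - x)) (Real.exp (y - x)) y := by
      simpa [Function.comp_def] using (Real.hasDerivAt_exp (y - x)).comp y ((hasDerivAt_id y).sub_const x)
    have h2 : HasDerivAt (fun y => f y - deriv f y) (deriv f y - deriv (deriv f) y) y :=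
      (hfdiff y).hasDerivAt.sub (hf2 y).hasDerivAt
    have := h1.mul h2
    refine this.congr_deriv ?_
    rw [← heq y]; ring
  have hφ₂ : ∀ y : ℝ, HasDerivAt (fun y => Real.exp (x - y) * (-(f y) - deriv f y))
      (Real.exp (x - y) * g y) y := by
    intro y
    have h1 : HasDerivAt (fun y => Real.exp (x - y)) (-Real.exp (x - y)) y := by
      simpa [Function.comp_def] using (Real.hasDerivAt_exp (x - y)).comp y ((hasDerivAt_id y).const_sub x)
    have h2 : HasDerivAt (fun y => -(f y) - deriv f y)
        (-(deriv f y) - deriv (deriv f) y) y :=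
      ((hfdiff y).hasDerivAt.neg).sub (hf2 y).hasDerivAt
    have := h1.mul h2
    refine this.congr_deriv ?_
    rw [← heq y]; ring
  -- Limits at ∓∞
  have hfatBot : Tendsto f atBot (𝓝 0) := hlim.mono_left _root_.atBot_le_cocompact
  have hfatTop : Tendsto f atTop (𝓝 0) := hlim.mono_left _root_.atTop_le_cocompact
  have habs : Tendsto (fun y => |f y|) atBot (𝓝 0) := by
    simpa using hfatBot.abs
  have habsT : Tendsto (fun y => |f y|) atTop (𝓝 0) := by
    simpa using hfatTop.abs
  -- auxiliary decay: exp(-t) * (A + D*t) → 0 at atTop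
  have Tdecay : ∀ c : ℝ, Tendsto (fun t : ℝ => Real.exp (-t + c) * (A + D * t)) atTop (𝓝 0) := by
    intro c
    have TA : Tendsto (fun t : ℝ => Real.exp (-t)) atTop (𝓝 0) :=
      Real.tendsto_exp_neg_atTop_nhds_zero
    have TB : Tendsto (fun t : ℝ => t * Real.exp (-t)) atTop (𝓝 0) := by
      simpa using Real.tendsto_pow_mul_exp_neg_atTop_nhds_zero 1
    have := ((TA.const_mul (Real.exp c * A)).add (TB.const_mul (Real.exp c * D)))
    simp only [mul_zero, add_zero] at this
    refine this.congr (fun t => ?_)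
    rw [Real.exp_add]
    ring
  -- exp(y - x) * deriv f y → 0 at atBot
  have Lf'Bot : Tendsto (fun y => Real.exp (y - x) * deriv f y) atBot (𝓝 0) := by
    have hb : Tendsto (fun y : ℝ => Real.exp (y - x) * (A + D * (-y))) atBot (𝓝 0) := by
      have := (Tdecay (-x)).comp tendsto_neg_atBot_atTop
      refine this.congr (fun y => ?_)
      simp only [Function.comp_apply]
      ring_nf
    refine squeeze_zero_norm' ?_ hb
    filter_upwards [eventually_le_atBot (0 : ℝ)] with y hy
    rw [Real.norm_eq_abs, abs_mul, abs_of_pos (Real.exp_pos _)]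
    have : |deriv f y| ≤ A + D * (-y) := by
      have := hlin y; rwa [abs_of_nonpos hy] at this
    exact mul_le_mul_of_nonneg_left this (Real.exp_pos _).le
  have LfBot : Tendsto (fun y => Real.exp (y - x) * f y) atBot (𝓝 0) := by
    refine squeeze_zero_norm' ?_ habs
    filter_upwards [eventually_le_atBot x] with y hy
    rw [Real.norm_eq_abs, abs_mul, abs_of_pos (Real.exp_pos _)]
    have h1 : Real.exp (y - x) ≤ 1 := Real.exp_le_one_iff.2 (by linarith)
    nlinarith [abs_nonneg (f y), Real.exp_pos (y - x)]
  have L1 : Tendsto (fun y => Real.exp (y - x) * (f y - deriv f y)) atBot (𝓝 0) := by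
    have := LfBot.sub Lf'Bot
    simp only [sub_zero] at this
    refine this.congr (fun y => ?_)
    ring
  -- exp(x - y) * deriv f y → 0 at atTop
  have Lf'Top : Tendsto (fun y => Real.exp (x - y) * deriv f y) atTop (𝓝 0) := by
    have hb : Tendsto (fun y : ℝ => Real.exp (x - y) * (A + D * y)) atTop (𝓝 0) := by
      refine (Tdecay x).congr (fun y => ?_)
      ring_nf
    refine squeeze_zero_norm' ?_ hb
    filter_upwards [eventually_ge_atTop (0 : ℝ)] with y hy
    rw [Real.norm_eq_abs, abs_mul, abs_of_pos (Real.exp_pos _)]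
    have : |deriv f y| ≤ A + D * y := by
      have := hlin y; rwa [abs_of_nonneg hy] at this
    exact mul_le_mul_of_nonneg_left this (Real.exp_pos _).le
  have LfTop : Tendsto (fun y => Real.exp (x - y) * f y) atTop (𝓝 0) := by
    refine squeeze_zero_norm' ?_ habsT
    filter_upwards [eventually_ge_atTop x] with y hy
    rw [Real.norm_eq_abs, abs_mul, abs_of_pos (Real.exp_pos _)]
    have h1 : Real.exp (x - y) ≤ 1 := Real.exp_le_one_iff.2 (by linarith)
    nlinarith [abs_nonneg (f y), Real.exp_pos (x - y)]
  have L2 : Tendsto (fun y => Real.exp (x - y) * (-(f y) - deriv f y)) atTop (𝓝 0) := by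
    have := (LfTop.neg.sub Lf'Top)
    simp only [neg_zero, sub_zero] at this
    refine this.congr (fun y => ?_)
    ring
  -- FTC on each half-line
  have E1 : ∫ y in Iic x, Real.exp (y - x) * g y = f x - deriv f x := by
    have := integral_Iic_of_hasDerivAt_of_tendsto' (fun y _ => hφ₁ y) I1 L1
    simpa using this
  have E2 : ∫ y in Ioi x, Real.exp (x - y) * g y = f x + deriv f x := by
    have := integral_Ioi_of_hasDerivAt_of_tendsto' (fun y _ => hφ₂ y) I2 L2
    simp only [sub_self, Real.exp_zero, one_mul, zero_sub, neg_sub, neg_neg] at this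
    rw [this]; ring
  -- identify the integrands
  have cong1 : ∀ y ∈ Iic x, Real.exp (-|x - y|) * g y = Real.exp (y - x) * g y := by
    intro y hy
    rw [abs_of_nonneg (by simpa using hy : (0:ℝ) ≤ x - y)]
    ring_nf
  have cong2 : ∀ y ∈ Ioi x, Real.exp (-|x - y|) * g y = Real.exp (x - y) * g y := by
    intro y hy
    rw [abs_of_nonpos (by simp at hy ⊢; linarith : x - y ≤ 0)]
    ring_nf
  have J1 : IntegrableOn (fun y => Real.exp (-|x - y|) * g y) (Iic x) :=
    I1.congr_fun (fun y hy => (cong1 y hy).symm) measurableSet_Iic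
  have J2 : IntegrableOn (fun y => Real.exp (-|x - y|) * g y) (Ioi x) :=
    I2.congr_fun (fun y hy => (cong2 y hy).symm) measurableSet_Ioi
  have key : ∫ y : ℝ, Real.exp (-|x - y|) * g y = 2 * f x := by
    rw [← intervalIntegral.integral_Iic_add_Ioi J1 J2,
      setIntegral_congr_fun measurableSet_Iic cong1,
      setIntegral_congr_fun measurableSet_Ioi cong2, E1, E2]
    ring
  rw [key]; ring
end

section
/- Let η : ℝ → ℝ be continuously differentiable with a ≤ η'(x) ≤ b for all x ∈ ℝ (0 < a < b), and let φ : ℝ → ℝ be continuous with |φ(x)| ≤ M for all x. Define f(x) = −(1/2) e^{−η(x)} ∫_{−∞}^{x} e^{η(y)} φ(y) η'(y) dy + (1/2) e^{η(x)} ∫_{x}^{∞} e^{−η(y)} φ(y) η'(y) dy. Then f is continuously differentiable, |f(x)| ≤ Mb/a for all x ∈ ℝ, and |f'(x)| ≤ (b²/a + b) M for all x ∈ ℝ. -/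
open Filter MeasureTheory Set Real

private lemma expInt_Ioi {a : ℝ} (ha : 0 < a) (x : ℝ) :
    IntegrableOn (fun y => Real.exp (-(a * (y - x)))) (Set.Ioi x) := by
  have h : (fun y => Real.exp (-(a * (y - x)))) =
      fun y => Real.exp (a * x) * Real.exp (-a * y) := by
    funext y; rw [← Real.exp_add]; ring_nf
  rw [h]
  exact (exp_neg_integrableOn_Ioi x ha).const_mul _

private lemma expVal_Ioi {a : ℝ} (ha : 0 < a) (x : ℝ) :
    (∫ y in Set.Ioi x, Real.exp (-(a * (y - x)))) = 1 / a := by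
  have h : ∀ y : ℝ, Real.exp (-(a * (y - x))) =
      Real.exp (a * x) * Real.exp (-(a * y)) := by
    intro y; rw [← Real.exp_add]; ring_nf
  simp_rw [h]
  rw [MeasureTheory.integral_const_mul]
  have h2 := integral_comp_mul_left_Ioi (fun z => Real.exp (-z)) x ha
  rw [h2, integral_exp_neg_Ioi, smul_eq_mul, ← mul_assoc, mul_comm (Real.exp (a*x)) a⁻¹,
    mul_assoc, ← Real.exp_add]
  simp [one_div]

private lemma expInt_Iic {a : ℝ} (ha : 0 < a) (x : ℝ) :
    IntegrableOn (fun y => Real.exp (a * (y - x))) (Set.Iic x) := by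
  have h := expInt_Ioi ha (-x)
  have h2 := (MeasurePreserving.integrableOn_comp_preimage
      (Measure.measurePreserving_neg (volume : Measure ℝ))
      (Homeomorph.neg ℝ).measurableEmbedding).2 h
  have hpre : (Neg.neg : ℝ → ℝ) ⁻¹' Set.Ioi (-x) = Set.Iio x := by
    ext y; simp
  rw [hpre] at h2
  have hfun : ((fun y => Real.exp (-(a * (y - -x)))) ∘ (Neg.neg : ℝ → ℝ)) =
      fun y => Real.exp (a * (y - x)) := by
    funext y; simp [Function.comp]; ring_nf
  rw [hfun] at h2
  rw [IntegrableOn, ← Measure.restrict_congr_set MeasureTheory.Iio_ae_eq_Iic]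
  exact h2

private lemma expVal_Iic {a : ℝ} (ha : 0 < a) (x : ℝ) :
    (∫ y in Set.Iic x, Real.exp (a * (y - x))) = 1 / a := by
  have h : (∫ y in Set.Iic x, Real.exp (a * (y - x)))
      = ∫ y in Set.Iic x, (fun z => Real.exp (-(a * (z - -x)))) (-y) := by
    apply setIntegral_congr_fun measurableSet_Iic
    intro y _; simp only; ring_nf
  rw [h, integral_comp_neg_Iic x (fun z => Real.exp (-(a * (z - -x))))]
  exact expVal_Ioi ha (-x)

/-- For `η` a `C¹` map with `a ≤ η' ≤ b` (`0 < a < b`) and `φ` continuous with `|φ| ≤ M`,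
the function
`f(x) = −(1/2) e^{−η(x)} ∫_{−∞}^x e^{η(y)} φ(y) η'(y) dy
        + (1/2) e^{η(x)} ∫_x^∞ e^{−η(y)} φ(y) η'(y) dy`
is `C¹` with `|f| ≤ Mb/a` and `|f'| ≤ (b²/a + b) M`. -/
theorem L_eta_bounds (η φ f : ℝ → ℝ) (a b M : ℝ) (ha : 0 < a) (hab : a < b)
    (hη : ContDiff ℝ 1 η) (hη' : ∀ x : ℝ, a ≤ deriv η x ∧ deriv η x ≤ b)
    (hφ : Continuous φ) (hφM : ∀ x : ℝ, |φ x| ≤ M)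
    (hf : ∀ x : ℝ, f x =
      -(1 / 2) * Real.exp (-η x) * (∫ y in Set.Iic x, Real.exp (η y) * φ y * deriv η y) +
      (1 / 2) * Real.exp (η x) * ∫ y in Set.Ioi x, Real.exp (-η y) * φ y * deriv η y) :
    ContDiff ℝ 1 f ∧ (∀ x : ℝ, |f x| ≤ M * b / a) ∧
      ∀ x : ℝ, |deriv f x| ≤ (b ^ 2 / a + b) * M := by
  have hb : 0 < b := ha.trans hab
  have hM : 0 ≤ M := (abs_nonneg _).trans (hφM 0)
  have hηd : Differentiable ℝ η := hη.differentiable one_ne_zero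
  have hη'c : Continuous (deriv η) := hη.continuous_deriv le_rfl
  set F1 : ℝ → ℝ := fun y => Real.exp (η y) * φ y * deriv η y with hF1
  set F2 : ℝ → ℝ := fun y => Real.exp (-η y) * φ y * deriv η y with hF2
  have hF1c : Continuous F1 := ((Real.continuous_exp.comp hηd.continuous).mul hφ).mul hη'c
  have hF2c : Continuous F2 := ((Real.continuous_exp.comp hηd.continuous.neg).mul hφ).mul hη'c
  -- monotonicity of t ↦ η t - a t
  have hmono : Monotone (fun t => η t - a * t) := by
    have hdiff : Differentiable ℝ (fun t => η t - a * t) :=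
      hηd.sub (differentiable_id.const_mul a)
    refine monotone_of_deriv_nonneg hdiff fun t => ?_
    have h1 : HasDerivAt (fun t => η t - a * t) (deriv η t - a * 1) t :=
      (hηd t).hasDerivAt.sub ((hasDerivAt_id t).const_mul a)
    rw [h1.deriv, mul_one]
    linarith [(hη' t).1]
  have key1 : ∀ {y x : ℝ}, y ≤ x → η y ≤ η x + a * (y - x) := by
    intro y x hyx
    have := hmono hyx
    simp only at this
    linarith
  have hpabs : ∀ x : ℝ, |deriv η x| ≤ b := fun x =>
    abs_le.2 ⟨by linarith [(hη' x).1], (hη' x).2⟩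
  -- pointwise bounds on the integrands
  have hbd1 : ∀ x y : ℝ, y ≤ x →
      |F1 y| ≤ M * b * Real.exp (η x) * Real.exp (a * (y - x)) := by
    intro x y hyx
    rw [hF1]
    simp only
    rw [abs_mul, abs_mul, Real.abs_exp]
    have h1 : Real.exp (η y) ≤ Real.exp (η x) * Real.exp (a * (y - x)) := by
      rw [← Real.exp_add]
      exact Real.exp_le_exp.2 (key1 hyx)
    calc Real.exp (η y) * |φ y| * |deriv η y|
        ≤ (Real.exp (η x) * Real.exp (a * (y - x))) * M * b := by
          gcongr
          exacts [hφM y, hpabs y]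
      _ = M * b * Real.exp (η x) * Real.exp (a * (y - x)) := by ring
  have hbd2 : ∀ x y : ℝ, x ≤ y →
      |F2 y| ≤ M * b * Real.exp (-η x) * Real.exp (-(a * (y - x))) := by
    intro x y hxy
    rw [hF2]
    simp only
    rw [abs_mul, abs_mul, Real.abs_exp]
    have h1 : Real.exp (-η y) ≤ Real.exp (-η x) * Real.exp (-(a * (y - x))) := by
      rw [← Real.exp_add]
      refine Real.exp_le_exp.2 ?_
      have := key1 hxy
      linarith
    calc Real.exp (-η y) * |φ y| * |deriv η y|
        ≤ (Real.exp (-η x) * Real.exp (-(a * (y - x)))) * M * b := by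
          gcongr
          exacts [hφM y, hpabs y]
      _ = M * b * Real.exp (-η x) * Real.exp (-(a * (y - x))) := by ring
  -- integrability
  have hint1 : ∀ x : ℝ, IntegrableOn F1 (Set.Iic x) := by
    intro x
    have hae : ∀ᵐ y ∂(volume.restrict (Set.Iic x)),
        ‖F1 y‖ ≤ M * b * Real.exp (η x) * Real.exp (a * (y - x)) :=
      (ae_restrict_iff' measurableSet_Iic).2 (Filter.Eventually.of_forall fun y hy => by
        rw [Real.norm_eq_abs]; exact hbd1 x y hy)
    exact Integrable.mono' ((expInt_Iic ha x).const_mul (M * b * Real.exp (η x)))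
      hF1c.aestronglyMeasurable hae
  have hint2 : ∀ x : ℝ, IntegrableOn F2 (Set.Ioi x) := by
    intro x
    have hae : ∀ᵐ y ∂(volume.restrict (Set.Ioi x)),
        ‖F2 y‖ ≤ M * b * Real.exp (-η x) * Real.exp (-(a * (y - x))) :=
      (ae_restrict_iff' measurableSet_Ioi).2 (Filter.Eventually.of_forall fun y hy => by
        rw [Real.norm_eq_abs]; exact hbd2 x y (le_of_lt hy))
    exact Integrable.mono' ((expInt_Ioi ha x).const_mul (M * b * Real.exp (-η x)))
      hF2c.aestronglyMeasurable hae
  set g : ℝ → ℝ := fun x => ∫ y in Set.Iic x, F1 y with hgdef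
  set h : ℝ → ℝ := fun x => ∫ y in Set.Ioi x, F2 y with hhdef
  have hc : ∀ x : ℝ, Real.exp (-η x) * Real.exp (η x) = 1 := by
    intro x; rw [← Real.exp_add]; simp
  -- bounds on g and h
  have hgbd : ∀ x : ℝ, |g x| ≤ M * b * Real.exp (η x) / a := by
    intro x
    have hGint : Integrable (fun y => M * b * Real.exp (η x) * Real.exp (a * (y - x)))
        (volume.restrict (Set.Iic x)) := (expInt_Iic ha x).const_mul _
    have hae : ∀ᵐ y ∂(volume.restrict (Set.Iic x)),
        ‖F1 y‖ ≤ M * b * Real.exp (η x) * Real.exp (a * (y - x)) :=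
      (ae_restrict_iff' measurableSet_Iic).2 (Filter.Eventually.of_forall fun y hy => by
        rw [Real.norm_eq_abs]; exact hbd1 x y hy)
    have hbound := norm_integral_le_of_norm_le hGint hae
    rw [Real.norm_eq_abs] at hbound
    calc |g x| ≤ ∫ y in Set.Iic x, M * b * Real.exp (η x) * Real.exp (a * (y - x)) := hbound
      _ = M * b * Real.exp (η x) / a := by
          rw [MeasureTheory.integral_const_mul, expVal_Iic ha]; ring
  have hhbd : ∀ x : ℝ, |h x| ≤ M * b * Real.exp (-η x) / a := by
    intro x
    have hGint : Integrable (fun y => M * b * Real.exp (-η x) * Real.exp (-(a * (y - x))))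
        (volume.restrict (Set.Ioi x)) := (expInt_Ioi ha x).const_mul _
    have hae : ∀ᵐ y ∂(volume.restrict (Set.Ioi x)),
        ‖F2 y‖ ≤ M * b * Real.exp (-η x) * Real.exp (-(a * (y - x))) :=
      (ae_restrict_iff' measurableSet_Ioi).2 (Filter.Eventually.of_forall fun y hy => by
        rw [Real.norm_eq_abs]; exact hbd2 x y (le_of_lt hy))
    have hbound := norm_integral_le_of_norm_le hGint hae
    rw [Real.norm_eq_abs] at hbound
    calc |h x| ≤ ∫ y in Set.Ioi x, M * b * Real.exp (-η x) * Real.exp (-(a * (y - x))) := hbound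
      _ = M * b * Real.exp (-η x) / a := by
          rw [MeasureTheory.integral_const_mul, expVal_Ioi ha]; ring
  have hA : ∀ x : ℝ, |Real.exp (-η x) * g x| ≤ M * b / a := by
    intro x
    rw [abs_mul, Real.abs_exp]
    calc Real.exp (-η x) * |g x| ≤ Real.exp (-η x) * (M * b * Real.exp (η x) / a) := by
          exact mul_le_mul_of_nonneg_left (hgbd x) (Real.exp_pos _).le
      _ = M * b / a := by linear_combination (M * b / a) * hc x
  have hB : ∀ x : ℝ, |Real.exp (η x) * h x| ≤ M * b / a := by
    intro x
    rw [abs_mul, Real.abs_exp]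
    calc Real.exp (η x) * |h x| ≤ Real.exp (η x) * (M * b * Real.exp (-η x) / a) := by
          exact mul_le_mul_of_nonneg_left (hhbd x) (Real.exp_pos _).le
      _ = M * b / a := by linear_combination (M * b / a) * hc x
  -- derivatives of g and h
  have hgd : ∀ x : ℝ, HasDerivAt g (F1 x) x := by
    intro x
    have heq : ∀ t : ℝ, g t = g 0 + ∫ y in (0:ℝ)..t, F1 y := by
      intro t
      have := intervalIntegral.integral_Iic_sub_Iic (hint1 0) (hint1 t)
      simp only [hgdef]
      linarith
    have hI : HasDerivAt (fun t => ∫ y in (0:ℝ)..t, F1 y) (F1 x) x :=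
      (hF1c.integral_hasStrictDerivAt 0 x).hasDerivAt
    have := ((hasDerivAt_const x (g 0)).add hI).congr_of_eventuallyEq
      (Filter.Eventually.of_forall heq)
    simpa using this
  have hIoiSub : ∀ u v : ℝ, u ≤ v →
      (∫ y in Set.Ioi u, F2 y) - ∫ y in Set.Ioi v, F2 y = ∫ y in u..v, F2 y := by
    intro u v huv
    rw [intervalIntegral.integral_of_le huv]
    have : (∫ y in Set.Ioi u, F2 y) =
        (∫ y in Set.Ioc u v, F2 y) + ∫ y in Set.Ioi v, F2 y := by
      rw [← MeasureTheory.setIntegral_union (Set.Ioc_disjoint_Ioi le_rfl) measurableSet_Ioi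
        ((hint2 u).mono_set Set.Ioc_subset_Ioi_self) (hint2 v),
        Set.Ioc_union_Ioi_eq_Ioi huv]
    linarith
  have hhd : ∀ x : ℝ, HasDerivAt h (-F2 x) x := by
    intro x
    have heq : ∀ t : ℝ, h t = h 0 - ∫ y in (0:ℝ)..t, F2 y := by
      intro t
      rcases le_total 0 t with h0t | ht0
      · have := hIoiSub 0 t h0t
        simp only [hhdef]
        linarith
      · have h1 := hIoiSub t 0 ht0
        have h2 : (∫ y in t..(0:ℝ), F2 y) = -∫ y in (0:ℝ)..t, F2 y :=
          intervalIntegral.integral_symm 0 t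
        simp only [hhdef]
        rw [h2] at h1
        linarith
    have hI : HasDerivAt (fun t => ∫ y in (0:ℝ)..t, F2 y) (F2 x) x :=
      (hF2c.integral_hasStrictDerivAt 0 x).hasDerivAt
    have := ((hasDerivAt_const x (h 0)).sub hI).congr_of_eventuallyEq
      (Filter.Eventually.of_forall heq)
    simpa using this
  -- f in terms of g and h
  have hfeq : f = fun x => -(1 / 2) * Real.exp (-η x) * g x +
      1 / 2 * Real.exp (η x) * h x := funext fun x => hf x
  have hfd : ∀ x : ℝ, HasDerivAt f
      (-(1 / 2) * (Real.exp (-η x) * -deriv η x) * g x + -(1 / 2) * Real.exp (-η x) * F1 x +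
        (1 / 2 * (Real.exp (η x) * deriv η x) * h x + 1 / 2 * Real.exp (η x) * -F2 x)) x := by
    intro x
    have hexpneg : HasDerivAt (fun t => Real.exp (-η t)) (Real.exp (-η x) * -deriv η x) x :=
      (hηd x).hasDerivAt.neg.exp
    have hexppos : HasDerivAt (fun t => Real.exp (η t)) (Real.exp (η x) * deriv η x) x :=
      (hηd x).hasDerivAt.exp
    have t1 := (hexpneg.const_mul (-(1 / 2) : ℝ)).mul (hgd x)
    have t2 := (hexppos.const_mul ((1 / 2) : ℝ)).mul (hhd x)
    have := t1.add t2
    rw [hfeq]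
    exact this
  have hderiv : ∀ x : ℝ, deriv f x =
      1 / 2 * deriv η x * (Real.exp (-η x) * g x) +
      1 / 2 * deriv η x * (Real.exp (η x) * h x) - φ x * deriv η x := by
    intro x
    rw [(hfd x).deriv, hF1, hF2]
    simp only
    linear_combination (-(φ x * deriv η x)) * hc x
  refine ⟨?_, ?_, ?_⟩
  · -- ContDiff
    rw [contDiff_one_iff_deriv]
    constructor
    · exact fun x => (hfd x).differentiableAt
    · have hgdiff : Differentiable ℝ g := fun x => (hgd x).differentiableAt
      have hhdiff : Differentiable ℝ h := fun x => (hhd x).differentiableAt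
      have hgc : Continuous g := hgdiff.continuous
      have hhc : Continuous h := hhdiff.continuous
      have hde : deriv f = fun x => 1 / 2 * deriv η x * (Real.exp (-η x) * g x) +
          1 / 2 * deriv η x * (Real.exp (η x) * h x) - φ x * deriv η x := funext hderiv
      rw [hde]
      exact (((continuous_const.mul hη'c).mul
          ((Real.continuous_exp.comp hηd.continuous.neg).mul hgc)).add
        ((continuous_const.mul hη'c).mul
          ((Real.continuous_exp.comp hηd.continuous).mul hhc))).sub (hφ.mul hη'c)
  · -- |f| bound
    intro x
    rw [hf x]
    calc |(-(1 / 2) * Real.exp (-η x) * g x + 1 / 2 * Real.exp (η x) * h x)|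
        ≤ |(-(1 / 2) * Real.exp (-η x) * g x)| + |(1 / 2 * Real.exp (η x) * h x)| := abs_add_le _ _
      _ ≤ 1 / 2 * (M * b / a) + 1 / 2 * (M * b / a) := by
          have h1 : |(-(1 / 2) * Real.exp (-η x) * g x)| =
              1 / 2 * |Real.exp (-η x) * g x| := by
            rw [mul_assoc, abs_mul]
            norm_num
          have h2 : |(1 / 2 * Real.exp (η x) * h x)| =
              1 / 2 * |Real.exp (η x) * h x| := by
            rw [mul_assoc, abs_mul]
            norm_num
          rw [h1, h2]
          gcongr
          · exact hA x
          · exact hB x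
      _ = M * b / a := by ring
  · -- |f'| bound
    intro x
    rw [hderiv x]
    have e1 : |1 / 2 * deriv η x * (Real.exp (-η x) * g x)| ≤ 1 / 2 * b * (M * b / a) := by
      rw [abs_mul, abs_mul, abs_of_pos (by norm_num : (0:ℝ) < 1/2)]
      gcongr
      · exact hpabs x
      · exact hA x
    have e2 : |1 / 2 * deriv η x * (Real.exp (η x) * h x)| ≤ 1 / 2 * b * (M * b / a) := by
      rw [abs_mul, abs_mul, abs_of_pos (by norm_num : (0:ℝ) < 1/2)]
      gcongr
      · exact hpabs x
      · exact hB x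
    have e3 : |φ x * deriv η x| ≤ M * b := by
      rw [abs_mul]
      gcongr
      · exact hφM x
      · exact hpabs x
    calc |1 / 2 * deriv η x * (Real.exp (-η x) * g x) +
          1 / 2 * deriv η x * (Real.exp (η x) * h x) - φ x * deriv η x|
        ≤ |1 / 2 * deriv η x * (Real.exp (-η x) * g x) +
          1 / 2 * deriv η x * (Real.exp (η x) * h x)| + |φ x * deriv η x| := abs_sub _ _
      _ ≤ (|1 / 2 * deriv η x * (Real.exp (-η x) * g x)| +
          |1 / 2 * deriv η x * (Real.exp (η x) * h x)|) + |φ x * deriv η x| := by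
          gcongr
          exact abs_add_le _ _
      _ ≤ (1 / 2 * b * (M * b / a) + 1 / 2 * b * (M * b / a)) + M * b := by
          gcongr
      _ = (b ^ 2 / a + b) * M := by ring
end
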